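/- In the path category EFF, the discrete fibrations form an impredicative class of small fibrations: (1) every isomorphism is a discrete fibration; (2) discrete fibrations are stable under homotopy pullback; (3) discrete fibrations are closed under composition; and (4) discrete fibrations are closed under Π_f for every (not necessarily discrete) fibration f. -/

import Mathlib

namespace EffPaper

/-! ### A small kit for tracking by partial computable functions.

We encode "partial computable function" via Mathlib's `Partrec` on `ℕ →. ℕ`.
`CompComputes I O` says: there is a partial computable function which, on the input
`I x`, converges and outputs `O x` (for every `x` in some index type `X`).
`CompFinds I S` says: there is a partial computable function which, on the input
`I x`, converges and outputs some element of the set `S x`. -/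

def CompComputes {X : Sort*} (I O : X → ℕ) : Prop :=
  ∃ F : ℕ →. ℕ, Partrec F ∧ ∀ x, O x ∈ F (I x)

def CompFinds {X : Sort*} (I : X → ℕ) (S : X → Set ℕ) : Prop :=
  ∃ F : ℕ →. ℕ, Partrec F ∧ ∀ x, ∃ k, k ∈ F (I x) ∧ k ∈ S x

namespace CompComputes

protected theorem id {X : Sort*} (I : X → ℕ) : CompComputes I I :=
  ⟨fun n => Part.some n, Partrec.some, fun x => Part.mem_some _⟩

protected theorem const {X : Sort*} (I : X → ℕ) (c : ℕ) : CompComputes I fun _ => c :=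
  ⟨fun _ => Part.some c, (Computable.const c).partrec, fun _ => Part.mem_some _⟩

protected theorem comp {X : Sort*} {I M O : X → ℕ}
    (h₂ : CompComputes M O) (h₁ : CompComputes I M) : CompComputes I O := by
  obtain ⟨F₁, pF₁, s₁⟩ := h₁
  obtain ⟨F₂, pF₂, s₂⟩ := h₂
  refine ⟨fun n => (F₁ n).bind F₂, pF₁.bind (pF₂.comp Computable.snd), fun x => ?_⟩
  exact Part.mem_bind_iff.mpr ⟨M x, s₁ x, s₂ x⟩

protected theorem pair {X : Sort*} {I a b : X → ℕ}
    (ha : CompComputes I a) (hb : CompComputes I b) :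
    CompComputes I (fun x => Nat.pair (a x) (b x)) := by
  obtain ⟨F₁, pF₁, s₁⟩ := ha
  obtain ⟨F₂, pF₂, s₂⟩ := hb
  refine ⟨fun n => (F₁ n).bind fun u => (F₂ n).map fun v => Nat.pair u v, ?_, fun x => ?_⟩
  · refine pF₁.bind ?_
    have : Computable₂ fun (p : ℕ × ℕ) (v : ℕ) => Nat.pair p.2 v :=
      Primrec₂.to_comp (Primrec₂.natPair.comp (Primrec.snd.comp Primrec.fst) Primrec.snd)
    exact Partrec.map (pF₂.comp Computable.fst) this
  · exact Part.mem_bind_iff.mpr ⟨a x, s₁ x, (Part.mem_map_iff _).mpr ⟨b x, s₂ x, rfl⟩⟩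

protected theorem unpairL {X : Sort*} (I : X → ℕ) :
    CompComputes I (fun x => (I x).unpair.1) :=
  ⟨fun n => Part.some n.unpair.1,
    (Primrec.to_comp (Primrec.fst.comp Primrec.unpair)).partrec, fun _ => Part.mem_some _⟩

protected theorem unpairR {X : Sort*} (I : X → ℕ) :
    CompComputes I (fun x => (I x).unpair.2) :=
  ⟨fun n => Part.some n.unpair.2,
    (Primrec.to_comp (Primrec.snd.comp Primrec.unpair)).partrec, fun _ => Part.mem_some _⟩

protected theorem projL {X : Sort*} (a b : X → ℕ) :
    CompComputes (fun x => Nat.pair (a x) (b x)) a := by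
  have := CompComputes.unpairL (X := X) (fun x => Nat.pair (a x) (b x))
  simpa [Nat.unpair_pair] using this

protected theorem projR {X : Sort*} (a b : X → ℕ) :
    CompComputes (fun x => Nat.pair (a x) (b x)) b := by
  have := CompComputes.unpairR (X := X) (fun x => Nat.pair (a x) (b x))
  simpa [Nat.unpair_pair] using this

protected theorem precomp {X Y : Sort*} {I O : X → ℕ} (h : CompComputes I O) (e : Y → X) :
    CompComputes (fun y => I (e y)) (fun y => O (e y)) := by
  obtain ⟨F, pF, s⟩ := h
  exact ⟨F, pF, fun y => s (e y)⟩

protected theorem toFinds {X : Sort*} {I o : X → ℕ} {S : X → Set ℕ}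
    (h : CompComputes I o) (hm : ∀ x, o x ∈ S x) : CompFinds I S := by
  obtain ⟨F, pF, s⟩ := h
  exact ⟨F, pF, fun x => ⟨o x, s x, hm x⟩⟩

end CompComputes

namespace CompFinds

protected theorem toComputes {X : Sort*} {I : X → ℕ} {S : X → Set ℕ} (h : CompFinds I S) :
    ∃ o : X → ℕ, (∀ x, o x ∈ S x) ∧ CompComputes I o := by
  obtain ⟨F, pF, s⟩ := h
  refine ⟨fun x => (s x).choose, fun x => (s x).choose_spec.2, F, pF, fun x => (s x).choose_spec.1⟩

/-- Reindex a `CompFinds` along `e` and chase the input through a computable function. -/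
protected theorem via {Y X : Sort*} {J : X → ℕ} {S : X → Set ℕ} (h : CompFinds J S)
    {I : Y → ℕ} (e : Y → X) (hc : CompComputes I (fun y => J (e y))) :
    CompFinds I (fun y => S (e y)) := by
  obtain ⟨o, hm, hcc⟩ := h.toComputes
  exact CompComputes.toFinds ((hcc.precomp e).comp hc) (fun y => hm (e y))

end CompFinds

end EffPaper

namespace EffPaper

open CategoryTheory

universe v u

/-! ### Path categories (Van den Berg–Moerdijk style), abstractly.

A `PathStruct` on a category is a pair of classes of maps: fibrations and equivalences.
`IsPathCategory` expresses the seven axioms of a path category. -/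

structure PathStruct (C : Type u) [Category.{v} C] where
  Fib : ∀ ⦃X Y : C⦄, (X ⟶ Y) → Prop
  Eqv : ∀ ⦃X Y : C⦄, (X ⟶ Y) → Prop

section PathCatDefs

variable {C : Type u} [Category.{v} C]

/-- `T` is a terminal object. -/
def IsTerminalObj (T : C) : Prop := ∀ Z : C, ∃ f : Z ⟶ T, ∀ g : Z ⟶ T, g = f

/-- The square with projections `p₁, p₂` is a pullback of the cospan `f, g`. -/
def IsPB {P X Y Z : C} (p₁ : P ⟶ X) (p₂ : P ⟶ Y) (f : X ⟶ Z) (g : Y ⟶ Z) : Prop :=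
  p₁ ≫ f = p₂ ≫ g ∧ ∀ (Q : C) (q₁ : Q ⟶ X) (q₂ : Q ⟶ Y), q₁ ≫ f = q₂ ≫ g →
    ∃! h : Q ⟶ P, h ≫ p₁ = q₁ ∧ h ≫ p₂ = q₂

/-- `p₁, p₂` exhibit their common domain as a binary product of `X` and `Y`. -/
def IsBinProd {P X Y : C} (p₁ : P ⟶ X) (p₂ : P ⟶ Y) : Prop :=
  ∀ (Q : C) (q₁ : Q ⟶ X) (q₂ : Q ⟶ Y), ∃! h : Q ⟶ P, h ≫ p₁ = q₁ ∧ h ≫ p₂ = q₂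

variable (S : PathStruct C)

/-- `X → PX → X × X` is a path object for `X`: the first map is an equivalence, the
second (the pairing of `s` and `t` into a binary product `X × X`) is a fibration,
and the composite is the diagonal. -/
def IsPathObj {X PX : C} (r : X ⟶ PX) (s t : PX ⟶ X) : Prop :=
  S.Eqv r ∧ r ≫ s = 𝟙 X ∧ r ≫ t = 𝟙 X ∧
  ∃ (W : C) (π₁ π₂ : W ⟶ X) (h : PX ⟶ W),
    IsBinProd π₁ π₂ ∧ h ≫ π₁ = s ∧ h ≫ π₂ = t ∧ S.Fib h

/-- A path object for `p : X ⟶ I` in the slice path category `C(I)`: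
a factorisation of the fibrewise diagonal `X ⟶ X ×_I X` as an equivalence `r`
followed by a fibration. -/
def IsRelPathObj {X I PX : C} (p : X ⟶ I) (r : X ⟶ PX) (s t : PX ⟶ X) : Prop :=
  S.Eqv r ∧ r ≫ s = 𝟙 X ∧ r ≫ t = 𝟙 X ∧ s ≫ p = t ≫ p ∧
  ∃ (W : C) (π₁ π₂ : W ⟶ X) (h : PX ⟶ W),
    IsPB π₁ π₂ p p ∧ h ≫ π₁ = s ∧ h ≫ π₂ = t ∧ S.Fib h

/-- The seven axioms for a path category. -/
structure IsPathCategory : Prop where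
  fib_of_iso : ∀ {X Y : C} (f : X ⟶ Y), IsIso f → S.Fib f
  fib_comp : ∀ {X Y Z : C} (f : X ⟶ Y) (g : Y ⟶ Z), S.Fib f → S.Fib g → S.Fib (f ≫ g)
  terminal : ∃ T : C, IsTerminalObj T ∧ ∀ (X : C) (f : X ⟶ T), S.Fib f
  pullback : ∀ {X Y Z : C} (f : X ⟶ Z) (g : Y ⟶ Z), S.Fib f →
    ∃ (P : C) (p₁ : P ⟶ X) (p₂ : P ⟶ Y), IsPB p₁ p₂ f g ∧ S.Fib p₂
  eqv_of_iso : ∀ {X Y : C} (f : X ⟶ Y), IsIso f → S.Eqv f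
  two_out_of_six : ∀ {X Y Z W : C} (f : X ⟶ Y) (g : Y ⟶ Z) (h : Z ⟶ W),
    S.Eqv (f ≫ g) → S.Eqv (g ≫ h) →
    S.Eqv f ∧ S.Eqv g ∧ S.Eqv h ∧ S.Eqv (f ≫ g ≫ h)
  path_obj : ∀ X : C, ∃ (PX : C) (r : X ⟶ PX) (s t : PX ⟶ X), IsPathObj S r s t
  triv_fib_pb : ∀ {X Y Z P : C} (f : X ⟶ Z) (g : Y ⟶ Z) (p₁ : P ⟶ X) (p₂ : P ⟶ Y),
    S.Fib f → S.Eqv f → IsPB p₁ p₂ f g → S.Fib p₂ ∧ S.Eqv p₂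
  triv_fib_sect : ∀ {X Y : C} (f : X ⟶ Y), S.Fib f → S.Eqv f → ∃ s : Y ⟶ X, s ≫ f = 𝟙 Y

/-- Two parallel maps are homotopic: `(f,g)` factors through some path object. -/
def Homotopic {Z X : C} (f g : Z ⟶ X) : Prop :=
  ∃ (PX : C) (r : X ⟶ PX) (s t : PX ⟶ X), IsPathObj S r s t ∧
    ∃ H : Z ⟶ PX, H ≫ s = f ∧ H ≫ t = g

/-- `f` and `g` are fibrewise homotopic over the codomain of `p`:
`(f,g)` factors through some path object of `p` in the slice. -/
def FibHomotopic {Z X I : C} (p : X ⟶ I) (f g : Z ⟶ X) : Prop :=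
  ∃ (PX : C) (r : X ⟶ PX) (s t : PX ⟶ X), IsRelPathObj S p r s t ∧
    ∃ H : Z ⟶ PX, H ≫ s = f ∧ H ≫ t = g

/-- `IsNTypeFib S n f` says that `f` is a fibration of `(n-2)`-types; so `n = 0`
corresponds to hlevel `-2` (trivial fibrations), `n = 1` to propositions,
`n = 2` to sets and `n = 3` to groupoids. -/
def IsNTypeFib : ℕ → ∀ ⦃Y X : C⦄, (Y ⟶ X) → Prop
  | 0, _, _, f => S.Fib f ∧ S.Eqv f
  | n+1, Y, _, f => S.Fib f ∧ ∃ (PY W : C) (r : Y ⟶ PY) (s t : PY ⟶ Y)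
      (π₁ π₂ : W ⟶ Y) (h : PY ⟶ W),
      IsRelPathObj S f r s t ∧ IsPB π₁ π₂ f f ∧ h ≫ π₁ = s ∧ h ≫ π₂ = t ∧
      IsNTypeFib n h

/-- The (strictly) commutative square with vertical fibrations `g` (left) and `f` (right),
top `top` and bottom `bot`, is a homotopy pullback: the induced map to the actual
pullback is an equivalence. -/
def IsHomotopyPB {D Cc B A : C} (g : D ⟶ Cc) (top : D ⟶ B) (f : B ⟶ A) (bot : Cc ⟶ A) :
    Prop :=
  g ≫ bot = top ≫ f ∧ ∃ (P : C) (p₁ : P ⟶ Cc) (p₂ : P ⟶ B) (h : D ⟶ P),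
    IsPB p₁ p₂ bot f ∧ h ≫ p₁ = g ∧ h ≫ p₂ = top ∧ S.Eqv h

/-- A transport structure on the fibration `p : Y ⟶ X`, relative to the path object
`(PX, r, s, t)` and the pullback `(Q, q₁, q₂)` of `s : PX ⟶ X` along `p`:
a map `Γ : Y ×_X PX ⟶ Y` with `p ∘ Γ = t ∘ q₂` and `Γ ∘ (1_Y, r ∘ p) ≃_X 1_Y`. -/
def IsTransport {Y X PX Q : C} (p : Y ⟶ X) (r : X ⟶ PX) (s t : PX ⟶ X)
    (q₁ : Q ⟶ Y) (q₂ : Q ⟶ PX) (Γ : Q ⟶ Y) : Prop :=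
  Γ ≫ p = q₂ ≫ t ∧
  ∀ j : Y ⟶ Q, j ≫ q₁ = 𝟙 Y → j ≫ q₂ = p ≫ r → FibHomotopic S p (j ≫ Γ) (𝟙 Y)

/-- A fibration `p : Y ⟶ X` is univalent: whenever `f, g : Z ⟶ X` and
`w : f*p ⟶ g*p` is an equivalence over `Z`, there is a homotopy `H` from `f` to `g`
such that `w` is fibrewise homotopic over `Z` to the map induced by `H` and a
transport structure on `p`. -/
def Univalent {Y X : C} (p : Y ⟶ X) : Prop :=
  ∀ {Z Zf Zg : C} (f g : Z ⟶ X) (a₁ : Zf ⟶ Z) (a₂ : Zf ⟶ Y) (b₁ : Zg ⟶ Z) (b₂ : Zg ⟶ Y),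
    IsPB a₁ a₂ f p → IsPB b₁ b₂ g p →
    ∀ w : Zf ⟶ Zg, w ≫ b₁ = a₁ → S.Eqv w →
    ∃ (PX Q : C) (r : X ⟶ PX) (s t : PX ⟶ X) (q₁ : Q ⟶ Y) (q₂ : Q ⟶ PX) (Γ : Q ⟶ Y)
      (H : Z ⟶ PX) (k : Zf ⟶ Q) (w' : Zf ⟶ Zg),
      IsPathObj S r s t ∧ IsPB q₁ q₂ p s ∧ IsTransport S p r s t q₁ q₂ Γ ∧
      H ≫ s = f ∧ H ≫ t = g ∧
      k ≫ q₁ = a₂ ∧ k ≫ q₂ = a₁ ≫ H ∧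
      w' ≫ b₁ = a₁ ∧ w' ≫ b₂ = k ≫ Γ ∧
      FibHomotopic S b₁ w w'

/-- `π : E ⟶ U` is a representation for the class `Small`: it is small, and every
small fibration is a homotopy pullback of it. -/
def IsRepresentation (Small : ∀ ⦃X Y : C⦄, (X ⟶ Y) → Prop) {E U : C} (π : E ⟶ U) : Prop :=
  Small π ∧ ∀ ⦃B A : C⦄ (f : B ⟶ A), Small f →
    ∃ (c : A ⟶ U) (top : B ⟶ E), IsHomotopyPB S f top π c

/-- `M` is a good lift for the universal property of the homotopy Π-type
`(pE, u₁, u₂, ε)` of `g` along `f`, at the map `h : A ⟶ X` with chosen pullback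
`(Ah, v₁, v₂)` of `h` along `f` and `m : f*h ⟶ g` over `Y`. -/
def HPiLiftGood {Y X Z E F A Ah : C} (f : Y ⟶ X) (g : Z ⟶ Y) (pE : E ⟶ X)
    (u₁ : F ⟶ E) (u₂ : F ⟶ Y) (ε : F ⟶ Z)
    (h : A ⟶ X) (v₁ : Ah ⟶ A) (v₂ : Ah ⟶ Y) (m : Ah ⟶ Z) (M : A ⟶ E) : Prop :=
  M ≫ pE = h ∧ ∀ fM : Ah ⟶ F, fM ≫ u₁ = v₁ ≫ M → fM ≫ u₂ = v₂ →
    FibHomotopic S g (fM ≫ ε) m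

/-- `(pE, u₁, u₂, ε)` is a homotopy Π-type of the fibration `g : Z ⟶ Y` along the
fibration `f : Y ⟶ X`.  Here `pE : E ⟶ X` is the Π-fibration, `(F, u₁, u₂)` is a
pullback of `pE` along `f`, and `ε : f*pE ⟶ g` is the counit (a map over `Y`). -/
structure IsHPi {Y X Z E F : C} (f : Y ⟶ X) (g : Z ⟶ Y) (pE : E ⟶ X)
    (u₁ : F ⟶ E) (u₂ : F ⟶ Y) (ε : F ⟶ Z) : Prop where
  fib : S.Fib pE
  pb : IsPB u₁ u₂ pE f
  over' : ε ≫ g = u₂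
  lift : ∀ {A Ah : C} (h : A ⟶ X) (v₁ : Ah ⟶ A) (v₂ : Ah ⟶ Y), IsPB v₁ v₂ h f →
    ∀ m : Ah ⟶ Z, m ≫ g = v₂ →
      ∃ M : A ⟶ E, HPiLiftGood S f g pE u₁ u₂ ε h v₁ v₂ m M
  unique : ∀ {A Ah : C} (h : A ⟶ X) (v₁ : Ah ⟶ A) (v₂ : Ah ⟶ Y), IsPB v₁ v₂ h f →
    ∀ m : Ah ⟶ Z, m ≫ g = v₂ → ∀ M M' : A ⟶ E,
      HPiLiftGood S f g pE u₁ u₂ ε h v₁ v₂ m M →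
      HPiLiftGood S f g pE u₁ u₂ ε h v₁ v₂ m M' →
      FibHomotopic S pE M M'

/-- The path category has homotopy Π-types. -/
def HasHPi : Prop := ∀ ⦃Y X Z : C⦄ (f : Y ⟶ X) (g : Z ⟶ Y), S.Fib f → S.Fib g →
  ∃ (E F : C) (pE : E ⟶ X) (u₁ : F ⟶ E) (u₂ : F ⟶ Y) (ε : F ⟶ Z),
    IsHPi S f g pE u₁ u₂ ε

/-- A class of small fibrations: contained in the fibrations, containing all
isomorphisms, closed under composition and stable under homotopy pullback. -/
def IsSmallClass (Small : ∀ ⦃X Y : C⦄, (X ⟶ Y) → Prop) : Prop :=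
  (∀ ⦃X Y : C⦄ (f : X ⟶ Y), Small f → S.Fib f) ∧
  (∀ ⦃X Y : C⦄ (f : X ⟶ Y), IsIso f → Small f) ∧
  (∀ ⦃X Y Z : C⦄ (f : X ⟶ Y) (g : Y ⟶ Z), Small f → Small g → Small (f ≫ g)) ∧
  (∀ ⦃D Cc B A : C⦄ (g : D ⟶ Cc) (top : D ⟶ B) (f : B ⟶ A) (bot : Cc ⟶ A),
    S.Fib g → S.Fib f → Small f → IsHomotopyPB S g top f bot → Small g)

/-- The class `Small` is closed under homotopy Π-types along arbitrary fibrations: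
it is impredicative (polymorphic). -/
def ClosedUnderHPi (Small : ∀ ⦃X Y : C⦄, (X ⟶ Y) → Prop) : Prop :=
  ∀ ⦃Y X Z : C⦄ (f : Y ⟶ X) (g : Z ⟶ Y), S.Fib f → Small g →
    ∀ ⦃E F : C⦄ (pE : E ⟶ X) (u₁ : F ⟶ E) (u₂ : F ⟶ Y) (ε : F ⟶ Z),
      IsHPi S f g pE u₁ u₂ ε → Small pE

end PathCatDefs

end EffPaper
open CategoryTheory
namespace EffPaper
-- [assume p1 kit present]

/-! ### The category `EFF`. -/

/-- An object of `EFF`: a set `A`, a realizer function `α : A → ℕ`, sets of 1-cells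
`hom a a' ⊆ ℕ`, and partial computable functions computing identity, inverse and
composite 1-cells from the realizers of the relevant data. -/
structure EffObj : Type 1 where
  A : Type
  α : A → ℕ
  hom : A → A → Set ℕ
  idc : CompFinds (fun a : A => α a) (fun a => hom a a)
  invc : CompFinds
    (fun x : {p : A × A × ℕ // p.2.2 ∈ hom p.1 p.2.1} =>
      Nat.pair (α x.1.1) (Nat.pair (α x.1.2.1) x.1.2.2))
    (fun x => hom x.1.2.1 x.1.1)
  compc : CompFinds
    (fun x : {p : A × A × A × ℕ × ℕ //
        p.2.2.2.1 ∈ hom p.1 p.2.1 ∧ p.2.2.2.2 ∈ hom p.2.1 p.2.2.1} =>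
      Nat.pair (α x.1.1) (Nat.pair (α x.1.2.1) (Nat.pair (α x.1.2.2.1)
        (Nat.pair x.1.2.2.2.1 x.1.2.2.2.2))))
    (fun x => hom x.1.1 x.1.2.2.1)

/-- The 1-cells of an object of `EFF` between `a` and `a'`. -/
def EffObj.Cell (A : EffObj) (a a' : A.A) : Type := {n : ℕ // n ∈ A.hom a a'}

/-- A morphism of `EFF`: a function on 0-cells and functions on 1-cells, both
computably tracked. -/
structure EffHom (B A : EffObj) : Type where
  f0 : B.A → A.A
  f1 : ∀ b b' : B.A, B.Cell b b' → A.Cell (f0 b) (f0 b')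
  tr0 : CompComputes (fun b : B.A => B.α b) (fun b => A.α (f0 b))
  tr1 : CompComputes
    (fun x : (b : B.A) × (b' : B.A) × B.Cell b b' =>
      Nat.pair (B.α x.1) (Nat.pair (B.α x.2.1) x.2.2.val))
    (fun x => (f1 x.1 x.2.1 x.2.2).val)

instance : Category.{0} EffObj where
  Hom B A := EffHom B A
  id A :=
    { f0 := fun a => a
      f1 := fun _ _ π => π
      tr0 := CompComputes.id _
      tr1 := (CompComputes.projR _ _).comp (CompComputes.projR _ _) }
  comp {X Y Z} f g :=
    { f0 := fun b => g.f0 (f.f0 b)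
      f1 := fun b b' π => g.f1 _ _ (f.f1 b b' π)
      tr0 := (g.tr0.precomp f.f0).comp f.tr0
      tr1 := by
        have hg := g.tr1.precomp
          (fun x : (b : X.A) × (b' : X.A) × X.Cell b b' =>
            (⟨f.f0 x.1, f.f0 x.2.1, f.f1 x.1 x.2.1 x.2.2⟩ :
              (b : Y.A) × (b' : Y.A) × Y.Cell b b'))
        refine hg.comp ?_
        refine CompComputes.pair ?_ (CompComputes.pair ?_ f.tr1)
        · exact (f.tr0.precomp (fun x : (b : X.A) × (b' : X.A) × X.Cell b b' => x.1)).comp (CompComputes.projL _ _)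
        · exact (f.tr0.precomp (fun x : (b : X.A) × (b' : X.A) × X.Cell b b' => x.2.1)).comp
            ((CompComputes.projL _ _).comp (CompComputes.projR _ _)) }

end EffPaper
namespace EffPaper
open CategoryTheory

/-! ### Homotopies, equivalences and fibrations in `EFF`. -/

/-- Two parallel maps in `EFF` are homotopic if there is a partial computable function
computing, from the realizer of each `b`, a 1-cell from `f b` to `g b`. -/
def EffHomotopic {B A : EffObj} (f g : EffHom B A) : Prop :=
  CompFinds (fun b : B.A => B.α b) (fun b => A.hom (f.f0 b) (g.f0 b))

/-- A map in `EFF` is a (homotopy) equivalence if it has a homotopy inverse. -/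
def EffEqv {B A : EffObj} (f : B ⟶ A) : Prop :=
  ∃ g : A ⟶ B, EffHomotopic (f ≫ g) (𝟙 B) ∧ EffHomotopic (g ≫ f) (𝟙 A)

/-- A map in `EFF` is a fibration: (i) 1-cells `π : f b → a` downstairs can be
computably lifted to 1-cells `ρ : b → b'` upstairs with `f b' = a`, `f ρ = π`;
(ii) given `ρ ∈ ℬ(b,b')` and `π ∈ 𝒜(fb,fb')` one can compute `ρ' ∈ ℬ(b,b')`
with `f ρ' = π`. -/
def EffFib {B A : EffObj} (f : B ⟶ A) : Prop :=
  (∃ φ ψ : ℕ →. ℕ, Partrec φ ∧ Partrec ψ ∧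
    ∀ (b : B.A) (a : A.A) (π : ℕ), π ∈ A.hom (f.f0 b) a →
      ∃ (b' : B.A) (ρ : B.Cell b b'),
        f.f0 b' = a ∧ (f.f1 b b' ρ).val = π ∧
        B.α b' ∈ φ (Nat.pair (B.α b) (Nat.pair (A.α a) π)) ∧
        ρ.val ∈ ψ (Nat.pair (B.α b) (Nat.pair (A.α a) π))) ∧
  (∃ χ : ℕ →. ℕ, Partrec χ ∧
    ∀ (b b' : B.A) (ρ : B.Cell b b') (π : ℕ), π ∈ A.hom (f.f0 b) (f.f0 b') →
      ∃ ρ' : B.Cell b b', (f.f1 b b' ρ').val = π ∧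
        ρ'.val ∈ χ (Nat.pair (B.α b) (Nat.pair (B.α b') (Nat.pair ρ.val π))))

/-- The path structure on `EFF`: fibrations and (homotopy) equivalences. -/
def EffPS : PathStruct EffObj where
  Fib := fun {_ _} f => EffFib f
  Eqv := fun {_ _} f => EffEqv f

/-- A fibration in `EFF` is a standard discrete fibration if elements of the domain
are determined by their image and their realizer. -/
def EffStdDisc {B A : EffObj} (f : B ⟶ A) : Prop :=
  EffFib f ∧ ∀ b b' : B.A, f.f0 b = f.f0 b' → B.α b = B.α b' → b = b'

/-- A fibration in `EFF` is discrete if it can be written as a standard discrete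
fibration after an equivalence. -/
def EffDisc {B A : EffObj} (f : B ⟶ A) : Prop :=
  EffFib f ∧ ∃ (B' : EffObj) (w : B ⟶ B') (g : B' ⟶ A),
    EffEqv w ∧ EffStdDisc g ∧ w ≫ g = f

end EffPaper
namespace EffPaper

/-! ### Infrastructure: more tracking combinators, a universal machine, currying. -/

open Nat.Partrec (Code)
open Nat.Partrec.Code

theorem CompComputes.congr' {X : Sort*} {I I' O O' : X → ℕ} (h : CompComputes I O)
    (hI : ∀ x, I x = I' x) (hO : ∀ x, O x = O' x) : CompComputes I' O' := by
  obtain ⟨F, pF, s⟩ := h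
  exact ⟨F, pF, fun x => by rw [← hI, ← hO]; exact s x⟩

theorem CompComputes.of_mem {X : Sort*} {I J O : X → ℕ} {F : ℕ →. ℕ} (pF : Partrec F)
    (hJ : CompComputes I J) (hO : ∀ x, O x ∈ F (J x)) : CompComputes I O :=
  CompComputes.comp ⟨F, pF, hO⟩ hJ

theorem CompComputes.of_computable {X : Sort*} {I : X → ℕ} (K : ℕ → ℕ) (hK : Computable K) :
    CompComputes I (fun x => K (I x)) :=
  ⟨fun n => Part.some (K n), hK.partrec, fun _ => Part.mem_some _⟩

/-- The universal partial computable function, with codes coded as naturals. -/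
def evalN (e n : ℕ) : Part ℕ := Nat.Partrec.Code.eval (Denumerable.ofNat Nat.Partrec.Code e) n

theorem evalN_partrec : Partrec₂ evalN :=
  Nat.Partrec.Code.eval_part.comp ((Computable.ofNat _).comp Computable.fst) Computable.snd

theorem CompComputes.of_evalN {X : Sort*} {I E N O : X → ℕ}
    (hEN : CompComputes I (fun x => Nat.pair (E x) (N x)))
    (hO : ∀ x, O x ∈ evalN (E x) (N x)) : CompComputes I O := by
  refine CompComputes.of_mem (F := fun n => evalN n.unpair.1 n.unpair.2) ?_ hEN
    (fun x => by simpa using hO x)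
  exact evalN_partrec.comp (Computable.fst.comp Computable.unpair)
    (Computable.snd.comp Computable.unpair)

/-- Currying: a uniformly tracked family gives a computable family of codes. -/
theorem CompComputes.curryCode {X : Sort*} {I J O : X → ℕ}
    (h : CompComputes (fun x => Nat.pair (I x) (J x)) O) :
    ∃ K : ℕ → ℕ, Computable K ∧ ∀ x, O x ∈ evalN (K (I x)) (J x) := by
  obtain ⟨F, pF, s⟩ := h
  obtain ⟨c, hc⟩ := Nat.Partrec.Code.exists_code.1 (Partrec.nat_iff.1 pF)
  refine ⟨fun a => Encodable.encode (c.curry a), ?_, fun x => ?_⟩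
  · exact Primrec.to_comp (Primrec.encode.comp (primrec₂_curry.comp (Primrec.const c) Primrec.id))
  · show O x ∈ evalN _ _
    unfold evalN
    rw [Denumerable.ofNat_encode, eval_curry, hc]
    exact s x

theorem EffHom.ext' {B A : EffObj} {F G : EffHom B A} (h0 : ∀ b, F.f0 b = G.f0 b)
    (h1 : ∀ b b' (ρ : B.Cell b b'), (F.f1 b b' ρ).val = (G.f1 b b' ρ).val) : F = G := by
  obtain ⟨F0, F1, _, _⟩ := F; obtain ⟨G0, G1, _, _⟩ := G
  obtain rfl : F0 = G0 := funext h0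
  obtain rfl : F1 = G1 := by
    funext b b' ρ; exact Subtype.ext (h1 b b' ρ)
  rfl

theorem ehom_f0 {B A : EffObj} {F G : B ⟶ A} (e : F = G) (b : B.A) : F.f0 b = G.f0 b := by
  rw [e]

theorem ehom_f1 {B A : EffObj} {F G : B ⟶ A} (e : F = G) (b b' : B.A) (ρ : B.Cell b b') :
    (F.f1 b b' ρ).val = (G.f1 b b' ρ).val := by rw [e]

theorem f1_val_congr {B A : EffObj} (f : EffHom B A) {b b' : B.A} {m n : ℕ}
    (hm : m ∈ B.hom b b') (e : m = n) (hn : n ∈ B.hom b b') :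
    (f.f1 b b' ⟨m, hm⟩).val = (f.f1 b b' ⟨n, hn⟩).val := by subst e; rfl

/-! ### Tracked families of cells. -/

/-- `Tk A I u`: the realizers of the family `u` are computable from `I`. -/
def Tk (A : EffObj) {X : Sort*} (I : X → ℕ) (u : X → A.A) : Prop :=
  CompComputes I (fun x => A.α (u x))

theorem EffHom.tk {B A : EffObj} (f : EffHom B A) {X : Sort*} {I : X → ℕ} {u : X → B.A}
    (hu : Tk B I u) : Tk A I (fun x => f.f0 (u x)) :=
  (f.tr0.precomp u).comp hu

/-- A computably tracked family of cells from `u x` to `v x`. -/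
def Cells (A : EffObj) {X : Sort*} (I : X → ℕ) (u v : X → A.A) : Prop :=
  ∃ c : X → ℕ, (∀ x, c x ∈ A.hom (u x) (v x)) ∧ CompComputes I c

/-- A computably tracked family of cells from `u x` to `v x` lying over `π x`. -/
def CellsOver {B A : EffObj} (f : EffHom B A) {X : Sort*} (I : X → ℕ)
    (u v : X → B.A) (π : X → ℕ) : Prop :=
  ∃ c : X → ℕ, (∀ x, ∃ h : c x ∈ B.hom (u x) (v x), (f.f1 (u x) (v x) ⟨c x, h⟩).val = π x) ∧
    CompComputes I c

theorem CellsOver.toCells {B A : EffObj} {f : EffHom B A} {X : Sort*} {I : X → ℕ}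
    {u v : X → B.A} {π : X → ℕ} (h : CellsOver f I u v π) : Cells B I u v := by
  obtain ⟨c, hc, tc⟩ := h
  exact ⟨c, fun x => (hc x).1, tc⟩

theorem Cells.id {A : EffObj} {X : Sort*} {I : X → ℕ} {u : X → A.A} (hu : Tk A I u) :
    Cells A I u u := by
  obtain ⟨c, hc, tc⟩ := A.idc.toComputes
  exact ⟨fun x => c (u x), fun x => hc (u x), (tc.precomp u).comp hu⟩

theorem Cells.symm {A : EffObj} {X : Sort*} {I : X → ℕ} {u v : X → A.A}
    (hu : Tk A I u) (hv : Tk A I v) (h : Cells A I u v) : Cells A I v u := by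
  obtain ⟨c, hc, tc⟩ := h
  obtain ⟨o, ho, tO⟩ := A.invc.toComputes
  refine ⟨fun x => o ⟨(u x, v x, c x), hc x⟩, fun x => ho ⟨(u x, v x, c x), hc x⟩, ?_⟩
  exact (tO.precomp (fun x => ⟨(u x, v x, c x), hc x⟩)).comp (hu.pair (hv.pair tc))

theorem Cells.trans {A : EffObj} {X : Sort*} {I : X → ℕ} {u v w : X → A.A}
    (hu : Tk A I u) (hv : Tk A I v) (hw : Tk A I w)
    (h1 : Cells A I u v) (h2 : Cells A I v w) : Cells A I u w := by
  obtain ⟨c, hc, tc⟩ := h1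
  obtain ⟨d, hd, td⟩ := h2
  obtain ⟨o, ho, tO⟩ := A.compc.toComputes
  refine ⟨fun x => o ⟨(u x, v x, w x, c x, d x), hc x, hd x⟩,
    fun x => ho ⟨(u x, v x, w x, c x, d x), hc x, hd x⟩, ?_⟩
  exact (tO.precomp (fun x => ⟨(u x, v x, w x, c x, d x), hc x, hd x⟩)).comp
    (hu.pair (hv.pair (hw.pair (tc.pair td))))

theorem Cells.map {B A : EffObj} (f : EffHom B A) {X : Sort*} {I : X → ℕ} {u v : X → B.A}
    (hu : Tk B I u) (hv : Tk B I v) (h : Cells B I u v) :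
    Cells A I (fun x => f.f0 (u x)) (fun x => f.f0 (v x)) := by
  obtain ⟨c, hc, tc⟩ := h
  refine ⟨fun x => (f.f1 (u x) (v x) ⟨c x, hc x⟩).val, fun x => (f.f1 _ _ _).prop, ?_⟩
  exact (f.tr1.precomp (fun x => ⟨u x, v x, ⟨c x, hc x⟩⟩)).comp (hu.pair (hv.pair tc))

theorem Cells.precomp {A : EffObj} {X Y : Sort*} {I : X → ℕ} {u v : X → A.A}
    (h : Cells A I u v) (e : Y → X) : Cells A (fun y => I (e y)) (fun y => u (e y)) (fun y => v (e y)) := by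
  obtain ⟨c, hc, tc⟩ := h
  exact ⟨fun y => c (e y), fun y => hc (e y), tc.precomp e⟩

theorem Cells.congr' {A : EffObj} {X : Sort*} {I I' : X → ℕ} {u u' v v' : X → A.A}
    (h : Cells A I u v) (hI : ∀ x, I x = I' x) (hu : ∀ x, u x = u' x) (hv : ∀ x, v x = v' x) :
    Cells A I' u' v' := by
  obtain rfl : u = u' := funext hu
  obtain rfl : v = v' := funext hv
  obtain ⟨c, hc, tc⟩ := h
  exact ⟨c, hc, tc.congr' hI (fun _ => rfl)⟩

/-! ### Applied forms of the fibration conditions. -/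

theorem EffFib.fix {B A : EffObj} {f : B ⟶ A} (hf : EffFib f) {X : Sort*} {I : X → ℕ}
    {u v : X → B.A} {π : X → ℕ} (hc : Cells B I u v) (hu : Tk B I u) (hv : Tk B I v)
    (hπ : ∀ x, π x ∈ A.hom (f.f0 (u x)) (f.f0 (v x))) (tπ : CompComputes I π) :
    CellsOver f I u v π := by
  obtain ⟨ρ, hρ, tρ⟩ := hc
  obtain ⟨χ, pχ, hχ⟩ := hf.2
  choose ρ' h1 h2 using fun x => hχ (u x) (v x) ⟨ρ x, hρ x⟩ (π x) (hπ x)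
  refine ⟨fun x => (ρ' x).val, fun x => ⟨(ρ' x).prop, h1 x⟩, ?_⟩
  exact CompComputes.of_mem pχ (hu.pair (hv.pair (tρ.pair tπ))) h2

theorem EffFib.lift {B A : EffObj} {f : B ⟶ A} (hf : EffFib f) {X : Sort*} {I : X → ℕ}
    {u : X → B.A} {a : X → A.A} {π : X → ℕ}
    (hπ : ∀ x, π x ∈ A.hom (f.f0 (u x)) (a x)) (hu : Tk B I u) (ha : Tk A I a)
    (tπ : CompComputes I π) :
    ∃ v : X → B.A, (∀ x, f.f0 (v x) = a x) ∧ Tk B I v ∧ CellsOver f I u v π := by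
  obtain ⟨φ, ψ, pφ, pψ, H⟩ := hf.1
  choose b' ρ e1 e2 e3 e4 using fun x => H (u x) (a x) (π x) (hπ x)
  refine ⟨b', e1, CompComputes.of_mem pφ (hu.pair (ha.pair tπ)) e3,
    fun x => (ρ x).val, fun x => ⟨(ρ x).prop, e2 x⟩,
    CompComputes.of_mem pψ (hu.pair (ha.pair tπ)) e4⟩

/-! ### Homotopies, concretely. -/

theorem effHomotopic_iff_cells {B A : EffObj} {F G : B ⟶ A} :
    EffHomotopic F G ↔ Cells A B.α F.f0 G.f0 := by
  constructor
  · intro h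
    obtain ⟨o, ho, tO⟩ := h.toComputes
    exact ⟨o, ho, tO⟩
  · rintro ⟨c, hc, tc⟩
    exact tc.toFinds hc

theorem effHomotopic_of_f0_eq {B A : EffObj} {F G : B ⟶ A} (h : ∀ b, F.f0 b = G.f0 b) :
    EffHomotopic F G :=
  effHomotopic_iff_cells.mpr ((Cells.id F.tr0).congr' (fun _ => rfl) (fun _ => rfl) h)

theorem EffHomotopic.symm' {B A : EffObj} {F G : B ⟶ A} (h : EffHomotopic F G) :
    EffHomotopic G F :=
  effHomotopic_iff_cells.mpr ((effHomotopic_iff_cells.mp h).symm F.tr0 G.tr0)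

theorem EffHomotopic.trans' {B A : EffObj} {F G H : B ⟶ A} (h1 : EffHomotopic F G)
    (h2 : EffHomotopic G H) : EffHomotopic F H :=
  effHomotopic_iff_cells.mpr ((effHomotopic_iff_cells.mp h1).trans F.tr0 G.tr0 H.tr0
    (effHomotopic_iff_cells.mp h2))

theorem Cells.chase {A : EffObj} {X : Sort*} {I J : X → ℕ} {u v : X → A.A}
    (h : Cells A J u v) (hIJ : CompComputes I J) : Cells A I u v := by
  obtain ⟨c, hc, tc⟩ := h
  exact ⟨c, hc, tc.comp hIJ⟩

theorem EffHomotopic.whiskerL {Q B A : EffObj} (k : Q ⟶ B) {F G : B ⟶ A}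
    (h : EffHomotopic F G) : EffHomotopic (k ≫ F) (k ≫ G) :=
  effHomotopic_iff_cells.mpr
    ((((effHomotopic_iff_cells.mp h).precomp k.f0).chase k.tr0).congr'
      (fun q => rfl) (fun _ => rfl) (fun _ => rfl))

theorem EffHomotopic.whiskerR {B A C : EffObj} {F G : B ⟶ A} (h : EffHomotopic F G)
    (k : A ⟶ C) : EffHomotopic (F ≫ k) (G ≫ k) :=
  effHomotopic_iff_cells.mpr
    ((effHomotopic_iff_cells.mp h).map k F.tr0 G.tr0)

theorem EffHomotopic.refl' {B A : EffObj} (F : B ⟶ A) : EffHomotopic F F :=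
  effHomotopic_of_f0_eq (fun _ => rfl)


/-! ### Basic facts about fibrations, equivalences and standard discrete maps. -/

theorem mem_hom_cast {A : EffObj} {a a' b b' : A.A} (ea : a = a') (eb : b = b') {n : ℕ}
    (h : n ∈ A.hom a b) : n ∈ A.hom a' b' := ea ▸ eb ▸ h

theorem f1_val_congr₂ {B A : EffObj} (f : EffHom B A) {b b' c c' : B.A}
    (eb : b = c) (eb' : b' = c') {m n : ℕ} (hm : m ∈ B.hom b b') (emn : m = n)
    (hn : n ∈ B.hom c c') :
    (f.f1 b b' ⟨m, hm⟩).val = (f.f1 c c' ⟨n, hn⟩).val := by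
  subst eb; subst eb'; subst emn; rfl

/-- Introduction rule for `EffFib` from tracked families over the canonical index types. -/
theorem effFib_intro {B A : EffObj} (f : B ⟶ A)
    (bF : {p : B.A × A.A × ℕ // p.2.2 ∈ A.hom (f.f0 p.1) p.2.1} → B.A)
    (hbF : ∀ s, f.f0 (bF s) = s.1.2.1)
    (tbF : Tk B (fun s => Nat.pair (B.α s.1.1) (Nat.pair (A.α s.1.2.1) s.1.2.2)) bF)
    (cF : CellsOver f (fun s => Nat.pair (B.α s.1.1) (Nat.pair (A.α s.1.2.1) s.1.2.2))
      (fun s => s.1.1) bF (fun s => s.1.2.2))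
    (fixF : CellsOver f
      (fun s : {p : B.A × B.A × ℕ × ℕ // p.2.2.1 ∈ B.hom p.1 p.2.1 ∧
          p.2.2.2 ∈ A.hom (f.f0 p.1) (f.f0 p.2.1)} =>
        Nat.pair (B.α s.1.1) (Nat.pair (B.α s.1.2.1) (Nat.pair s.1.2.2.1 s.1.2.2.2)))
      (fun s => s.1.1) (fun s => s.1.2.1) (fun s => s.1.2.2.2)) : EffFib f := by
  obtain ⟨φ, pφ, sφ⟩ := tbF
  obtain ⟨c, hc, ψ, pψ, sψ⟩ := cF
  obtain ⟨d, hd, χ, pχ, sχ⟩ := fixF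
  constructor
  · refine ⟨φ, ψ, pφ, pψ, fun b a π hπ => ?_⟩
    obtain ⟨h, he⟩ := hc ⟨(b, a, π), hπ⟩
    exact ⟨bF ⟨(b, a, π), hπ⟩, ⟨c ⟨(b, a, π), hπ⟩, h⟩, hbF _, he,
      sφ ⟨(b, a, π), hπ⟩, sψ ⟨(b, a, π), hπ⟩⟩
  · refine ⟨χ, pχ, fun b b' ρ π hπ => ?_⟩
    obtain ⟨h, he⟩ := hd ⟨(b, b', ρ.val, π), ρ.prop, hπ⟩
    exact ⟨⟨d ⟨(b, b', ρ.val, π), ρ.prop, hπ⟩, h⟩, he, sχ ⟨(b, b', ρ.val, π), ρ.prop, hπ⟩⟩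

theorem effFib_id (A : EffObj) : EffFib (𝟙 A) := by
  refine effFib_intro (𝟙 A) (fun s => s.1.2.1) (fun s => rfl) ?_ ?_ ?_
  · exact (CompComputes.projL _ _).comp (CompComputes.projR _ _)
  · refine ⟨fun s => s.1.2.2, fun s => ⟨s.prop, rfl⟩, ?_⟩
    exact (CompComputes.projR _ _).comp (CompComputes.projR _ _)
  · refine ⟨fun s => s.1.2.2.2, fun s => ⟨s.prop.2, rfl⟩, ?_⟩
    exact (CompComputes.projR _ _).comp ((CompComputes.projR _ _).comp (CompComputes.projR _ _))

theorem EffFib.comp' {X Y Z : EffObj} {f : X ⟶ Y} {g : Y ⟶ Z} (hf : EffFib f)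
    (hg : EffFib g) : EffFib (f ≫ g) := by
  classical
  obtain ⟨y', e1, ty', c₁, hc₁, tc₁⟩ :=
    hg.lift (I := fun s : {p : X.A × Z.A × ℕ // p.2.2 ∈ Z.hom ((f ≫ g).f0 p.1) p.2.1} =>
        Nat.pair (X.α s.1.1) (Nat.pair (Z.α s.1.2.1) s.1.2.2))
      (u := fun s => f.f0 s.1.1) (a := fun s => s.1.2.1) (π := fun s => s.1.2.2)
      (fun s => s.prop) (f.tk (CompComputes.projL _ _))
      ((CompComputes.projL _ _).comp (CompComputes.projR _ _))
      ((CompComputes.projR _ _).comp (CompComputes.projR _ _))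
  obtain ⟨x', e2, tx', c₂, hc₂, tc₂⟩ :=
    hf.lift (u := fun s => s.1.1) (a := y') (π := c₁)
      (fun s => (hc₁ s).choose) (CompComputes.projL _ _) ty' tc₁
  obtain ⟨σc, hσ, tσ⟩ :=
    hg.fix (I := fun s : {p : X.A × X.A × ℕ × ℕ // p.2.2.1 ∈ X.hom p.1 p.2.1 ∧
        p.2.2.2 ∈ Z.hom ((f ≫ g).f0 p.1) ((f ≫ g).f0 p.2.1)} =>
        Nat.pair (X.α s.1.1) (Nat.pair (X.α s.1.2.1) (Nat.pair s.1.2.2.1 s.1.2.2.2)))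
      (u := fun s => f.f0 s.1.1) (v := fun s => f.f0 s.1.2.1) (π := fun s => s.1.2.2.2)
      (Cells.map f (CompComputes.projL _ _)
        ((CompComputes.projL _ _).comp (CompComputes.projR _ _))
        ⟨fun s => s.1.2.2.1, fun s => s.prop.1,
          ((CompComputes.projL _ _).comp
            ((CompComputes.projR _ _).comp (CompComputes.projR _ _)))⟩)
      (f.tk (CompComputes.projL _ _))
      (f.tk ((CompComputes.projL _ _).comp (CompComputes.projR _ _)))
      (fun s => s.prop.2)
      ((CompComputes.projR _ _).comp ((CompComputes.projR _ _).comp (CompComputes.projR _ _)))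
  obtain ⟨ρ'c, hρ', tρ'⟩ :=
    hf.fix (u := fun s => s.1.1) (v := fun s => s.1.2.1) (π := σc)
      ⟨fun s => s.1.2.2.1, fun s => s.prop.1,
        ((CompComputes.projL _ _).comp
          ((CompComputes.projR _ _).comp (CompComputes.projR _ _)))⟩
      (CompComputes.projL _ _)
      ((CompComputes.projL _ _).comp (CompComputes.projR _ _))
      (fun s => (hσ s).choose) tσ
  refine effFib_intro (f ≫ g) x'
    (fun s => (congrArg g.f0 (e2 s)).trans (e1 s)) tx' ⟨c₂, fun s => ?_, tc₂⟩
    ⟨ρ'c, fun s => ?_, tρ'⟩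
  · refine ⟨(hc₂ s).choose, ?_⟩
    exact (f1_val_congr₂ g rfl (e2 s) (f.f1 _ _ ⟨c₂ s, (hc₂ s).choose⟩).prop
      (hc₂ s).choose_spec (hc₁ s).choose).trans (hc₁ s).choose_spec
  · refine ⟨(hρ' s).choose, ?_⟩
    exact (f1_val_congr₂ g rfl rfl (f.f1 _ _ ⟨ρ'c s, (hρ' s).choose⟩).prop
      (hρ' s).choose_spec (hσ s).choose).trans (hσ s).choose_spec

theorem effStdDisc_id (A : EffObj) : EffStdDisc (𝟙 A) :=
  ⟨effFib_id A, fun _ _ e _ => e⟩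

theorem EffStdDisc.comp' {X Y Z : EffObj} {f : X ⟶ Y} {g : Y ⟶ Z} (hf : EffStdDisc f)
    (hg : EffStdDisc g) : EffStdDisc (f ≫ g) := by
  refine ⟨hf.1.comp' hg.1, fun b b' h0 hα => ?_⟩
  obtain ⟨F, pF, s⟩ := f.tr0
  have : Y.α (f.f0 b) = Y.α (f.f0 b') := Part.mem_unique (s b) (by show Y.α (f.f0 b') ∈ F (X.α b); rw [hα]; exact s b')
  exact hf.2 b b' (hg.2 _ _ h0 this) hα

theorem effEqv_of_strict_inverse {X Y : EffObj} {φ : X ⟶ Y} (ψ : Y ⟶ X)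
    (h1 : φ ≫ ψ = 𝟙 X) (h2 : ψ ≫ φ = 𝟙 Y) : EffEqv φ :=
  ⟨ψ, by rw [h1]; exact EffHomotopic.refl' _, by rw [h2]; exact EffHomotopic.refl' _⟩

theorem effEqv_of_iso {X Y : EffObj} (f : X ⟶ Y) (hf : IsIso f) : EffEqv f := by
  haveI := hf
  exact effEqv_of_strict_inverse (CategoryTheory.inv f) (IsIso.hom_inv_id f)
    (IsIso.inv_hom_id f)

theorem EffEqv.comp' {X Y Z : EffObj} {a : X ⟶ Y} {b : Y ⟶ Z} (ha : EffEqv a)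
    (hb : EffEqv b) : EffEqv (a ≫ b) := by
  obtain ⟨a', haa', ha'a⟩ := ha
  obtain ⟨b', hbb', hb'b⟩ := hb
  refine ⟨b' ≫ a', ?_, ?_⟩
  · have h := (hbb'.whiskerL a).whiskerR a'
    rw [Category.comp_id] at h
    have h' : (a ≫ b) ≫ b' ≫ a' = (a ≫ b ≫ b') ≫ a' := by simp
    rw [h']
    exact h.trans' haa'
  · have h := (ha'a.whiskerL b').whiskerR b
    rw [Category.comp_id] at h
    have h' : (b' ≫ a') ≫ a ≫ b = (b' ≫ a' ≫ a) ≫ b := by simp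
    rw [h']
    exact h.trans' hb'b

theorem effFib_of_iso {X Y : EffObj} (f : X ⟶ Y) (hf : IsIso f) : EffFib f := by
  classical
  haveI := hf
  set i := CategoryTheory.inv f with hi
  have e0 : ∀ b, i.f0 (f.f0 b) = b := fun b => ehom_f0 (IsIso.hom_inv_id (f := f)) b
  have e1 : ∀ a, f.f0 (i.f0 a) = a := fun a => ehom_f0 (IsIso.inv_hom_id (f := f)) a
  have e2 : ∀ (y y' : Y.A) (ρ : Y.Cell y y'), (f.f1 _ _ (i.f1 y y' ρ)).val = ρ.val :=
    fun y y' ρ => ehom_f1 (IsIso.inv_hom_id (f := f)) y y' ρ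
  refine effFib_intro f (fun s => i.f0 s.1.2.1) (fun s => e1 _) ?_ ?_ ?_
  · exact i.tk ((CompComputes.projL _ _).comp (CompComputes.projR _ _))
  · refine ⟨fun s => (i.f1 (f.f0 s.1.1) s.1.2.1 ⟨s.1.2.2, s.prop⟩).val, fun s => ?_, ?_⟩
    · refine ⟨mem_hom_cast (e0 s.1.1) rfl (i.f1 (f.f0 s.1.1) s.1.2.1 ⟨s.1.2.2, s.prop⟩).prop, ?_⟩
      exact (f1_val_congr₂ f (e0 s.1.1).symm rfl _ rfl
        (i.f1 (f.f0 s.1.1) s.1.2.1 ⟨s.1.2.2, s.prop⟩).prop).trans (e2 _ _ _)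
    · exact (i.tr1.precomp
        (fun s : {p : X.A × Y.A × ℕ // p.2.2 ∈ Y.hom (f.f0 p.1) p.2.1} =>
          ⟨f.f0 s.1.1, s.1.2.1, ⟨s.1.2.2, s.prop⟩⟩)).comp
        (((f.tk (CompComputes.projL _ _))).pair
          (((CompComputes.projL _ _).comp (CompComputes.projR _ _)).pair
            ((CompComputes.projR _ _).comp (CompComputes.projR _ _))))
  · refine ⟨fun s => (i.f1 (f.f0 s.1.1) (f.f0 s.1.2.1) ⟨s.1.2.2.2, s.prop.2⟩).val,
      fun s => ?_, ?_⟩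
    · refine ⟨mem_hom_cast (e0 s.1.1) (e0 s.1.2.1)
        (i.f1 (f.f0 s.1.1) (f.f0 s.1.2.1) ⟨s.1.2.2.2, s.prop.2⟩).prop, ?_⟩
      exact (f1_val_congr₂ f (e0 s.1.1).symm (e0 s.1.2.1).symm _ rfl
        (i.f1 (f.f0 s.1.1) (f.f0 s.1.2.1) ⟨s.1.2.2.2, s.prop.2⟩).prop).trans (e2 _ _ _)
    · exact (i.tr1.precomp
        (fun s : {p : X.A × X.A × ℕ × ℕ // p.2.2.1 ∈ X.hom p.1 p.2.1 ∧
            p.2.2.2 ∈ Y.hom (f.f0 p.1) (f.f0 p.2.1)} =>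
          ⟨f.f0 s.1.1, f.f0 s.1.2.1, ⟨s.1.2.2.2, s.prop.2⟩⟩)).comp
        (((f.tk (CompComputes.projL _ _))).pair
          (((f.tk ((CompComputes.projL _ _).comp (CompComputes.projR _ _)))).pair
            ((CompComputes.projR _ _).comp
              ((CompComputes.projR _ _).comp (CompComputes.projR _ _)))))

/-- Part (1): isomorphisms are discrete fibrations. -/
theorem effDisc_of_iso {X Y : EffObj} (f : X ⟶ Y) (hf : IsIso f) : EffDisc f :=
  ⟨effFib_of_iso f hf, Y, f, 𝟙 Y, effEqv_of_iso f hf, effStdDisc_id Y, Category.comp_id f⟩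


/-! ### Canonical pullbacks in `EFF`. -/

theorem CompComputes.fstOfPair {X : Sort*} {I a b : X → ℕ}
    (h : CompComputes I (fun x => Nat.pair (a x) (b x))) : CompComputes I a :=
  ((CompComputes.unpairL (fun x : X => Nat.pair (a x) (b x))).congr'
    (fun _ => rfl) (fun x => by simp)).comp h

theorem CompComputes.sndOfPair {X : Sort*} {I a b : X → ℕ}
    (h : CompComputes I (fun x => Nat.pair (a x) (b x))) : CompComputes I b :=
  ((CompComputes.unpairR (fun x : X => Nat.pair (a x) (b x))).congr'
    (fun _ => rfl) (fun x => by simp)).comp h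

section Pullback

variable {A B Cc : EffObj} (bot : Cc ⟶ A) (f : B ⟶ A)

def pbA : Type := {p : Cc.A × B.A // bot.f0 p.1 = f.f0 p.2}

def pbHom (p q : pbA bot f) : Set ℕ :=
  {n | ∃ (h1 : n.unpair.1 ∈ Cc.hom p.val.1 q.val.1)
      (h2 : n.unpair.2 ∈ B.hom p.val.2 q.val.2),
    (bot.f1 _ _ ⟨n.unpair.1, h1⟩).val = (f.f1 _ _ ⟨n.unpair.2, h2⟩).val}

variable {bot f} in
theorem mem_pbHom_pair {p q : pbA bot f} {c₁ c₂ : ℕ}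
    (h1 : c₁ ∈ Cc.hom p.val.1 q.val.1) (h2 : c₂ ∈ B.hom p.val.2 q.val.2)
    (he : (bot.f1 _ _ ⟨c₁, h1⟩).val = (f.f1 _ _ ⟨c₂, h2⟩).val) :
    Nat.pair c₁ c₂ ∈ pbHom bot f p q := by
  have e1 : (Nat.pair c₁ c₂).unpair.1 = c₁ := by simp
  have e2 : (Nat.pair c₁ c₂).unpair.2 = c₂ := by simp
  refine ⟨e1.symm ▸ h1, e2.symm ▸ h2, ?_⟩
  exact (f1_val_congr₂ bot rfl rfl (e1.symm ▸ h1) e1 h1).trans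
    (he.trans (f1_val_congr₂ f rfl rfl h2 e2.symm (e2.symm ▸ h2)))

variable {bot f} in
/-- Produce tracked `pbHom` cells from tracked cells in the two components (the
`B`-component gets corrected to lie over the image of the `Cc`-component). -/
theorem pb_cells (hf : EffFib f) {X : Sort*} {I : X → ℕ} {u v : X → pbA bot f}
    (hc : Cells Cc I (fun x => (u x).val.1) (fun x => (v x).val.1))
    (hb : Cells B I (fun x => (u x).val.2) (fun x => (v x).val.2))
    (tu : CompComputes I (fun x => Nat.pair (Cc.α (u x).val.1) (B.α (u x).val.2)))
    (tv : CompComputes I (fun x => Nat.pair (Cc.α (v x).val.1) (B.α (v x).val.2))) :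
    ∃ c : X → ℕ, (∀ x, c x ∈ pbHom bot f (u x) (v x)) ∧ CompComputes I c := by
  classical
  obtain ⟨c₁, h1, t1⟩ := hc
  have hπmem : ∀ x, (bot.f1 _ _ ⟨c₁ x, h1 x⟩).val ∈
      A.hom (f.f0 (u x).val.2) (f.f0 (v x).val.2) :=
    fun x => mem_hom_cast (u x).prop (v x).prop (bot.f1 _ _ ⟨c₁ x, h1 x⟩).prop
  have tπ : CompComputes I (fun x => (bot.f1 _ _ ⟨c₁ x, h1 x⟩).val) :=
    (bot.tr1.precomp (fun x => ⟨(u x).val.1, (v x).val.1, ⟨c₁ x, h1 x⟩⟩)).comp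
      ((tu.fstOfPair).pair ((tv.fstOfPair).pair t1))
  obtain ⟨c₂, h2, t2⟩ := hf.fix hb tu.sndOfPair tv.sndOfPair hπmem tπ
  refine ⟨fun x => Nat.pair (c₁ x) (c₂ x), fun x => ?_, t1.pair t2⟩
  exact mem_pbHom_pair (h1 x) ((h2 x).choose) (((h2 x).choose_spec).symm)

variable (hf : EffFib f)

def pbObj : EffObj where
  A := pbA bot f
  α p := Nat.pair (Cc.α p.val.1) (B.α p.val.2)
  hom := pbHom bot f
  idc := by
    obtain ⟨c, hc, tc⟩ := pb_cells (u := fun p : pbA bot f => p) (v := fun p => p) hf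
      (Cells.id (CompComputes.id _).fstOfPair) (Cells.id (CompComputes.id _).sndOfPair)
      (CompComputes.id _) (CompComputes.id _)
    exact tc.toFinds hc
  invc := by
    have t0 := CompComputes.id (fun s : {p : pbA bot f × pbA bot f × ℕ //
      p.2.2 ∈ pbHom bot f p.1 p.2.1} =>
      Nat.pair (Nat.pair (Cc.α s.1.1.val.1) (B.α s.1.1.val.2))
        (Nat.pair (Nat.pair (Cc.α s.1.2.1.val.1) (B.α s.1.2.1.val.2)) s.1.2.2))
    have tu := t0.fstOfPair
    have tv := t0.sndOfPair.fstOfPair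
    have tρ := t0.sndOfPair.sndOfPair
    have cu1 : Computable (fun n : ℕ => n.unpair.1) :=
      Primrec.to_comp (Primrec.fst.comp Primrec.unpair)
    have cu2 : Computable (fun n : ℕ => n.unpair.2) :=
      Primrec.to_comp (Primrec.snd.comp Primrec.unpair)
    have cCc : Cells Cc _ (fun s : {p : pbA bot f × pbA bot f × ℕ // p.2.2 ∈ pbHom bot f p.1 p.2.1} => s.1.1.val.1) (fun s => s.1.2.1.val.1) :=
      ⟨fun s => s.1.2.2.unpair.1, fun s => s.prop.choose,
        (CompComputes.of_computable _ cu1).comp tρ⟩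
    have cB : Cells B _ (fun s : {p : pbA bot f × pbA bot f × ℕ // p.2.2 ∈ pbHom bot f p.1 p.2.1} => s.1.1.val.2) (fun s => s.1.2.1.val.2) :=
      ⟨fun s => s.1.2.2.unpair.2, fun s => s.prop.choose_spec.choose,
        (CompComputes.of_computable _ cu2).comp tρ⟩
    obtain ⟨c, hc, tc⟩ := pb_cells (u := fun s : {p : pbA bot f × pbA bot f × ℕ // p.2.2 ∈ pbHom bot f p.1 p.2.1} => s.1.2.1) (v := fun s => s.1.1) hf
      (cCc.symm tu.fstOfPair tv.fstOfPair) (cB.symm tu.sndOfPair tv.sndOfPair) tv tu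
    exact tc.toFinds hc
  compc := by
    have t0 := CompComputes.id (fun s : {p : pbA bot f × pbA bot f × pbA bot f × ℕ × ℕ //
      p.2.2.2.1 ∈ pbHom bot f p.1 p.2.1 ∧ p.2.2.2.2 ∈ pbHom bot f p.2.1 p.2.2.1} =>
      Nat.pair (Nat.pair (Cc.α s.1.1.val.1) (B.α s.1.1.val.2))
        (Nat.pair (Nat.pair (Cc.α s.1.2.1.val.1) (B.α s.1.2.1.val.2))
          (Nat.pair (Nat.pair (Cc.α s.1.2.2.1.val.1) (B.α s.1.2.2.1.val.2))
            (Nat.pair s.1.2.2.2.1 s.1.2.2.2.2))))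
    have tu := t0.fstOfPair
    have tv := t0.sndOfPair.fstOfPair
    have tw := t0.sndOfPair.sndOfPair.fstOfPair
    have tρ₁ := t0.sndOfPair.sndOfPair.sndOfPair.fstOfPair
    have tρ₂ := t0.sndOfPair.sndOfPair.sndOfPair.sndOfPair
    have cu1 : Computable (fun n : ℕ => n.unpair.1) :=
      Primrec.to_comp (Primrec.fst.comp Primrec.unpair)
    have cu2 : Computable (fun n : ℕ => n.unpair.2) :=
      Primrec.to_comp (Primrec.snd.comp Primrec.unpair)
    have cCc1 : Cells Cc _ (fun s : {p : pbA bot f × pbA bot f × pbA bot f × ℕ × ℕ //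
      p.2.2.2.1 ∈ pbHom bot f p.1 p.2.1 ∧ p.2.2.2.2 ∈ pbHom bot f p.2.1 p.2.2.1} => s.1.1.val.1) (fun s => s.1.2.1.val.1) :=
      ⟨fun s => s.1.2.2.2.1.unpair.1, fun s => s.prop.1.choose,
        (CompComputes.of_computable _ cu1).comp tρ₁⟩
    have cCc2 : Cells Cc _ (fun s : {p : pbA bot f × pbA bot f × pbA bot f × ℕ × ℕ //
      p.2.2.2.1 ∈ pbHom bot f p.1 p.2.1 ∧ p.2.2.2.2 ∈ pbHom bot f p.2.1 p.2.2.1} => s.1.2.1.val.1) (fun s => s.1.2.2.1.val.1) :=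
      ⟨fun s => s.1.2.2.2.2.unpair.1, fun s => s.prop.2.choose,
        (CompComputes.of_computable _ cu1).comp tρ₂⟩
    have cB1 : Cells B _ (fun s : {p : pbA bot f × pbA bot f × pbA bot f × ℕ × ℕ //
      p.2.2.2.1 ∈ pbHom bot f p.1 p.2.1 ∧ p.2.2.2.2 ∈ pbHom bot f p.2.1 p.2.2.1} => s.1.1.val.2) (fun s => s.1.2.1.val.2) :=
      ⟨fun s => s.1.2.2.2.1.unpair.2, fun s => s.prop.1.choose_spec.choose,
        (CompComputes.of_computable _ cu2).comp tρ₁⟩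
    have cB2 : Cells B _ (fun s : {p : pbA bot f × pbA bot f × pbA bot f × ℕ × ℕ //
      p.2.2.2.1 ∈ pbHom bot f p.1 p.2.1 ∧ p.2.2.2.2 ∈ pbHom bot f p.2.1 p.2.2.1} => s.1.2.1.val.2) (fun s => s.1.2.2.1.val.2) :=
      ⟨fun s => s.1.2.2.2.2.unpair.2, fun s => s.prop.2.choose_spec.choose,
        (CompComputes.of_computable _ cu2).comp tρ₂⟩
    obtain ⟨c, hc, tc⟩ := pb_cells (u := fun s : {p : pbA bot f × pbA bot f × pbA bot f × ℕ × ℕ //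
      p.2.2.2.1 ∈ pbHom bot f p.1 p.2.1 ∧ p.2.2.2.2 ∈ pbHom bot f p.2.1 p.2.2.1} => s.1.1) (v := fun s => s.1.2.2.1) hf
      (cCc1.trans tu.fstOfPair tv.fstOfPair tw.fstOfPair cCc2)
      (cB1.trans tu.sndOfPair tv.sndOfPair tw.sndOfPair cB2) tu tw
    exact tc.toFinds hc

def pbP1 : pbObj bot f hf ⟶ Cc where
  f0 p := p.val.1
  f1 p q n := ⟨n.val.unpair.1, n.prop.choose⟩
  tr0 := (CompComputes.id _).fstOfPair
  tr1 := by
    have cu : Computable (fun n : ℕ => n.unpair.2.unpair.2.unpair.1) :=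
      Primrec.to_comp ((Primrec.fst.comp Primrec.unpair).comp
        ((Primrec.snd.comp Primrec.unpair).comp (Primrec.snd.comp Primrec.unpair)))
    exact (CompComputes.of_computable _ cu).congr' (fun _ => rfl) (fun x => by simp)

def pbP2 : pbObj bot f hf ⟶ B where
  f0 p := p.val.2
  f1 p q n := ⟨n.val.unpair.2, n.prop.choose_spec.choose⟩
  tr0 := (CompComputes.id _).sndOfPair
  tr1 := by
    have cu : Computable (fun n : ℕ => n.unpair.2.unpair.2.unpair.2) :=
      Primrec.to_comp ((Primrec.snd.comp Primrec.unpair).comp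
        ((Primrec.snd.comp Primrec.unpair).comp (Primrec.snd.comp Primrec.unpair)))
    exact (CompComputes.of_computable _ cu).congr' (fun _ => rfl) (fun x => by simp)

theorem pb_isPB : IsPB (pbP1 bot f hf) (pbP2 bot f hf) bot f := by
  constructor
  · refine EffHom.ext' (fun p => p.prop) (fun p q n => ?_)
    exact n.prop.choose_spec.choose_spec
  · intro Q q₁ q₂ hcomm
    refine ⟨{ f0 := fun w => ⟨(q₁.f0 w, q₂.f0 w), ehom_f0 hcomm w⟩
              f1 := fun w w' ρ => ⟨Nat.pair (q₁.f1 w w' ρ).val (q₂.f1 w w' ρ).val,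
                mem_pbHom_pair (q₁.f1 w w' ρ).prop (q₂.f1 w w' ρ).prop
                  (ehom_f1 hcomm w w' ρ)⟩
              tr0 := q₁.tr0.pair q₂.tr0
              tr1 := (q₁.tr1.pair q₂.tr1).congr' (fun x => rfl) (fun x => rfl) },
      ⟨?_, ?_⟩, ?_⟩
    · refine EffHom.ext' (fun w => rfl) (fun w w' ρ => ?_)
      show (Nat.pair (q₁.f1 w w' ρ).val (q₂.f1 w w' ρ).val).unpair.1 = (q₁.f1 w w' ρ).val
      simp
    · refine EffHom.ext' (fun w => rfl) (fun w w' ρ => ?_)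
      show (Nat.pair (q₁.f1 w w' ρ).val (q₂.f1 w w' ρ).val).unpair.2 = (q₂.f1 w w' ρ).val
      simp
    · rintro h' ⟨e₁, e₂⟩
      refine EffHom.ext' (fun w => ?_) (fun w w' ρ => ?_)
      · exact Subtype.ext (Prod.ext (ehom_f0 e₁ w) (ehom_f0 e₂ w))
      · have v1 := ehom_f1 e₁ w w' ρ
        have v2 := ehom_f1 e₂ w w' ρ
        show (h'.f1 w w' ρ).val = Nat.pair (q₁.f1 w w' ρ).val (q₂.f1 w w' ρ).val
        rw [← v1, ← v2]
        exact (Nat.pair_unpair _).symm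

theorem pbP1_fib : EffFib (pbP1 bot f hf) := by
  classical
  have cu2 : Computable (fun n : ℕ => n.unpair.2) :=
    Primrec.to_comp (Primrec.snd.comp Primrec.unpair)
  have t0 := CompComputes.id (fun s : {p : (pbObj bot f hf).A × Cc.A × ℕ //
      p.2.2 ∈ Cc.hom ((pbP1 bot f hf).f0 p.1) p.2.1} =>
      Nat.pair (Nat.pair (Cc.α s.1.1.val.1) (B.α s.1.1.val.2))
        (Nat.pair (Cc.α s.1.2.1) s.1.2.2))
  obtain ⟨b', e1, tb', c₂, h2, t2⟩ :=
    hf.lift (u := fun s : {p : (pbObj bot f hf).A × Cc.A × ℕ //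
        p.2.2 ∈ Cc.hom ((pbP1 bot f hf).f0 p.1) p.2.1} => s.1.1.val.2) (a := fun s => bot.f0 s.1.2.1)
      (π := fun s => (bot.f1 s.1.1.val.1 s.1.2.1 ⟨s.1.2.2, s.prop⟩).val)
      (fun s => mem_hom_cast s.1.1.prop rfl (bot.f1 _ _ ⟨s.1.2.2, s.prop⟩).prop)
      (t0.fstOfPair.sndOfPair)
      (bot.tk (t0.sndOfPair.fstOfPair))
      ((bot.tr1.precomp (fun (s : {p : (pbObj bot f hf).A × Cc.A × ℕ //
          p.2.2 ∈ Cc.hom ((pbP1 bot f hf).f0 p.1) p.2.1}) => ⟨s.1.1.val.1, s.1.2.1, ⟨s.1.2.2, s.prop⟩⟩)).comp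
        ((t0.fstOfPair.fstOfPair).pair
          ((t0.sndOfPair.fstOfPair).pair (t0.sndOfPair.sndOfPair))))
  have t1 := CompComputes.id (fun s : {p : (pbObj bot f hf).A × (pbObj bot f hf).A × ℕ × ℕ //
      p.2.2.1 ∈ (pbObj bot f hf).hom p.1 p.2.1 ∧
      p.2.2.2 ∈ Cc.hom ((pbP1 bot f hf).f0 p.1) ((pbP1 bot f hf).f0 p.2.1)} =>
      Nat.pair (Nat.pair (Cc.α s.1.1.val.1) (B.α s.1.1.val.2))
        (Nat.pair (Nat.pair (Cc.α s.1.2.1.val.1) (B.α s.1.2.1.val.2))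
          (Nat.pair s.1.2.2.1 s.1.2.2.2)))
  obtain ⟨d₂, hd2, td2⟩ :=
    hf.fix (u := fun s : {p : (pbObj bot f hf).A × (pbObj bot f hf).A × ℕ × ℕ //
        p.2.2.1 ∈ (pbObj bot f hf).hom p.1 p.2.1 ∧
        p.2.2.2 ∈ Cc.hom ((pbP1 bot f hf).f0 p.1) ((pbP1 bot f hf).f0 p.2.1)} => s.1.1.val.2) (v := fun s => s.1.2.1.val.2)
      (π := fun s => (bot.f1 s.1.1.val.1 s.1.2.1.val.1 ⟨s.1.2.2.2, s.prop.2⟩).val)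
      ⟨fun s => s.1.2.2.1.unpair.2, fun s => s.prop.1.choose_spec.choose,
        (CompComputes.of_computable _ cu2).comp
          (t1.sndOfPair.sndOfPair.fstOfPair)⟩
      (t1.fstOfPair.sndOfPair)
      (t1.sndOfPair.fstOfPair.sndOfPair)
      (fun s => mem_hom_cast s.1.1.prop s.1.2.1.prop
        (bot.f1 _ _ ⟨s.1.2.2.2, s.prop.2⟩).prop)
      ((bot.tr1.precomp (fun (s : {p : (pbObj bot f hf).A × (pbObj bot f hf).A × ℕ × ℕ //
          p.2.2.1 ∈ (pbObj bot f hf).hom p.1 p.2.1 ∧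
          p.2.2.2 ∈ Cc.hom ((pbP1 bot f hf).f0 p.1) ((pbP1 bot f hf).f0 p.2.1)}) =>
          ⟨s.1.1.val.1, s.1.2.1.val.1, ⟨s.1.2.2.2, s.prop.2⟩⟩)).comp
        ((t1.fstOfPair.fstOfPair).pair
          ((t1.sndOfPair.fstOfPair.fstOfPair).pair
            (t1.sndOfPair.sndOfPair.sndOfPair))))
  refine effFib_intro (pbP1 bot f hf) (fun s => ⟨(s.1.2.1, b' s), (e1 s).symm⟩)
    (fun s => rfl) ?_ ?_ ?_
  · exact (t0.sndOfPair.fstOfPair).pair tb'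
  · refine ⟨fun s => Nat.pair s.1.2.2 (c₂ s), fun s => ?_,
      (t0.sndOfPair.sndOfPair).pair t2⟩
    refine ⟨mem_pbHom_pair s.prop ((h2 s).choose) (((h2 s).choose_spec).symm), ?_⟩
    show (Nat.pair s.1.2.2 (c₂ s)).unpair.1 = s.1.2.2
    simp
  · refine ⟨fun s => Nat.pair s.1.2.2.2 (d₂ s), fun s => ?_,
      (t1.sndOfPair.sndOfPair.sndOfPair).pair td2⟩
    refine ⟨mem_pbHom_pair s.prop.2 ((hd2 s).choose) (((hd2 s).choose_spec).symm), ?_⟩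
    show (Nat.pair s.1.2.2.2 (d₂ s)).unpair.1 = s.1.2.2.2
    simp

end Pullback

/-- Comparison of two pullbacks of the same cospan. -/
theorem isPB_comparison {P Q X Y Z : EffObj} {p₁ : P ⟶ X} {p₂ : P ⟶ Y}
    {q₁ : Q ⟶ X} {q₂ : Q ⟶ Y} {f : X ⟶ Z} {g : Y ⟶ Z}
    (hP : IsPB p₁ p₂ f g) (hQ : IsPB q₁ q₂ f g) :
    ∃ (φ : P ⟶ Q) (ψ : Q ⟶ P), φ ≫ q₁ = p₁ ∧ φ ≫ q₂ = p₂ ∧ ψ ≫ p₁ = q₁ ∧ ψ ≫ p₂ = q₂ ∧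
      φ ≫ ψ = 𝟙 P ∧ ψ ≫ φ = 𝟙 Q := by
  obtain ⟨φ, ⟨e1, e2⟩, -⟩ := hQ.2 P p₁ p₂ hP.1
  obtain ⟨ψ, ⟨e3, e4⟩, -⟩ := hP.2 Q q₁ q₂ hQ.1
  obtain ⟨i1, -, hu1⟩ := hP.2 P p₁ p₂ hP.1
  obtain ⟨i2, -, hu2⟩ := hQ.2 Q q₁ q₂ hQ.1
  refine ⟨φ, ψ, e1, e2, e3, e4, ?_, ?_⟩
  · rw [hu1 (φ ≫ ψ) ⟨by rw [Category.assoc, e3, e1], by rw [Category.assoc, e4, e2]⟩,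
      hu1 (𝟙 P) ⟨Category.id_comp _, Category.id_comp _⟩]
  · rw [hu2 (ψ ≫ φ) ⟨by rw [Category.assoc, e1, e3], by rw [Category.assoc, e2, e4]⟩,
      hu2 (𝟙 Q) ⟨Category.id_comp _, Category.id_comp _⟩]

/-! ### Pullbacks of discrete fibrations (for part 2). -/

theorem pbP1_stddisc {A B Cc : EffObj} (bot : Cc ⟶ A) {s : B ⟶ A} (hs : EffStdDisc s) :
    EffStdDisc (pbP1 bot s hs.1) := by
  refine ⟨pbP1_fib bot s hs.1, fun p q h0 hα => ?_⟩
  have hα' : Nat.pair (Cc.α p.val.1) (B.α p.val.2) = Nat.pair (Cc.α q.val.1) (B.α q.val.2) := hα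
  have e2 : B.α p.val.2 = B.α q.val.2 := by
    have := congrArg (fun n => n.unpair.2) hα'
    simpa using this
  have h0' : p.val.1 = q.val.1 := h0
  refine Subtype.ext (Prod.ext h0' (hs.2 _ _ ?_ e2))
  rw [← p.prop, ← q.prop, h0']

theorem effDisc_pb_factor {A B Cc : EffObj} (bot : Cc ⟶ A) {f : B ⟶ A} (hfd : EffDisc f) :
    ∃ (P₁ : EffObj) (W : pbObj bot f hfd.1 ⟶ P₁) (p₁' : P₁ ⟶ Cc),
      EffEqv W ∧ EffStdDisc p₁' ∧ W ≫ p₁' = pbP1 bot f hfd.1 := by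
  classical
  obtain ⟨hf, B₁, w, sm, hw, hs, hws⟩ := id hfd
  obtain ⟨u, hwu, huw⟩ := hw
  have chwu : Cells B B.α (fun b => u.f0 (w.f0 b)) (fun b => b) :=
    effHomotopic_iff_cells.mp hwu
  have chuw : Cells B₁ B₁.α (fun z => w.f0 (u.f0 z)) (fun z => z) :=
    effHomotopic_iff_cells.mp huw
  have cu1 : Computable (fun n : ℕ => n.unpair.1) :=
    Primrec.to_comp (Primrec.fst.comp Primrec.unpair)
  have cu2 : Computable (fun n : ℕ => n.unpair.2) :=
    Primrec.to_comp (Primrec.snd.comp Primrec.unpair)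
  have hf' : EffFib f := hfd.1
  set P1 : EffObj := pbObj bot sm hs.1 with hP1
  set P0 : EffObj := pbObj bot f hf' with hP0
  -- the comparison map W
  set W : P0 ⟶ P1 :=
    { f0 := fun p => ⟨(p.val.1, w.f0 p.val.2), p.prop.trans (ehom_f0 hws p.val.2).symm⟩
      f1 := fun p q n => ⟨Nat.pair n.val.unpair.1
          (w.f1 _ _ ⟨n.val.unpair.2, n.prop.choose_spec.choose⟩).val,
        mem_pbHom_pair n.prop.choose
          (w.f1 _ _ ⟨n.val.unpair.2, n.prop.choose_spec.choose⟩).prop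
          (n.prop.choose_spec.choose_spec.trans
            (ehom_f1 hws p.val.2 q.val.2
              ⟨n.val.unpair.2, n.prop.choose_spec.choose⟩).symm)⟩
      tr0 := ((CompComputes.id (fun p : P0.A =>
          Nat.pair (Cc.α p.val.1) (B.α p.val.2))).fstOfPair).pair
        (w.tk ((CompComputes.id (fun p : P0.A =>
          Nat.pair (Cc.α p.val.1) (B.α p.val.2))).sndOfPair))
      tr1 := by
        have t0 := CompComputes.id (fun x : (p : P0.A) × (q : P0.A) × P0.Cell p q =>
          Nat.pair (Nat.pair (Cc.α x.1.val.1) (B.α x.1.val.2))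
            (Nat.pair (Nat.pair (Cc.α x.2.1.val.1) (B.α x.2.1.val.2)) x.2.2.val))
        exact ((CompComputes.of_computable _ cu1).comp
            (t0.sndOfPair.sndOfPair)).pair
          ((w.tr1.precomp (fun (x : (p : P0.A) × (q : P0.A) × P0.Cell p q) => ⟨x.1.val.2, x.2.1.val.2,
              ⟨x.2.2.val.unpair.2, x.2.2.prop.choose_spec.choose⟩⟩)).comp
            ((t0.fstOfPair.sndOfPair).pair
              ((t0.sndOfPair.fstOfPair.sndOfPair).pair
                ((CompComputes.of_computable _ cu2).comp (t0.sndOfPair.sndOfPair))))) }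
    with hWdef
  have s1 := CompComputes.id (fun p : P1.A => Nat.pair (Cc.α p.val.1) (B₁.α p.val.2))
  have s0 := CompComputes.id (fun p : P0.A => Nat.pair (Cc.α p.val.1) (B.α p.val.2))
  -- connecting cells for the inverse
  have c1 : Cells B₁ (fun p : P1.A => P1.α p) (fun p => w.f0 (u.f0 p.val.2))
      (fun p => p.val.2) :=
    (chuw.precomp (fun p : P1.A => p.val.2)).chase s1.sndOfPair
  have c2 : Cells A (fun p : P1.A => P1.α p)
      (fun p => sm.f0 (w.f0 (u.f0 p.val.2))) (fun p => sm.f0 p.val.2) :=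
    c1.map sm (w.tk (u.tk s1.sndOfPair)) s1.sndOfPair
  obtain ⟨κ, hκ, tκ⟩ := c2
  have hκ' : ∀ p : P1.A, κ p ∈ A.hom (f.f0 (u.f0 p.val.2)) (bot.f0 p.val.1) :=
    fun p => mem_hom_cast (ehom_f0 hws (u.f0 p.val.2)) p.prop.symm (hκ p)
  obtain ⟨b₁, e1, tb₁, lam⟩ :=
    hf'.lift (I := fun p : P1.A => P1.α p) (u := fun p => u.f0 p.val.2)
      (a := fun p => bot.f0 p.val.1) (π := κ) hκ' (u.tk s1.sndOfPair)
      (bot.tk s1.fstOfPair) tκ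
  have lamc : Cells B (fun p : P1.A => P1.α p) (fun p => u.f0 p.val.2) b₁ := lam.toCells
  -- the underlying map of the inverse
  set V0 : P1.A → P0.A := fun p => ⟨(p.val.1, b₁ p), (e1 p).symm⟩ with hV0
  -- cells for the inverse, over the sigma index used by `tr1`
  have t0 := CompComputes.id (fun x : (p : P1.A) × (q : P1.A) × P1.Cell p q =>
    Nat.pair (Nat.pair (Cc.α x.1.val.1) (B₁.α x.1.val.2))
      (Nat.pair (Nat.pair (Cc.α x.2.1.val.1) (B₁.α x.2.1.val.2)) x.2.2.val))
  have tP1a := t0.fstOfPair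
  have tP1b := t0.sndOfPair.fstOfPair
  have γcells : Cells Cc _ (fun x : (p : P1.A) × (q : P1.A) × P1.Cell p q => x.1.val.1)
      (fun x => x.2.1.val.1) :=
    ⟨fun x => x.2.2.val.unpair.1, fun x => x.2.2.prop.choose,
      (CompComputes.of_computable _ cu1).comp (t0.sndOfPair.sndOfPair)⟩
  have ξcells : Cells B₁ _ (fun x : (p : P1.A) × (q : P1.A) × P1.Cell p q => x.1.val.2)
      (fun x => x.2.1.val.2) :=
    ⟨fun x => x.2.2.val.unpair.2, fun x => x.2.2.prop.choose_spec.choose,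
      (CompComputes.of_computable _ cu2).comp (t0.sndOfPair.sndOfPair)⟩
  have lam1 := (lamc.precomp (fun x : (p : P1.A) × (q : P1.A) × P1.Cell p q => x.1)).chase tP1a
  have lam2 := (lamc.precomp
    (fun x : (p : P1.A) × (q : P1.A) × P1.Cell p q => x.2.1)).chase tP1b
  have tu1 : Tk B _ (fun x : (p : P1.A) × (q : P1.A) × P1.Cell p q => u.f0 x.1.val.2) :=
    u.tk tP1a.sndOfPair
  have tu2 : Tk B _ (fun x : (p : P1.A) × (q : P1.A) × P1.Cell p q => u.f0 x.2.1.val.2) :=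
    u.tk tP1b.sndOfPair
  have tb1 : Tk B _ (fun x : (p : P1.A) × (q : P1.A) × P1.Cell p q => b₁ x.1) :=
    (tb₁.precomp (fun x : (p : P1.A) × (q : P1.A) × P1.Cell p q => x.1)).comp tP1a
  have tb2 : Tk B _ (fun x : (p : P1.A) × (q : P1.A) × P1.Cell p q => b₁ x.2.1) :=
    (tb₁.precomp (fun x : (p : P1.A) × (q : P1.A) × P1.Cell p q => x.2.1)).comp tP1b
  have uxi := ξcells.map u tP1a.sndOfPair tP1b.sndOfPair
  have ρ₀ : Cells B _ (fun x : (p : P1.A) × (q : P1.A) × P1.Cell p q => b₁ x.1)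
      (fun x => b₁ x.2.1) :=
    (((lam1.symm tu1 tb1).trans tb1 tu1 tu2 uxi).trans tb1 tu2 tb2 lam2)
  obtain ⟨cV, hcV, tcV⟩ := pb_cells hf'
    (u := fun x : (p : P1.A) × (q : P1.A) × P1.Cell p q => V0 x.1)
    (v := fun x => V0 x.2.1) γcells ρ₀
    ((tP1a.fstOfPair).pair tb1) ((tP1b.fstOfPair).pair tb2)
  set V : P1 ⟶ P0 :=
    { f0 := V0
      f1 := fun p q n => ⟨cV ⟨p, q, n⟩, hcV ⟨p, q, n⟩⟩
      tr0 := (s1.fstOfPair).pair tb₁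
      tr1 := tcV }
    with hVdef
  -- homotopy W ≫ V ≃ 𝟙
  have tW0 : CompComputes (fun p : P0.A => P0.α p) (fun p => P1.α (W.f0 p)) := W.tr0
  have tk_u : Tk B (fun p : P0.A => P0.α p) (fun p => u.f0 (w.f0 p.val.2)) :=
    u.tk (w.tk s0.sndOfPair)
  have tk_b : Tk B (fun p : P0.A => P0.α p) (fun p => b₁ (W.f0 p)) :=
    (tb₁.precomp (fun p : P0.A => W.f0 p)).comp tW0
  have a1 : Cells B (fun p : P0.A => P0.α p) (fun p => b₁ (W.f0 p))
      (fun p => u.f0 (w.f0 p.val.2)) :=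
    ((lamc.precomp (fun p : P0.A => W.f0 p)).chase tW0).symm tk_u tk_b
  have a2 : Cells B (fun p : P0.A => P0.α p) (fun p => u.f0 (w.f0 p.val.2))
      (fun p => p.val.2) :=
    (chwu.precomp (fun p : P0.A => p.val.2)).chase s0.sndOfPair
  have hbH := (a1.trans tk_b tk_u s0.sndOfPair a2 :
    Cells B (fun p : P0.A => P0.α p) (fun p => b₁ (W.f0 p)) (fun p => p.val.2))
  obtain ⟨cH, hcH, tcH⟩ := pb_cells hf' (u := fun p : P0.A => V0 (W.f0 p))
    (v := fun p => p) (Cells.id s0.fstOfPair) hbH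
    ((s0.fstOfPair).pair tk_b) s0
  have hWV : EffHomotopic (W ≫ V) (𝟙 P0) := effHomotopic_iff_cells.mpr ⟨cH, hcH, tcH⟩
  -- homotopy V ≫ W ≃ 𝟙
  have b1c : Cells B₁ (fun p : P1.A => P1.α p) (fun q => w.f0 (b₁ q))
      (fun q => w.f0 (u.f0 q.val.2)) :=
    (lamc.symm (u.tk s1.sndOfPair) tb₁).map w tb₁ (u.tk s1.sndOfPair)
  have hbH2 := (b1c.trans (w.tk tb₁) (w.tk (u.tk s1.sndOfPair)) s1.sndOfPair c1 :
    Cells B₁ (fun p : P1.A => P1.α p) (fun q => w.f0 (b₁ q)) (fun q => q.val.2))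
  obtain ⟨cH2, hcH2, tcH2⟩ := pb_cells hs.1 (u := fun q : P1.A => W.f0 (V0 q))
    (v := fun q => q) (Cells.id s1.fstOfPair) hbH2
    ((s1.fstOfPair).pair (w.tk tb₁)) s1
  have hVW : EffHomotopic (V ≫ W) (𝟙 P1) := effHomotopic_iff_cells.mpr ⟨cH2, hcH2, tcH2⟩
  refine ⟨P1, W, pbP1 bot sm hs.1, ⟨V, hWV, hVW⟩, pbP1_stddisc bot hs, ?_⟩
  refine EffHom.ext' (fun p => rfl) (fun p q n => ?_)
  show (Nat.pair n.val.unpair.1 _).unpair.1 = n.val.unpair.1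
  simp

/-- Part (2): discrete fibrations are stable under homotopy pullback. -/
theorem effDisc_hpb {D Cc B A : EffObj} (g : D ⟶ Cc) (top : D ⟶ B) (f : B ⟶ A)
    (bot : Cc ⟶ A) (hg : EffFib g) (hfd : EffDisc f)
    (H : IsHomotopyPB EffPS g top f bot) : EffDisc g := by
  obtain ⟨comm, P, p₁, p₂, h, hPB, h₁, h₂, hEqv⟩ := H
  obtain ⟨P₁, W, p₁', hW, hp₁', hWeq⟩ := effDisc_pb_factor bot hfd
  obtain ⟨φ, ψ, e1, e2, -, -, eφψ, eψφ⟩ := isPB_comparison hPB (pb_isPB bot f hfd.1)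
  refine ⟨hg, P₁, h ≫ φ ≫ W, p₁', ?_, hp₁', ?_⟩
  · exact EffEqv.comp' (show EffEqv h from hEqv)
      ((effEqv_of_strict_inverse ψ eφψ eψφ).comp' hW)
  · calc (h ≫ φ ≫ W) ≫ p₁' = h ≫ φ ≫ (W ≫ p₁') := by simp
    _ = h ≫ φ ≫ pbP1 bot f hfd.1 := by rw [hWeq]
    _ = h ≫ p₁ := by rw [e1]
    _ = g := h₁


/-! ### Composition of discrete fibrations (part 3). -/

section Mix

variable {X' Yb Y' : EffObj} (s : X' ⟶ Yb) (u : Y' ⟶ Yb)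

def mixA : Type := {p : Y'.A × X'.A // s.f0 p.2 = u.f0 p.1}

def mixHom (p q : mixA s u) : Set ℕ :=
  {n | n.unpair.1 ∈ Y'.hom p.val.1 q.val.1 ∧ n.unpair.2 ∈ X'.hom p.val.2 q.val.2}

variable {s u} in
theorem mem_mixHom_pair {p q : mixA s u} {c₁ c₂ : ℕ}
    (h1 : c₁ ∈ Y'.hom p.val.1 q.val.1) (h2 : c₂ ∈ X'.hom p.val.2 q.val.2) :
    Nat.pair c₁ c₂ ∈ mixHom s u p q := by
  simp only [mixHom, Set.mem_setOf_eq, Nat.unpair_pair]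
  exact ⟨h1, h2⟩

variable {s u} in
theorem mix_cells {X : Sort*} {I : X → ℕ} {a b : X → mixA s u}
    (hc : Cells Y' I (fun x => (a x).val.1) (fun x => (b x).val.1))
    (hb : Cells X' I (fun x => (a x).val.2) (fun x => (b x).val.2)) :
    ∃ c : X → ℕ, (∀ x, c x ∈ mixHom s u (a x) (b x)) ∧ CompComputes I c := by
  obtain ⟨c₁, h1, t1⟩ := hc
  obtain ⟨c₂, h2, t2⟩ := hb
  exact ⟨fun x => Nat.pair (c₁ x) (c₂ x),
    fun x => mem_mixHom_pair (h1 x) (h2 x), t1.pair t2⟩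

def mixObj : EffObj where
  A := mixA s u
  α p := Nat.pair (Y'.α p.val.1) (X'.α p.val.2)
  hom := mixHom s u
  idc := by
    obtain ⟨c, hc, tc⟩ := mix_cells (a := fun p : mixA s u => p) (b := fun p => p)
      (Cells.id (CompComputes.id (fun p : mixA s u =>
        Nat.pair (Y'.α p.val.1) (X'.α p.val.2))).fstOfPair)
      (Cells.id (CompComputes.id (fun p : mixA s u =>
        Nat.pair (Y'.α p.val.1) (X'.α p.val.2))).sndOfPair)
    exact tc.toFinds hc
  invc := by
    have t0 := CompComputes.id (fun x : {p : mixA s u × mixA s u × ℕ //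
      p.2.2 ∈ mixHom s u p.1 p.2.1} =>
      Nat.pair (Nat.pair (Y'.α x.1.1.val.1) (X'.α x.1.1.val.2))
        (Nat.pair (Nat.pair (Y'.α x.1.2.1.val.1) (X'.α x.1.2.1.val.2)) x.1.2.2))
    have cu1 : Computable (fun n : ℕ => n.unpair.1) :=
      Primrec.to_comp (Primrec.fst.comp Primrec.unpair)
    have cu2 : Computable (fun n : ℕ => n.unpair.2) :=
      Primrec.to_comp (Primrec.snd.comp Primrec.unpair)
    have cY : Cells Y' _ (fun x : {p : mixA s u × mixA s u × ℕ //
        p.2.2 ∈ mixHom s u p.1 p.2.1} => x.1.1.val.1) (fun x => x.1.2.1.val.1) :=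
      ⟨fun x => x.1.2.2.unpair.1, fun x => x.prop.1,
        (CompComputes.of_computable _ cu1).comp (t0.sndOfPair.sndOfPair)⟩
    have cX : Cells X' _ (fun x : {p : mixA s u × mixA s u × ℕ //
        p.2.2 ∈ mixHom s u p.1 p.2.1} => x.1.1.val.2) (fun x => x.1.2.1.val.2) :=
      ⟨fun x => x.1.2.2.unpair.2, fun x => x.prop.2,
        (CompComputes.of_computable _ cu2).comp (t0.sndOfPair.sndOfPair)⟩
    obtain ⟨c, hc, tc⟩ := mix_cells (a := fun x : {p : mixA s u × mixA s u × ℕ //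
        p.2.2 ∈ mixHom s u p.1 p.2.1} => x.1.2.1) (b := fun x => x.1.1)
      (cY.symm t0.fstOfPair.fstOfPair t0.sndOfPair.fstOfPair.fstOfPair)
      (cX.symm t0.fstOfPair.sndOfPair t0.sndOfPair.fstOfPair.sndOfPair)
    exact tc.toFinds hc
  compc := by
    have t0 := CompComputes.id (fun x : {p : mixA s u × mixA s u × mixA s u × ℕ × ℕ //
      p.2.2.2.1 ∈ mixHom s u p.1 p.2.1 ∧ p.2.2.2.2 ∈ mixHom s u p.2.1 p.2.2.1} =>
      Nat.pair (Nat.pair (Y'.α x.1.1.val.1) (X'.α x.1.1.val.2))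
        (Nat.pair (Nat.pair (Y'.α x.1.2.1.val.1) (X'.α x.1.2.1.val.2))
          (Nat.pair (Nat.pair (Y'.α x.1.2.2.1.val.1) (X'.α x.1.2.2.1.val.2))
            (Nat.pair x.1.2.2.2.1 x.1.2.2.2.2))))
    have cu1 : Computable (fun n : ℕ => n.unpair.1) :=
      Primrec.to_comp (Primrec.fst.comp Primrec.unpair)
    have cu2 : Computable (fun n : ℕ => n.unpair.2) :=
      Primrec.to_comp (Primrec.snd.comp Primrec.unpair)
    have cY1 : Cells Y' _ (fun x : {p : mixA s u × mixA s u × mixA s u × ℕ × ℕ //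
        p.2.2.2.1 ∈ mixHom s u p.1 p.2.1 ∧ p.2.2.2.2 ∈ mixHom s u p.2.1 p.2.2.1} =>
        x.1.1.val.1) (fun x => x.1.2.1.val.1) :=
      ⟨fun x => x.1.2.2.2.1.unpair.1, fun x => x.prop.1.1,
        (CompComputes.of_computable _ cu1).comp
          (t0.sndOfPair.sndOfPair.sndOfPair.fstOfPair)⟩
    have cY2 : Cells Y' _ (fun x : {p : mixA s u × mixA s u × mixA s u × ℕ × ℕ //
        p.2.2.2.1 ∈ mixHom s u p.1 p.2.1 ∧ p.2.2.2.2 ∈ mixHom s u p.2.1 p.2.2.1} =>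
        x.1.2.1.val.1) (fun x => x.1.2.2.1.val.1) :=
      ⟨fun x => x.1.2.2.2.2.unpair.1, fun x => x.prop.2.1,
        (CompComputes.of_computable _ cu1).comp
          (t0.sndOfPair.sndOfPair.sndOfPair.sndOfPair)⟩
    have cX1 : Cells X' _ (fun x : {p : mixA s u × mixA s u × mixA s u × ℕ × ℕ //
        p.2.2.2.1 ∈ mixHom s u p.1 p.2.1 ∧ p.2.2.2.2 ∈ mixHom s u p.2.1 p.2.2.1} =>
        x.1.1.val.2) (fun x => x.1.2.1.val.2) :=
      ⟨fun x => x.1.2.2.2.1.unpair.2, fun x => x.prop.1.2,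
        (CompComputes.of_computable _ cu2).comp
          (t0.sndOfPair.sndOfPair.sndOfPair.fstOfPair)⟩
    have cX2 : Cells X' _ (fun x : {p : mixA s u × mixA s u × mixA s u × ℕ × ℕ //
        p.2.2.2.1 ∈ mixHom s u p.1 p.2.1 ∧ p.2.2.2.2 ∈ mixHom s u p.2.1 p.2.2.1} =>
        x.1.2.1.val.2) (fun x => x.1.2.2.1.val.2) :=
      ⟨fun x => x.1.2.2.2.2.unpair.2, fun x => x.prop.2.2,
        (CompComputes.of_computable _ cu2).comp
          (t0.sndOfPair.sndOfPair.sndOfPair.sndOfPair)⟩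
    obtain ⟨c, hc, tc⟩ := mix_cells (a := fun x : {p : mixA s u × mixA s u × mixA s u × ℕ × ℕ //
        p.2.2.2.1 ∈ mixHom s u p.1 p.2.1 ∧ p.2.2.2.2 ∈ mixHom s u p.2.1 p.2.2.1} =>
        x.1.1) (b := fun x => x.1.2.2.1)
      (cY1.trans t0.fstOfPair.fstOfPair t0.sndOfPair.fstOfPair.fstOfPair
        t0.sndOfPair.sndOfPair.fstOfPair.fstOfPair cY2)
      (cX1.trans t0.fstOfPair.sndOfPair t0.sndOfPair.fstOfPair.sndOfPair
        t0.sndOfPair.sndOfPair.fstOfPair.sndOfPair cX2)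
    exact tc.toFinds hc

def mixP1 : mixObj s u ⟶ Y' where
  f0 p := p.val.1
  f1 p q n := ⟨n.val.unpair.1, n.prop.1⟩
  tr0 := (CompComputes.id _).fstOfPair
  tr1 := by
    have cu : Computable (fun n : ℕ => n.unpair.2.unpair.2.unpair.1) :=
      Primrec.to_comp ((Primrec.fst.comp Primrec.unpair).comp
        ((Primrec.snd.comp Primrec.unpair).comp (Primrec.snd.comp Primrec.unpair)))
    exact (CompComputes.of_computable _ cu).congr' (fun _ => rfl) (fun x => by simp)

def mixP2 : mixObj s u ⟶ X' where
  f0 p := p.val.2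
  f1 p q n := ⟨n.val.unpair.2, n.prop.2⟩
  tr0 := (CompComputes.id _).sndOfPair
  tr1 := by
    have cu : Computable (fun n : ℕ => n.unpair.2.unpair.2.unpair.2) :=
      Primrec.to_comp ((Primrec.snd.comp Primrec.unpair).comp
        ((Primrec.snd.comp Primrec.unpair).comp (Primrec.snd.comp Primrec.unpair)))
    exact (CompComputes.of_computable _ cu).congr' (fun _ => rfl) (fun x => by simp)

end Mix

theorem stddisc_comp_eqv_factor {X' Yb Y' : EffObj} {s : X' ⟶ Yb} {v : Yb ⟶ Y'}
    (hs : EffStdDisc s) (hv : EffEqv v) :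
    ∃ (X'' : EffObj) (e : X' ⟶ X'') (d : X'' ⟶ Y'),
      EffEqv e ∧ EffStdDisc d ∧ e ≫ d = s ≫ v := by
  classical
  obtain ⟨u, hvu, huv⟩ := hv
  have chvu : Cells Yb Yb.α (fun y => u.f0 (v.f0 y)) (fun y => y) :=
    effHomotopic_iff_cells.mp hvu
  have chuv : Cells Y' Y'.α (fun z => v.f0 (u.f0 z)) (fun z => z) :=
    effHomotopic_iff_cells.mp huv
  set M : EffObj := mixObj s u with hM
  -- the fibration part of `d = mixP1` : lifting
  have t0 := CompComputes.id (fun x : {p : M.A × Y'.A × ℕ //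
      p.2.2 ∈ Y'.hom ((mixP1 s u).f0 p.1) p.2.1} =>
      Nat.pair (Nat.pair (Y'.α x.1.1.val.1) (X'.α x.1.1.val.2))
        (Nat.pair (Y'.α x.1.2.1) x.1.2.2))
  obtain ⟨x₁, ex, tx₁, lamS⟩ := hs.1.lift
    (u := fun x : {p : M.A × Y'.A × ℕ //
      p.2.2 ∈ Y'.hom ((mixP1 s u).f0 p.1) p.2.1} => x.1.1.val.2)
    (a := fun x => u.f0 x.1.2.1)
    (π := fun x => (u.f1 x.1.1.val.1 x.1.2.1 ⟨x.1.2.2, x.prop⟩).val)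
    (fun x => mem_hom_cast x.1.1.prop.symm rfl
      (u.f1 x.1.1.val.1 x.1.2.1 ⟨x.1.2.2, x.prop⟩).prop)
    (t0.fstOfPair.sndOfPair) (u.tk t0.sndOfPair.fstOfPair)
    ((u.tr1.precomp (fun (x : {p : M.A × Y'.A × ℕ //
        p.2.2 ∈ Y'.hom ((mixP1 s u).f0 p.1) p.2.1}) => ⟨x.1.1.val.1, x.1.2.1, ⟨x.1.2.2, x.prop⟩⟩)).comp
      ((t0.fstOfPair.fstOfPair).pair
        ((t0.sndOfPair.fstOfPair).pair (t0.sndOfPair.sndOfPair))))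
  have hdfib : EffFib (mixP1 s u) := by
    refine effFib_intro (mixP1 s u) (fun x => ⟨(x.1.2.1, x₁ x), ex x⟩) (fun x => rfl)
      ((t0.sndOfPair.fstOfPair).pair tx₁) ?_ ?_
    · obtain ⟨lc, hlc, tlc⟩ := lamS.toCells
      refine ⟨fun x => Nat.pair x.1.2.2 (lc x), fun x => ?_,
        (t0.sndOfPair.sndOfPair).pair tlc⟩
      refine ⟨mem_mixHom_pair x.prop (hlc x), ?_⟩
      show (Nat.pair x.1.2.2 (lc x)).unpair.1 = x.1.2.2
      simp
    · have t1 := CompComputes.id (fun x : {p : M.A × M.A × ℕ × ℕ //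
        p.2.2.1 ∈ M.hom p.1 p.2.1 ∧
        p.2.2.2 ∈ Y'.hom ((mixP1 s u).f0 p.1) ((mixP1 s u).f0 p.2.1)} =>
        Nat.pair (Nat.pair (Y'.α x.1.1.val.1) (X'.α x.1.1.val.2))
          (Nat.pair (Nat.pair (Y'.α x.1.2.1.val.1) (X'.α x.1.2.1.val.2))
            (Nat.pair x.1.2.2.1 x.1.2.2.2)))
      have cu2 : Computable (fun n : ℕ => n.unpair.2) :=
        Primrec.to_comp (Primrec.snd.comp Primrec.unpair)
      refine ⟨fun x => Nat.pair x.1.2.2.2 (x.1.2.2.1.unpair.2), fun x => ?_,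
        (t1.sndOfPair.sndOfPair.sndOfPair).pair
          ((CompComputes.of_computable _ cu2).comp
            (t1.sndOfPair.sndOfPair.fstOfPair))⟩
      refine ⟨mem_mixHom_pair x.prop.2 x.prop.1.2, ?_⟩
      show (Nat.pair x.1.2.2.2 (x.1.2.2.1.unpair.2)).unpair.1 = x.1.2.2.2
      simp
  have hd : EffStdDisc (mixP1 s u) := by
    refine ⟨hdfib, fun p q h0 hα => ?_⟩
    have hα' : Nat.pair (Y'.α p.val.1) (X'.α p.val.2)
        = Nat.pair (Y'.α q.val.1) (X'.α q.val.2) := hα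
    have e2 : X'.α p.val.2 = X'.α q.val.2 := by
      have := congrArg (fun n => n.unpair.2) hα'
      simpa using this
    have h0' : p.val.1 = q.val.1 := h0
    refine Subtype.ext (Prod.ext h0' (hs.2 _ _ ?_ e2))
    rw [p.prop, q.prop, h0']
  -- the map e : X' ⟶ M
  have idX := CompComputes.id (fun x : X'.A => X'.α x)
  have κc : Cells Yb (fun x : X'.A => X'.α x) (fun x => s.f0 x)
      (fun x => u.f0 (v.f0 (s.f0 x))) :=
    ((chvu.symm (u.tk (v.tk (CompComputes.id Yb.α))) (CompComputes.id Yb.α)).precomp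
      (fun x : X'.A => s.f0 x)).chase s.tr0
  obtain ⟨κ, hκ, tκ⟩ := κc
  obtain ⟨x₁e, ee, tx₁e, lamE⟩ := hs.1.lift (u := fun x : X'.A => x)
    (a := fun x => u.f0 (v.f0 (s.f0 x))) (π := κ) hκ idX
    (u.tk (v.tk s.tr0)) tκ
  have lamEc : Cells X' (fun x : X'.A => X'.α x) (fun x => x) x₁e := lamE.toCells
  -- cells for e.f1 over the sigma index
  have t2 := CompComputes.id (fun t : (x : X'.A) × (x' : X'.A) × X'.Cell x x' =>
    Nat.pair (X'.α t.1) (Nat.pair (X'.α t.2.1) t.2.2.val))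
  have ρcells : Cells X' _ (fun t : (x : X'.A) × (x' : X'.A) × X'.Cell x x' => t.1)
      (fun t => t.2.1) :=
    ⟨fun t => t.2.2.val, fun t => t.2.2.prop, t2.sndOfPair.sndOfPair⟩
  have lam1 := (lamEc.precomp
    (fun t : (x : X'.A) × (x' : X'.A) × X'.Cell x x' => t.1)).chase t2.fstOfPair
  have lam2 := (lamEc.precomp
    (fun t : (x : X'.A) × (x' : X'.A) × X'.Cell x x' => t.2.1)).chase
      t2.sndOfPair.fstOfPair
  have te1 : Tk X' _ (fun t : (x : X'.A) × (x' : X'.A) × X'.Cell x x' => x₁e t.1) :=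
    (tx₁e.precomp (fun t : (x : X'.A) × (x' : X'.A) × X'.Cell x x' => t.1)).comp
      t2.fstOfPair
  have te2 : Tk X' _ (fun t : (x : X'.A) × (x' : X'.A) × X'.Cell x x' => x₁e t.2.1) :=
    (tx₁e.precomp (fun t : (x : X'.A) × (x' : X'.A) × X'.Cell x x' => t.2.1)).comp
      t2.sndOfPair.fstOfPair
  have rhoHat : Cells X' _ (fun t : (x : X'.A) × (x' : X'.A) × X'.Cell x x' => x₁e t.1)
      (fun t => x₁e t.2.1) :=
    ((lam1.symm t2.fstOfPair te1).trans te1 t2.fstOfPair t2.sndOfPair.fstOfPair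
      ρcells).trans te1 t2.sndOfPair.fstOfPair te2 lam2
  obtain ⟨cr, hcr, tcr⟩ := rhoHat
  set e : X' ⟶ M :=
    { f0 := fun x => ⟨(v.f0 (s.f0 x), x₁e x), ee x⟩
      f1 := fun x x' ρ => ⟨Nat.pair (v.f1 _ _ (s.f1 x x' ρ)).val (cr ⟨x, x', ρ⟩),
        mem_mixHom_pair (v.f1 _ _ (s.f1 x x' ρ)).prop (hcr ⟨x, x', ρ⟩)⟩
      tr0 := (v.tk (s.tk idX)).pair tx₁e
      tr1 := ((v.tr1.precomp (fun t : (x : X'.A) × (x' : X'.A) × X'.Cell x x' =>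
          ⟨s.f0 t.1, s.f0 t.2.1, s.f1 t.1 t.2.1 t.2.2⟩)).comp
        ((s.tk t2.fstOfPair).pair ((s.tk t2.sndOfPair.fstOfPair).pair s.tr1))).pair tcr }
    with hedef
  -- homotopy e ≫ mixP2 ≃ 𝟙
  have hedd : EffHomotopic (e ≫ mixP2 s u) (𝟙 X') :=
    effHomotopic_iff_cells.mpr (lamEc.symm idX tx₁e)
  -- homotopy mixP2 ≫ e ≃ 𝟙
  have sM := CompComputes.id (fun p : M.A => Nat.pair (Y'.α p.val.1) (X'.α p.val.2))
  have cY' : Cells Y' (fun p : M.A => M.α p) (fun p => v.f0 (s.f0 p.val.2))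
      (fun p => p.val.1) := by
    refine ((chuv.precomp (fun p : M.A => p.val.1)).chase sM.fstOfPair).congr'
      (fun _ => rfl) (fun p => ?_) (fun _ => rfl)
    exact congrArg v.f0 p.prop.symm
  have cX'2 : Cells X' (fun p : M.A => M.α p) (fun p => x₁e p.val.2)
      (fun p => p.val.2) :=
    ((lamEc.symm idX tx₁e).precomp (fun p : M.A => p.val.2)).chase sM.sndOfPair
  obtain ⟨ch2, hch2, tch2⟩ := mix_cells (a := fun p : M.A => e.f0 p.val.2)
    (b := fun p => p) cY' cX'2
  have hdde : EffHomotopic (mixP2 s u ≫ e) (𝟙 M) :=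
    effHomotopic_iff_cells.mpr ⟨ch2, hch2, tch2⟩
  refine ⟨M, e, mixP1 s u, ⟨mixP2 s u, hedd, hdde⟩, hd, ?_⟩
  refine EffHom.ext' (fun x => rfl) (fun x x' ρ => ?_)
  show (Nat.pair (v.f1 _ _ (s.f1 x x' ρ)).val (cr ⟨x, x', ρ⟩)).unpair.1
    = (v.f1 _ _ (s.f1 x x' ρ)).val
  simp

/-- Part (3): discrete fibrations are closed under composition. -/
theorem effDisc_comp {X Y Z : EffObj} (f : X ⟶ Y) (g : Y ⟶ Z) (hf : EffDisc f)
    (hg : EffDisc g) : EffDisc (f ≫ g) := by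
  obtain ⟨hff, X', w, s, hw, hs, hws⟩ := hf
  obtain ⟨hgf, Y'', v, t, hv, ht, hvt⟩ := hg
  obtain ⟨X'', e, d, he, hd, hed⟩ := stddisc_comp_eqv_factor hs hv
  refine ⟨hff.comp' hgf, X'', w ≫ e, d ≫ t, hw.comp' he, hd.comp' ht, ?_⟩
  calc (w ≫ e) ≫ d ≫ t = w ≫ (e ≫ d) ≫ t := by simp
  _ = w ≫ (s ≫ v) ≫ t := by rw [hed]
  _ = (w ≫ s) ≫ (v ≫ t) := by simp
  _ = f ≫ g := by rw [hws, hvt]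


/-! ### A relative path object for every fibration, and a concrete criterion for
fibrewise homotopy. -/

section RelPath

variable {Zb Yb : EffObj} (p : Zb ⟶ Yb) (hp : EffFib p)

def ppA : Type := {q : (pbA p p) × ℕ // q.2 ∈ Zb.hom q.1.val.1 q.1.val.2}

def ppObj : EffObj where
  A := ppA p
  α q := Nat.pair (Nat.pair (Zb.α q.val.1.val.1) (Zb.α q.val.1.val.2)) q.val.2
  hom q q' := pbHom p p q.val.1 q'.val.1
  idc := by
    obtain ⟨o, ho, tO⟩ := (pbObj p p hp).idc.toComputes
    refine ((tO.precomp (fun q : ppA p => q.val.1)).comp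
      (CompComputes.id (fun q : ppA p =>
        Nat.pair (Nat.pair (Zb.α q.val.1.val.1) (Zb.α q.val.1.val.2))
          q.val.2)).fstOfPair).toFinds (fun q => ho q.val.1)
  invc := by
    obtain ⟨o, ho, tO⟩ := (pbObj p p hp).invc.toComputes
    have t0 := CompComputes.id (fun x : {w : ppA p × ppA p × ℕ //
      w.2.2 ∈ pbHom p p w.1.val.1 w.2.1.val.1} =>
      Nat.pair (Nat.pair (Nat.pair (Zb.α x.1.1.val.1.val.1) (Zb.α x.1.1.val.1.val.2))
          x.1.1.val.2)
        (Nat.pair (Nat.pair (Nat.pair (Zb.α x.1.2.1.val.1.val.1)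
          (Zb.α x.1.2.1.val.1.val.2)) x.1.2.1.val.2) x.1.2.2))
    refine ((tO.precomp (fun x : {w : ppA p × ppA p × ℕ //
        w.2.2 ∈ pbHom p p w.1.val.1 w.2.1.val.1} =>
        (⟨(x.1.1.val.1, x.1.2.1.val.1, x.1.2.2), x.prop⟩ :
        {w : (pbObj p p hp).A × (pbObj p p hp).A × ℕ //
          w.2.2 ∈ (pbObj p p hp).hom w.1 w.2.1}))).comp
      ((t0.fstOfPair.fstOfPair).pair ((t0.sndOfPair.fstOfPair.fstOfPair).pair
        t0.sndOfPair.sndOfPair))).toFinds (fun x => ho (⟨(x.1.1.val.1, x.1.2.1.val.1, x.1.2.2), x.prop⟩ :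
        {w : (pbObj p p hp).A × (pbObj p p hp).A × ℕ //
          w.2.2 ∈ (pbObj p p hp).hom w.1 w.2.1}))
  compc := by
    obtain ⟨o, ho, tO⟩ := (pbObj p p hp).compc.toComputes
    have t0 := CompComputes.id (fun x : {w : ppA p × ppA p × ppA p × ℕ × ℕ //
      w.2.2.2.1 ∈ pbHom p p w.1.val.1 w.2.1.val.1 ∧
      w.2.2.2.2 ∈ pbHom p p w.2.1.val.1 w.2.2.1.val.1} =>
      Nat.pair (Nat.pair (Nat.pair (Zb.α x.1.1.val.1.val.1) (Zb.α x.1.1.val.1.val.2))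
          x.1.1.val.2)
        (Nat.pair (Nat.pair (Nat.pair (Zb.α x.1.2.1.val.1.val.1)
            (Zb.α x.1.2.1.val.1.val.2)) x.1.2.1.val.2)
          (Nat.pair (Nat.pair (Nat.pair (Zb.α x.1.2.2.1.val.1.val.1)
              (Zb.α x.1.2.2.1.val.1.val.2)) x.1.2.2.1.val.2)
            (Nat.pair x.1.2.2.2.1 x.1.2.2.2.2))))
    refine ((tO.precomp (fun x : {w : ppA p × ppA p × ppA p × ℕ × ℕ //
        w.2.2.2.1 ∈ pbHom p p w.1.val.1 w.2.1.val.1 ∧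
        w.2.2.2.2 ∈ pbHom p p w.2.1.val.1 w.2.2.1.val.1} =>
        (⟨(x.1.1.val.1, x.1.2.1.val.1, x.1.2.2.1.val.1, x.1.2.2.2.1, x.1.2.2.2.2),
          x.prop.1, x.prop.2⟩ :
        {w : (pbObj p p hp).A × (pbObj p p hp).A × (pbObj p p hp).A × ℕ × ℕ //
          w.2.2.2.1 ∈ (pbObj p p hp).hom w.1 w.2.1 ∧
          w.2.2.2.2 ∈ (pbObj p p hp).hom w.2.1 w.2.2.1}))).comp
      ((t0.fstOfPair.fstOfPair).pair ((t0.sndOfPair.fstOfPair.fstOfPair).pair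
        ((t0.sndOfPair.sndOfPair.fstOfPair.fstOfPair).pair
          ((t0.sndOfPair.sndOfPair.sndOfPair.fstOfPair).pair
            t0.sndOfPair.sndOfPair.sndOfPair.sndOfPair))))).toFinds (fun x => ho (⟨(x.1.1.val.1, x.1.2.1.val.1, x.1.2.2.1.val.1, x.1.2.2.2.1, x.1.2.2.2.2),
          x.prop.1, x.prop.2⟩ :
        {w : (pbObj p p hp).A × (pbObj p p hp).A × (pbObj p p hp).A × ℕ × ℕ //
          w.2.2.2.1 ∈ (pbObj p p hp).hom w.1 w.2.1 ∧
          w.2.2.2.2 ∈ (pbObj p p hp).hom w.2.1 w.2.2.1}))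

def ppS : ppObj p hp ⟶ Zb where
  f0 q := q.val.1.val.1
  f1 q q' n := ⟨n.val.unpair.1, n.prop.choose⟩
  tr0 := (CompComputes.id _).fstOfPair.fstOfPair
  tr1 := by
    have cu : Computable (fun n : ℕ => n.unpair.2.unpair.2.unpair.1) :=
      Primrec.to_comp ((Primrec.fst.comp Primrec.unpair).comp
        ((Primrec.snd.comp Primrec.unpair).comp (Primrec.snd.comp Primrec.unpair)))
    exact (CompComputes.of_computable _ cu).congr' (fun _ => rfl) (fun x => by simp)

def ppT : ppObj p hp ⟶ Zb where
  f0 q := q.val.1.val.2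
  f1 q q' n := ⟨n.val.unpair.2, n.prop.choose_spec.choose⟩
  tr0 := (CompComputes.id _).fstOfPair.sndOfPair
  tr1 := by
    have cu : Computable (fun n : ℕ => n.unpair.2.unpair.2.unpair.2) :=
      Primrec.to_comp ((Primrec.snd.comp Primrec.unpair).comp
        ((Primrec.snd.comp Primrec.unpair).comp (Primrec.snd.comp Primrec.unpair)))
    exact (CompComputes.of_computable _ cu).congr' (fun _ => rfl) (fun x => by simp)

def ppH : ppObj p hp ⟶ pbObj p p hp where
  f0 q := q.val.1
  f1 q q' n := ⟨n.val, n.prop⟩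
  tr0 := (CompComputes.id _).fstOfPair
  tr1 := by
    have cu : Computable (fun n : ℕ => n.unpair.2.unpair.2) :=
      Primrec.to_comp ((Primrec.snd.comp Primrec.unpair).comp
        (Primrec.snd.comp Primrec.unpair))
    exact (CompComputes.of_computable _ cu).congr' (fun _ => rfl) (fun x => by simp)

theorem ppR_exists : ∃ r : Zb ⟶ ppObj p hp,
    r ≫ ppS p hp = 𝟙 Zb ∧ r ≫ ppT p hp = 𝟙 Zb ∧ EffEqv r := by
  classical
  obtain ⟨iz, hiz, tiz⟩ := Zb.idc.toComputes
  set r : Zb ⟶ ppObj p hp :=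
    { f0 := fun z => ⟨(⟨(z, z), rfl⟩, iz z), hiz z⟩
      f1 := fun z z' ρ => ⟨Nat.pair ρ.val ρ.val, mem_pbHom_pair ρ.prop ρ.prop rfl⟩
      tr0 := ((CompComputes.id (fun z : Zb.A => Zb.α z)).pair
        (CompComputes.id (fun z : Zb.A => Zb.α z))).pair tiz
      tr1 := by
        have t2 := CompComputes.id (fun t : (z : Zb.A) × (z' : Zb.A) × Zb.Cell z z' =>
          Nat.pair (Zb.α t.1) (Nat.pair (Zb.α t.2.1) t.2.2.val))
        exact (t2.sndOfPair.sndOfPair).pair (t2.sndOfPair.sndOfPair) }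
    with hrdef
  have hrs : r ≫ ppS p hp = 𝟙 Zb := by
    refine EffHom.ext' (fun z => rfl) (fun z z' ρ => ?_)
    show (Nat.pair ρ.val ρ.val).unpair.1 = ρ.val
    simp
  have hrt : r ≫ ppT p hp = 𝟙 Zb := by
    refine EffHom.ext' (fun z => rfl) (fun z z' ρ => ?_)
    show (Nat.pair ρ.val ρ.val).unpair.2 = ρ.val
    simp
  refine ⟨r, hrs, hrt, ppS p hp, by rw [hrs]; exact EffHomotopic.refl' _, ?_⟩
  -- homotopy ppS ≫ r ≃ 𝟙
  have t0 := CompComputes.id (fun q : ppA p =>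
    Nat.pair (Nat.pair (Zb.α q.val.1.val.1) (Zb.α q.val.1.val.2)) q.val.2)
  have ncells : Cells Zb _ (fun q : ppA p => q.val.1.val.1)
      (fun q => q.val.1.val.2) :=
    ⟨fun q => q.val.2, fun q => q.prop, t0.sndOfPair⟩
  obtain ⟨ch, hch, tch⟩ := pb_cells hp
    (u := fun q : ppA p => ((ppS p hp ≫ r).f0 q).val.1) (v := fun q => q.val.1)
    (Cells.id t0.fstOfPair.fstOfPair) ncells
    ((t0.fstOfPair.fstOfPair).pair (t0.fstOfPair.fstOfPair)) t0.fstOfPair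
  exact effHomotopic_iff_cells.mpr ⟨ch, hch, tch⟩

theorem ppFib : EffFib (ppH p hp) := by
  classical
  have cu1 : Computable (fun n : ℕ => n.unpair.1) :=
    Primrec.to_comp (Primrec.fst.comp Primrec.unpair)
  have cu2 : Computable (fun n : ℕ => n.unpair.2) :=
    Primrec.to_comp (Primrec.snd.comp Primrec.unpair)
  have t0 := CompComputes.id (fun x : {w : ppA p × (pbObj p p hp).A × ℕ //
    w.2.2 ∈ (pbObj p p hp).hom ((ppH p hp).f0 w.1) w.2.1} =>
    Nat.pair (Nat.pair (Nat.pair (Zb.α x.1.1.val.1.val.1) (Zb.α x.1.1.val.1.val.2))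
        x.1.1.val.2)
      (Nat.pair (Nat.pair (Zb.α x.1.2.1.val.1) (Zb.α x.1.2.1.val.2)) x.1.2.2))
  -- construct the transported cell n' over the target
  have c₁cells : Cells Zb _ (fun x : {w : ppA p × (pbObj p p hp).A × ℕ //
      w.2.2 ∈ (pbObj p p hp).hom ((ppH p hp).f0 w.1) w.2.1} => x.1.1.val.1.val.1)
      (fun x => x.1.2.1.val.1) :=
    ⟨fun x => x.1.2.2.unpair.1, fun x => x.prop.choose,
      (CompComputes.of_computable _ cu1).comp t0.sndOfPair.sndOfPair⟩
  have c₂cells : Cells Zb _ (fun x : {w : ppA p × (pbObj p p hp).A × ℕ //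
      w.2.2 ∈ (pbObj p p hp).hom ((ppH p hp).f0 w.1) w.2.1} => x.1.1.val.1.val.2)
      (fun x => x.1.2.1.val.2) :=
    ⟨fun x => x.1.2.2.unpair.2, fun x => x.prop.choose_spec.choose,
      (CompComputes.of_computable _ cu2).comp t0.sndOfPair.sndOfPair⟩
  have ncells : Cells Zb _ (fun x : {w : ppA p × (pbObj p p hp).A × ℕ //
      w.2.2 ∈ (pbObj p p hp).hom ((ppH p hp).f0 w.1) w.2.1} => x.1.1.val.1.val.1)
      (fun x => x.1.1.val.1.val.2) :=
    ⟨fun x => x.1.1.val.2, fun x => x.1.1.prop, t0.fstOfPair.sndOfPair⟩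
  have ta := t0.fstOfPair.fstOfPair.fstOfPair
  have tb := t0.fstOfPair.fstOfPair.sndOfPair
  have ta' := t0.sndOfPair.fstOfPair.fstOfPair
  have tb' := t0.sndOfPair.fstOfPair.sndOfPair
  have n'cells := ((c₁cells.symm ta ta').trans ta' ta tb ncells).trans ta' tb tb' c₂cells
  obtain ⟨n', hn', tn'⟩ := n'cells
  refine effFib_intro (ppH p hp) (fun x => ⟨(x.1.2.1, n' x), hn' x⟩) (fun x => rfl)
    ((t0.sndOfPair.fstOfPair).pair tn') ?_ ?_
  · exact ⟨fun x => x.1.2.2, fun x => ⟨x.prop, rfl⟩, t0.sndOfPair.sndOfPair⟩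
  · have t1 := CompComputes.id (fun x : {w : ppA p × ppA p × ℕ × ℕ //
      w.2.2.1 ∈ (ppObj p hp).hom w.1 w.2.1 ∧
      w.2.2.2 ∈ (pbObj p p hp).hom ((ppH p hp).f0 w.1) ((ppH p hp).f0 w.2.1)} =>
      Nat.pair (Nat.pair (Nat.pair (Zb.α x.1.1.val.1.val.1) (Zb.α x.1.1.val.1.val.2))
          x.1.1.val.2)
        (Nat.pair (Nat.pair (Nat.pair (Zb.α x.1.2.1.val.1.val.1)
            (Zb.α x.1.2.1.val.1.val.2)) x.1.2.1.val.2)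
          (Nat.pair x.1.2.2.1 x.1.2.2.2)))
    exact ⟨fun x => x.1.2.2.2, fun x => ⟨x.prop.2, rfl⟩,
      t1.sndOfPair.sndOfPair.sndOfPair⟩

theorem ppRel : ∃ r : Zb ⟶ ppObj p hp,
    IsRelPathObj EffPS p r (ppS p hp) (ppT p hp) := by
  obtain ⟨r, hrs, hrt, hre⟩ := ppR_exists p hp
  refine ⟨r, hre, hrs, hrt, ?_, pbObj p p hp, pbP1 p p hp, pbP2 p p hp, ppH p hp,
    pb_isPB p p hp, ?_, ?_, ppFib p hp⟩
  · exact EffHom.ext' (fun q => q.val.1.prop) (fun q q' n => n.prop.choose_spec.choose_spec)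
  · exact EffHom.ext' (fun q => rfl) (fun q q' n => rfl)
  · exact EffHom.ext' (fun q => rfl) (fun q q' n => rfl)

end RelPath

/-- The key criterion: fibrewise homotopy over a fibration is the same as strict
equality over the base together with a (plain) homotopy. -/
theorem fibHomotopic_iff {Zb Yb Q : EffObj} {p : Zb ⟶ Yb} (hp : EffFib p)
    (uu vv : Q ⟶ Zb) :
    FibHomotopic EffPS p uu vv ↔ (uu ≫ p = vv ≫ p ∧ EffHomotopic uu vv) := by
  constructor
  · rintro ⟨PX, r, s, t, ⟨hr, hrs, hrt, hstp, -⟩, H, hHs, hHt⟩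
    constructor
    · rw [← hHs, ← hHt, Category.assoc, Category.assoc, hstp]
    · obtain ⟨r', hrr', hr'r⟩ := hr
      have k1 := hr'r.whiskerR s
      rw [Category.id_comp, Category.assoc, hrs, Category.comp_id] at k1
      have k2 := hr'r.whiskerR t
      rw [Category.id_comp, Category.assoc, hrt, Category.comp_id] at k2
      have hst : EffHomotopic s t := k1.symm'.trans' k2
      have := hst.whiskerL H
      rwa [hHs, hHt] at this
  · rintro ⟨hbase, hhom⟩
    obtain ⟨cq, hcq, tcq⟩ := effHomotopic_iff_cells.mp hhom
    obtain ⟨r, hrel⟩ := ppRel p hp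
    refine ⟨ppObj p hp, r, ppS p hp, ppT p hp, hrel,
      { f0 := fun q => ⟨(⟨(uu.f0 q, vv.f0 q), ehom_f0 hbase q⟩, cq q), hcq q⟩
        f1 := fun q q' ρ => ⟨Nat.pair (uu.f1 q q' ρ).val (vv.f1 q q' ρ).val,
          mem_pbHom_pair (uu.f1 q q' ρ).prop (vv.f1 q q' ρ).prop
            (ehom_f1 hbase q q' ρ)⟩
        tr0 := (uu.tr0.pair vv.tr0).pair tcq
        tr1 := uu.tr1.pair vv.tr1 }, ?_, ?_⟩
    · refine EffHom.ext' (fun q => rfl) (fun q q' ρ => ?_)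
      show (Nat.pair (uu.f1 q q' ρ).val (vv.f1 q q' ρ).val).unpair.1 = (uu.f1 q q' ρ).val
      simp
    · refine EffHom.ext' (fun q => rfl) (fun q q' ρ => ?_)
      show (Nat.pair (uu.f1 q q' ρ).val (vv.f1 q q' ρ).val).unpair.2 = (vv.f1 q q' ρ).val
      simp


/-! ### The concrete homotopy Π-type in `EFF` (for part 4). -/

section Pi

variable {X Y Z : EffObj} (f : Y ⟶ X) (g : Z ⟶ Y)

/-- A point of the Π-object: a tracked, cell-respecting section of `g` over a fibre
of `f`. -/
structure PiPt : Type where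
  x : X.A
  sec : ∀ y : Y.A, f.f0 y = x → Z.A
  code : ℕ
  sec_over : ∀ y h, g.f0 (sec y h) = y
  track0 : ∀ y h, Z.α (sec y h) ∈ evalN code.unpair.1 (Y.α y)
  track1 : ∀ (y y' : Y.A) (h : f.f0 y = x) (h' : f.f0 y' = x) (υ : ℕ)
    (hυ : υ ∈ Y.hom y y'),
    ∃ (ζ : ℕ) (hζ : ζ ∈ Z.hom (sec y h) (sec y' h')),
      ζ ∈ evalN code.unpair.2 (Nat.pair (Y.α y) (Nat.pair (Y.α y') υ)) ∧
      (g.f1 _ _ ⟨ζ, hζ⟩).val = υ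

variable {f g} in
theorem PiPt.ext' {P Q : PiPt f g} (hx : P.x = Q.x) (hcode : P.code = Q.code)
    (hsec : ∀ y hy hy', P.sec y hy = Q.sec y hy') : P = Q := by
  obtain ⟨x, sec, code, _, _, _⟩ := P
  obtain ⟨x', sec', code', _, _, _⟩ := Q
  obtain rfl : x = x' := hx
  obtain rfl : code = code' := hcode
  obtain rfl : sec = sec' := by
    funext y h
    exact hsec y h h
  rfl

/-- Membership for the 1-cells of the Π-object. -/
def PiCellMem (P Q : PiPt f g) (m : ℕ) : Prop :=
  m.unpair.1 ∈ X.hom P.x Q.x ∧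
  ∀ (y y' : Y.A) (h : f.f0 y = P.x) (h' : f.f0 y' = Q.x) (υ : ℕ)
    (hυ : υ ∈ Y.hom y y'),
    (f.f1 y y' ⟨υ, hυ⟩).val = m.unpair.1 →
    ∃ (ζ : ℕ) (hζ : ζ ∈ Z.hom (P.sec y h) (Q.sec y' h')),
      ζ ∈ evalN m.unpair.2 (Nat.pair (Y.α y) (Nat.pair (Y.α y') υ)) ∧
      (g.f1 _ _ ⟨ζ, hζ⟩).val = υ

variable {f g}

/-- Inner index for constructing Π-cells. -/
def PiIn {W : Type*} (P Q : W → PiPt f g) (ξ : W → ℕ) : Type _ :=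
  {t : W × Y.A × Y.A × ℕ // ∃ (h : f.f0 t.2.1 = (P t.1).x)
    (h' : f.f0 t.2.2.1 = (Q t.1).x) (hυ : t.2.2.2 ∈ Y.hom t.2.1 t.2.2.1),
    (f.f1 _ _ ⟨t.2.2.2, hυ⟩).val = ξ t.1}

theorem pi_cells {W : Type*} {I : W → ℕ} {P Q : W → PiPt f g} {ξ : W → ℕ}
    (hξ : ∀ w, ξ w ∈ X.hom (P w).x (Q w).x) (tξ : CompComputes I ξ)
    (ζ : PiIn P Q ξ → ℕ)
    (hζ : ∀ t : PiIn P Q ξ, ∀ (h : f.f0 t.val.2.1 = (P t.val.1).x)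
      (h' : f.f0 t.val.2.2.1 = (Q t.val.1).x),
      ∃ hm : ζ t ∈ Z.hom ((P t.val.1).sec t.val.2.1 h) ((Q t.val.1).sec t.val.2.2.1 h'),
        (g.f1 _ _ ⟨ζ t, hm⟩).val = t.val.2.2.2)
    (tζ : CompComputes (fun t : PiIn P Q ξ => Nat.pair (I t.val.1)
      (Nat.pair (Y.α t.val.2.1) (Nat.pair (Y.α t.val.2.2.1) t.val.2.2.2))) ζ) :
    ∃ m : W → ℕ, (∀ w, PiCellMem f g (P w) (Q w) (m w)) ∧ (∀ w, (m w).unpair.1 = ξ w) ∧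
      CompComputes I m := by
  obtain ⟨K, hK, hKev⟩ := tζ.curryCode
  refine ⟨fun w => Nat.pair (ξ w) (K (I w)), fun w => ?_, fun w => by simp,
    tξ.pair (CompComputes.of_computable K hK)⟩
  constructor
  · simpa using hξ w
  · intro y y' h h' υ hυ hover
    have hover' : (f.f1 y y' ⟨υ, hυ⟩).val = ξ w := by simpa using hover
    set t : PiIn P Q ξ := ⟨(w, y, y', υ), h, h', hυ, hover'⟩ with ht
    obtain ⟨hm, hgv⟩ := hζ t h h'
    refine ⟨ζ t, hm, ?_, hgv⟩
    simpa using hKev t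

/-- Tracking of the section of a tracked family of Π-points. -/
theorem piSec_tk {W : Type*} {I : W → ℕ} {P : W → PiPt f g} {y : W → Y.A}
    (hy : ∀ w, f.f0 (y w) = (P w).x)
    (tP : CompComputes I (fun w => Nat.pair (X.α (P w).x) (P w).code))
    (ty : Tk Y I y) : Tk Z I (fun w => (P w).sec (y w) (hy w)) := by
  have cu2 : Computable (fun n : ℕ => n.unpair.2) :=
    Primrec.to_comp (Primrec.snd.comp Primrec.unpair)
  have cu1 : Computable (fun n : ℕ => n.unpair.1) :=
    Primrec.to_comp (Primrec.fst.comp Primrec.unpair)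
  exact CompComputes.of_evalN (E := fun w => (P w).code.unpair.1)
    (N := fun w => Y.α (y w))
    (((CompComputes.of_computable _ cu1).comp tP.sndOfPair).pair ty)
    (fun w => (P w).track0 (y w) (hy w))

/-- Applying a tracked family of Π-cells to suitable cells downstairs. -/
theorem piCell_apply {W : Type*} {I : W → ℕ} {P Q : W → PiPt f g} {m : W → ℕ}
    (hm : ∀ w, PiCellMem f g (P w) (Q w) (m w)) (tm : CompComputes I m)
    {y y' : W → Y.A} (hy : ∀ w, f.f0 (y w) = (P w).x) (hy' : ∀ w, f.f0 (y' w) = (Q w).x)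
    {υ : W → ℕ}
    (hυ : ∀ w, ∃ h : υ w ∈ Y.hom (y w) (y' w), (f.f1 _ _ ⟨υ w, h⟩).val = (m w).unpair.1)
    (ty : Tk Y I y) (ty' : Tk Y I y') (tυ : CompComputes I υ) :
    ∃ ζ : W → ℕ,
      (∀ w, ∃ hz : ζ w ∈ Z.hom ((P w).sec (y w) (hy w)) ((Q w).sec (y' w) (hy' w)),
        (g.f1 _ _ ⟨ζ w, hz⟩).val = υ w) ∧ CompComputes I ζ := by
  have cu2 : Computable (fun n : ℕ => n.unpair.2) :=
    Primrec.to_comp (Primrec.snd.comp Primrec.unpair)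
  choose ζ hz hev hgv using fun w =>
    (hm w).2 (y w) (y' w) (hy w) (hy' w) (υ w) (hυ w).choose (hυ w).choose_spec
  refine ⟨ζ, fun w => ⟨hz w, hgv w⟩, ?_⟩
  exact CompComputes.of_evalN (E := fun w => (m w).unpair.2)
    (N := fun w => Nat.pair (Y.α (y w)) (Nat.pair (Y.α (y' w)) (υ w)))
    (((CompComputes.of_computable _ cu2).comp tm).pair (ty.pair (ty'.pair tυ))) hev

/-- Applying the internal cell-data of a tracked family of Π-points. -/
theorem piTrack1_apply {W : Type*} {I : W → ℕ} {P : W → PiPt f g}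
    {y y' : W → Y.A} (hy : ∀ w, f.f0 (y w) = (P w).x) (hy' : ∀ w, f.f0 (y' w) = (P w).x)
    {υ : W → ℕ} (hυ : ∀ w, υ w ∈ Y.hom (y w) (y' w))
    (tP : CompComputes I (fun w => Nat.pair (X.α (P w).x) (P w).code))
    (ty : Tk Y I y) (ty' : Tk Y I y') (tυ : CompComputes I υ) :
    ∃ ζ : W → ℕ,
      (∀ w, ∃ hz : ζ w ∈ Z.hom ((P w).sec (y w) (hy w)) ((P w).sec (y' w) (hy' w)),
        (g.f1 _ _ ⟨ζ w, hz⟩).val = υ w) ∧ CompComputes I ζ := by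
  have cu2 : Computable (fun n : ℕ => n.unpair.2) :=
    Primrec.to_comp (Primrec.snd.comp Primrec.unpair)
  choose ζ hz hev hgv using fun w =>
    (P w).track1 (y w) (y' w) (hy w) (hy' w) (υ w) (hυ w)
  refine ⟨ζ, fun w => ⟨hz w, hgv w⟩, ?_⟩
  exact CompComputes.of_evalN (E := fun w => (P w).code.unpair.2)
    (N := fun w => Nat.pair (Y.α (y w)) (Nat.pair (Y.α (y' w)) (υ w)))
    (((CompComputes.of_computable _ cu2).comp tP.sndOfPair).pair
      (ty.pair (ty'.pair tυ))) hev

end Pi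


section PiObj

variable {X Y Z : EffObj} {f : Y ⟶ X} {g : Z ⟶ Y} (hf : EffFib f) (hg : EffFib g)

def piObj : EffObj where
  A := PiPt f g
  α P := Nat.pair (X.α P.x) P.code
  hom P Q := {m | PiCellMem f g P Q m}
  idc := by
    classical
    obtain ⟨ix, hix, tix⟩ := X.idc.toComputes
    have cu2 : Computable (fun n : ℕ => n.unpair.2) :=
      Primrec.to_comp (Primrec.snd.comp Primrec.unpair)
    have t0 := CompComputes.id (fun P : PiPt f g => Nat.pair (X.α P.x) P.code)
    refine (((tix.precomp (fun P : PiPt f g => P.x)).comp t0.fstOfPair).pair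
      ((CompComputes.of_computable _ cu2).comp t0.sndOfPair)).toFinds (fun P => ?_)
    refine ⟨by simpa using hix P.x, fun y y' h h' υ hυ hover => ?_⟩
    obtain ⟨ζ, hζ, hev, hgv⟩ := P.track1 y y' h h' υ hυ
    exact ⟨ζ, hζ, by simpa using hev, hgv⟩
  invc := by
    classical
    have cu1 : Computable (fun n : ℕ => n.unpair.1) :=
      Primrec.to_comp (Primrec.fst.comp Primrec.unpair)
    have cu2 : Computable (fun n : ℕ => n.unpair.2) :=
      Primrec.to_comp (Primrec.snd.comp Primrec.unpair)
    have t0 := CompComputes.id (fun t : {p : PiPt f g × PiPt f g × ℕ //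
      p.2.2 ∈ {m | PiCellMem f g p.1 p.2.1 m}} =>
      Nat.pair (Nat.pair (X.α t.1.1.x) t.1.1.code)
        (Nat.pair (Nat.pair (X.α t.1.2.1.x) t.1.2.1.code) t.1.2.2))
    have ξfam : Cells X _ (fun t : {p : PiPt f g × PiPt f g × ℕ //
        p.2.2 ∈ {m | PiCellMem f g p.1 p.2.1 m}} => t.1.1.x) (fun t => t.1.2.1.x) :=
      ⟨fun t => t.1.2.2.unpair.1, fun t => t.prop.1,
        (CompComputes.of_computable _ cu1).comp t0.sndOfPair.sndOfPair⟩
    obtain ⟨ξ', hξ', tξ'⟩ :=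
      ξfam.symm t0.fstOfPair.fstOfPair t0.sndOfPair.fstOfPair.fstOfPair
    -- the inner cell provider
    have t1 := CompComputes.id (fun t : PiIn
        (fun t : {p : PiPt f g × PiPt f g × ℕ //
          p.2.2 ∈ {m | PiCellMem f g p.1 p.2.1 m}} => t.1.2.1)
        (fun t => t.1.1) ξ' =>
      Nat.pair (Nat.pair (Nat.pair (X.α t.val.1.1.1.x) t.val.1.1.1.code)
          (Nat.pair (Nat.pair (X.α t.val.1.1.2.1.x) t.val.1.1.2.1.code) t.val.1.1.2.2))
        (Nat.pair (Y.α t.val.2.1) (Nat.pair (Y.α t.val.2.2.1) t.val.2.2.2)))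
    have ty := t1.sndOfPair.fstOfPair
    have ty' := t1.sndOfPair.sndOfPair.fstOfPair
    have tυ := t1.sndOfPair.sndOfPair.sndOfPair
    have hy : ∀ t : PiIn (f := f) (g := g)
        (fun t : {p : PiPt f g × PiPt f g × ℕ //
          p.2.2 ∈ {m | PiCellMem f g p.1 p.2.1 m}} => t.1.2.1)
        (fun t => t.1.1) ξ', f.f0 t.val.2.1 = t.val.1.1.2.1.x :=
      fun t => t.prop.choose
    have hy' : ∀ t : PiIn (f := f) (g := g)
        (fun t : {p : PiPt f g × PiPt f g × ℕ //
          p.2.2 ∈ {m | PiCellMem f g p.1 p.2.1 m}} => t.1.2.1)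
        (fun t => t.1.1) ξ', f.f0 t.val.2.2.1 = t.val.1.1.1.x :=
      fun t => t.prop.choose_spec.choose
    have hυm : ∀ t : PiIn (f := f) (g := g)
        (fun t : {p : PiPt f g × PiPt f g × ℕ //
          p.2.2 ∈ {m | PiCellMem f g p.1 p.2.1 m}} => t.1.2.1)
        (fun t => t.1.1) ξ', t.val.2.2.2 ∈ Y.hom t.val.2.1 t.val.2.2.1 :=
      fun t => t.prop.choose_spec.choose_spec.choose
    have υcells : Cells Y _ (fun t : PiIn (f := f) (g := g)
        (fun t : {p : PiPt f g × PiPt f g × ℕ //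
          p.2.2 ∈ {m | PiCellMem f g p.1 p.2.1 m}} => t.1.2.1)
        (fun t => t.1.1) ξ' => t.val.2.1) (fun t => t.val.2.2.1) :=
      ⟨fun t => t.val.2.2.2, hυm, tυ⟩
    have υinv := υcells.symm ty ty'
    obtain ⟨u0, hu0, tu0⟩ := hf.fix υinv ty' ty
      (π := fun t => t.val.1.1.2.2.unpair.1)
      (fun t => mem_hom_cast (hy' t).symm (hy t).symm t.val.1.prop.1)
      ((CompComputes.of_computable _ cu1).comp t1.fstOfPair.sndOfPair.sndOfPair)
    obtain ⟨z0, hz0, tz0⟩ := piCell_apply (P := fun t => t.val.1.1.1)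
      (Q := fun t => t.val.1.1.2.1) (m := fun t => t.val.1.1.2.2)
      (fun t => t.val.1.prop) t1.fstOfPair.sndOfPair.sndOfPair
      (y := fun t => t.val.2.2.1) (y' := fun t => t.val.2.1) hy' hy
      (υ := u0) hu0 (by exact ty') (by exact ty) tu0
    have z0cells : Cells Z _ _ _ := ⟨z0, fun t => (hz0 t).choose, tz0⟩
    have tsec1 := piSec_tk (P := fun t => t.val.1.1.1) hy'
      t1.fstOfPair.fstOfPair ty'
    have tsec2 := piSec_tk (P := fun t => t.val.1.1.2.1) hy
      t1.fstOfPair.sndOfPair.fstOfPair ty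
    have zinv := z0cells.symm tsec1 tsec2
    obtain ⟨zf, hzf, tzf⟩ := hg.fix zinv tsec2 tsec1
      (π := fun t => t.val.2.2.2)
      (fun t => mem_hom_cast (t.val.1.1.2.1.sec_over _ (hy t)).symm
        (t.val.1.1.1.sec_over _ (hy' t)).symm (hυm t)) tυ
    obtain ⟨m', hm', -, tm'⟩ := pi_cells hξ' tξ' zf (fun t h h' => hzf t) tzf
    exact tm'.toFinds hm'
  compc := by
    classical
    have cu1 : Computable (fun n : ℕ => n.unpair.1) :=
      Primrec.to_comp (Primrec.fst.comp Primrec.unpair)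
    have t0 := CompComputes.id (fun t : {p : PiPt f g × PiPt f g × PiPt f g × ℕ × ℕ //
      p.2.2.2.1 ∈ {m | PiCellMem f g p.1 p.2.1 m} ∧
      p.2.2.2.2 ∈ {m | PiCellMem f g p.2.1 p.2.2.1 m}} =>
      Nat.pair (Nat.pair (X.α t.1.1.x) t.1.1.code)
        (Nat.pair (Nat.pair (X.α t.1.2.1.x) t.1.2.1.code)
          (Nat.pair (Nat.pair (X.α t.1.2.2.1.x) t.1.2.2.1.code)
            (Nat.pair t.1.2.2.2.1 t.1.2.2.2.2))))
    have ξ1fam : Cells X _ (fun t : {p : PiPt f g × PiPt f g × PiPt f g × ℕ × ℕ //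
        p.2.2.2.1 ∈ {m | PiCellMem f g p.1 p.2.1 m} ∧
        p.2.2.2.2 ∈ {m | PiCellMem f g p.2.1 p.2.2.1 m}} => t.1.1.x)
        (fun t => t.1.2.1.x) :=
      ⟨fun t => t.1.2.2.2.1.unpair.1, fun t => t.prop.1.1,
        (CompComputes.of_computable _ cu1).comp
          t0.sndOfPair.sndOfPair.sndOfPair.fstOfPair⟩
    have ξ2fam : Cells X _ (fun t : {p : PiPt f g × PiPt f g × PiPt f g × ℕ × ℕ //
        p.2.2.2.1 ∈ {m | PiCellMem f g p.1 p.2.1 m} ∧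
        p.2.2.2.2 ∈ {m | PiCellMem f g p.2.1 p.2.2.1 m}} => t.1.2.1.x)
        (fun t => t.1.2.2.1.x) :=
      ⟨fun t => t.1.2.2.2.2.unpair.1, fun t => t.prop.2.1,
        (CompComputes.of_computable _ cu1).comp
          t0.sndOfPair.sndOfPair.sndOfPair.sndOfPair⟩
    obtain ⟨ξ, hξ, tξ⟩ := ξ1fam.trans t0.fstOfPair.fstOfPair
      t0.sndOfPair.fstOfPair.fstOfPair t0.sndOfPair.sndOfPair.fstOfPair.fstOfPair ξ2fam
    have t1 := CompComputes.id (fun t : PiIn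
        (fun t : {p : PiPt f g × PiPt f g × PiPt f g × ℕ × ℕ //
          p.2.2.2.1 ∈ {m | PiCellMem f g p.1 p.2.1 m} ∧
          p.2.2.2.2 ∈ {m | PiCellMem f g p.2.1 p.2.2.1 m}} => t.1.1)
        (fun t => t.1.2.2.1) ξ =>
      Nat.pair (Nat.pair (Nat.pair (X.α t.val.1.1.1.x) t.val.1.1.1.code)
          (Nat.pair (Nat.pair (X.α t.val.1.1.2.1.x) t.val.1.1.2.1.code)
            (Nat.pair (Nat.pair (X.α t.val.1.1.2.2.1.x) t.val.1.1.2.2.1.code)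
              (Nat.pair t.val.1.1.2.2.2.1 t.val.1.1.2.2.2.2))))
        (Nat.pair (Y.α t.val.2.1) (Nat.pair (Y.α t.val.2.2.1) t.val.2.2.2)))
    have ty := t1.sndOfPair.fstOfPair
    have ty'' := t1.sndOfPair.sndOfPair.fstOfPair
    have tυ := t1.sndOfPair.sndOfPair.sndOfPair
    set TT := PiIn
        (fun t : {p : PiPt f g × PiPt f g × PiPt f g × ℕ × ℕ //
          p.2.2.2.1 ∈ {m | PiCellMem f g p.1 p.2.1 m} ∧
          p.2.2.2.2 ∈ {m | PiCellMem f g p.2.1 p.2.2.1 m}} => t.1.1)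
        (fun t => t.1.2.2.1) ξ with hTT
    have hy : ∀ t : TT, f.f0 t.val.2.1 = t.val.1.1.1.x := fun t => t.prop.choose
    have hy'' : ∀ t : TT, f.f0 t.val.2.2.1 = t.val.1.1.2.2.1.x :=
      fun t => t.prop.choose_spec.choose
    have hυm : ∀ t : TT, t.val.2.2.2 ∈ Y.hom t.val.2.1 t.val.2.2.1 :=
      fun t => t.prop.choose_spec.choose_spec.choose
    -- lift the first cell downstairs
    obtain ⟨y₁, ey₁, ty₁, lam1⟩ := hf.lift (u := fun t : TT => t.val.2.1)
      (a := fun t => t.val.1.1.2.1.x) (π := fun t => t.val.1.1.2.2.2.1.unpair.1)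
      (fun t => mem_hom_cast (hy t).symm rfl t.val.1.prop.1.1) ty
      (t1.fstOfPair.sndOfPair.fstOfPair.fstOfPair)
      ((CompComputes.of_computable _ cu1).comp
        t1.fstOfPair.sndOfPair.sndOfPair.sndOfPair.fstOfPair)
    have lam1c := lam1.toCells
    have υcells : Cells Y _ (fun t : TT => t.val.2.1) (fun t => t.val.2.2.1) :=
      ⟨fun t => t.val.2.2.2, hυm, tυ⟩
    have μ₀ := (lam1c.symm ty ty₁).trans ty₁ ty ty'' υcells
    obtain ⟨mu, hmu, tmu⟩ := hf.fix μ₀ ty₁ ty''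
      (π := fun t => t.val.1.1.2.2.2.2.unpair.1)
      (fun t => mem_hom_cast (ey₁ t).symm (hy'' t).symm t.val.1.prop.2.1)
      ((CompComputes.of_computable _ cu1).comp
        t1.fstOfPair.sndOfPair.sndOfPair.sndOfPair.sndOfPair)
    obtain ⟨lc, hlc, tlc⟩ := id lam1
    obtain ⟨z1, hz1, tz1⟩ := piCell_apply (P := fun t : TT => t.val.1.1.1)
      (Q := fun t => t.val.1.1.2.1) (m := fun t => t.val.1.1.2.2.2.1)
      (fun t => t.val.1.prop.1)
      (t1.fstOfPair.sndOfPair.sndOfPair.sndOfPair.fstOfPair)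
      (y := fun t => t.val.2.1) (y' := y₁) hy ey₁ (υ := lc) hlc ty ty₁ tlc
    obtain ⟨z2, hz2, tz2⟩ := piCell_apply (P := fun t : TT => t.val.1.1.2.1)
      (Q := fun t => t.val.1.1.2.2.1) (m := fun t => t.val.1.1.2.2.2.2)
      (fun t => t.val.1.prop.2)
      (t1.fstOfPair.sndOfPair.sndOfPair.sndOfPair.sndOfPair)
      (y := y₁) (y' := fun t => t.val.2.2.1) ey₁ hy'' (υ := mu) hmu ty₁ ty'' tmu
    have tsec1 := piSec_tk (P := fun t : TT => t.val.1.1.1) hy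
      t1.fstOfPair.fstOfPair ty
    have tsec2 := piSec_tk (P := fun t : TT => t.val.1.1.2.1) ey₁
      t1.fstOfPair.sndOfPair.fstOfPair ty₁
    have tsec3 := piSec_tk (P := fun t : TT => t.val.1.1.2.2.1) hy''
      t1.fstOfPair.sndOfPair.sndOfPair.fstOfPair ty''
    have zcomp := (Cells.trans tsec1 tsec2 tsec3
      ⟨z1, fun t => (hz1 t).choose, tz1⟩ ⟨z2, fun t => (hz2 t).choose, tz2⟩ :
      Cells Z _ _ _)
    obtain ⟨zf, hzf, tzf⟩ := hg.fix zcomp tsec1 tsec3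
      (π := fun t => t.val.2.2.2)
      (fun t => mem_hom_cast (t.val.1.1.1.sec_over _ (hy t)).symm
        (t.val.1.1.2.2.1.sec_over _ (hy'' t)).symm (hυm t)) tυ
    obtain ⟨m', hm', -, tm'⟩ := pi_cells hξ tξ zf (fun t h h' => hzf t) tzf
    exact tm'.toFinds hm'

def piP : piObj hf hg ⟶ X where
  f0 := fun P : PiPt f g => P.x
  f1 := fun P Q m =>
    ⟨m.val.unpair.1, (show PiCellMem f g P Q m.val from m.prop).1⟩
  tr0 := (CompComputes.id _).fstOfPair
  tr1 := by
    have cu : Computable (fun n : ℕ => n.unpair.2.unpair.2.unpair.1) :=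
      Primrec.to_comp ((Primrec.fst.comp Primrec.unpair).comp
        ((Primrec.snd.comp Primrec.unpair).comp (Primrec.snd.comp Primrec.unpair)))
    exact (CompComputes.of_computable _ cu).congr' (fun _ => rfl) (fun x => by simp)

end PiObj


section PiFib

variable {X Y Z : EffObj} {f : Y ⟶ X} {g : Z ⟶ Y} (hf : EffFib f) (hg : EffFib g)

theorem piP_fib : EffFib (piP hf hg) := by
  classical
  have cu1 : Computable (fun n : ℕ => n.unpair.1) :=
    Primrec.to_comp (Primrec.fst.comp Primrec.unpair)
  have cu2 : Computable (fun n : ℕ => n.unpair.2) :=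
    Primrec.to_comp (Primrec.snd.comp Primrec.unpair)
  -- ============ condition (i) ============
  set S := {p : PiPt f g × X.A × ℕ // p.2.2 ∈ X.hom p.1.x p.2.1} with hS
  have t0 := CompComputes.id (fun s : S =>
    Nat.pair (Nat.pair (X.α s.1.1.x) s.1.1.code) (Nat.pair (X.α s.1.2.1) s.1.2.2))
  have tξ := t0.sndOfPair.sndOfPair
  have ξcells : Cells X _ (fun s : S => s.1.1.x) (fun s => s.1.2.1) :=
    ⟨fun s => s.1.2.2, fun s => s.prop, tξ⟩
  obtain ⟨ξi, hξi, tξi⟩ := ξcells.symm t0.fstOfPair.fstOfPair t0.sndOfPair.fstOfPair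
  -- the new section, over the index of fibre points
  set V := {v : S × Y.A // f.f0 v.2 = v.1.1.2.1} with hV
  have tv0 := CompComputes.id (fun v : V =>
    Nat.pair (Nat.pair (Nat.pair (X.α v.1.1.1.1.x) v.1.1.1.1.code)
      (Nat.pair (X.α v.1.1.1.2.1) v.1.1.1.2.2)) (Y.α v.1.2))
  obtain ⟨y₀, ey₀, ty₀, mu⟩ := hf.lift (u := fun v : V => v.1.2)
    (a := fun v => v.1.1.1.1.x) (π := fun v => ξi v.1.1)
    (fun v => mem_hom_cast v.prop.symm rfl (hξi v.1.1)) tv0.sndOfPair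
    (tv0.fstOfPair.fstOfPair.fstOfPair) ((tξi.precomp (fun v : V => v.1.1)).comp tv0.fstOfPair)
  have tsec₀ := piSec_tk (P := fun v : V => v.1.1.1.1) ey₀ tv0.fstOfPair.fstOfPair ty₀
  have muinv := (mu.toCells.symm tv0.sndOfPair ty₀ :
    Cells Y _ y₀ (fun v : V => v.1.2))
  obtain ⟨mi, hmi, tmi⟩ := muinv
  obtain ⟨z', ez', tz', kap⟩ := hg.lift
    (u := fun v : V => v.1.1.1.1.sec (y₀ v) (ey₀ v)) (a := fun v => v.1.2) (π := mi)
    (fun v => mem_hom_cast (v.1.1.1.1.sec_over (y₀ v) (ey₀ v)).symm rfl (hmi v))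
    tsec₀ tv0.sndOfPair tmi
  obtain ⟨K₁, hK₁c, hK₁⟩ := tz'.curryCode
  -- cell data of the new point
  set V2 := {u : S × Y.A × Y.A × ℕ // f.f0 u.2.1 = u.1.1.2.1 ∧
    f.f0 u.2.2.1 = u.1.1.2.1 ∧ u.2.2.2 ∈ Y.hom u.2.1 u.2.2.1} with hV2
  have tw0 := CompComputes.id (fun u : V2 =>
    Nat.pair (Nat.pair (Nat.pair (X.α u.1.1.1.1.x) u.1.1.1.1.code)
      (Nat.pair (X.α u.1.1.1.2.1) u.1.1.1.2.2))
      (Nat.pair (Y.α u.1.2.1) (Nat.pair (Y.α u.1.2.2.1) u.1.2.2.2)))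
  set va : V2 → V := fun u => ⟨(u.1.1, u.1.2.1), u.prop.1⟩ with hva
  set vb : V2 → V := fun u => ⟨(u.1.1, u.1.2.2.1), u.prop.2.1⟩ with hvb
  have tva : CompComputes (fun u : V2 =>
      Nat.pair (Nat.pair (Nat.pair (X.α u.1.1.1.1.x) u.1.1.1.1.code)
        (Nat.pair (X.α u.1.1.1.2.1) u.1.1.1.2.2))
        (Nat.pair (Y.α u.1.2.1) (Nat.pair (Y.α u.1.2.2.1) u.1.2.2.2)))
      (fun u => Nat.pair (Nat.pair (Nat.pair (X.α (va u).1.1.1.1.x) (va u).1.1.1.1.code)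
        (Nat.pair (X.α (va u).1.1.1.2.1) (va u).1.1.1.2.2)) (Y.α (va u).1.2)) :=
    tw0.fstOfPair.pair tw0.sndOfPair.fstOfPair
  have tvb : CompComputes (fun u : V2 =>
      Nat.pair (Nat.pair (Nat.pair (X.α u.1.1.1.1.x) u.1.1.1.1.code)
        (Nat.pair (X.α u.1.1.1.2.1) u.1.1.1.2.2))
        (Nat.pair (Y.α u.1.2.1) (Nat.pair (Y.α u.1.2.2.1) u.1.2.2.2)))
      (fun u => Nat.pair (Nat.pair (Nat.pair (X.α (vb u).1.1.1.1.x) (vb u).1.1.1.1.code)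
        (Nat.pair (X.α (vb u).1.1.1.2.1) (vb u).1.1.1.2.2)) (Y.α (vb u).1.2)) :=
    tw0.fstOfPair.pair tw0.sndOfPair.sndOfPair.fstOfPair
  have ty₀a : Tk Y _ (fun u : V2 => y₀ (va u)) := (ty₀.precomp va).comp tva
  have ty₀b : Tk Y _ (fun u : V2 => y₀ (vb u)) := (ty₀.precomp vb).comp tvb
  have mua := (mu.toCells.precomp va).chase tva
  have mub := (mu.toCells.precomp vb).chase tvb
  have υ2cells : Cells Y _ (fun u : V2 => u.1.2.1) (fun u => u.1.2.2.1) :=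
    ⟨fun u => u.1.2.2.2, fun u => u.prop.2.2, tw0.sndOfPair.sndOfPair.sndOfPair⟩
  have υ₀ := ((mua.symm tw0.sndOfPair.fstOfPair ty₀a).trans ty₀a
    tw0.sndOfPair.fstOfPair tw0.sndOfPair.sndOfPair.fstOfPair υ2cells).trans
    ty₀a tw0.sndOfPair.sndOfPair.fstOfPair ty₀b mub
  obtain ⟨uv, huv, tuv⟩ := υ₀
  obtain ⟨zm, hzm, tzm⟩ := piTrack1_apply (P := fun u : V2 => u.1.1.1.1)
    (y := fun u => y₀ (va u)) (y' := fun u => y₀ (vb u))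
    (fun u => ey₀ (va u)) (fun u => ey₀ (vb u)) (υ := uv) huv
    tw0.fstOfPair.fstOfPair ty₀a ty₀b tuv
  have tseca := (tsec₀.precomp va).comp tva
  have tsecb := (tsec₀.precomp vb).comp tvb
  have tz'a : Tk Z _ (fun u : V2 => z' (va u)) := (tz'.precomp va).comp tva
  have tz'b : Tk Z _ (fun u : V2 => z' (vb u)) := (tz'.precomp vb).comp tvb
  have kapa := ((kap.toCells.precomp va).chase tva :
    Cells Z _ (fun u : V2 => (va u).1.1.1.1.sec (y₀ (va u)) (ey₀ (va u)))
      (fun u => z' (va u)))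
  have kapb := (kap.toCells.precomp vb).chase tvb
  have zchain := ((kapa.symm tseca tz'a).trans tz'a tseca tsecb
    ⟨zm, fun u => (hzm u).choose, tzm⟩).trans tz'a tsecb tz'b kapb
  obtain ⟨zf2, hzf2, tzf2⟩ := hg.fix zchain tz'a tz'b
    (π := fun u => u.1.2.2.2)
    (fun u => mem_hom_cast (ez' (va u)).symm (ez' (vb u)).symm u.prop.2.2)
    tw0.sndOfPair.sndOfPair.sndOfPair
  obtain ⟨K₂, hK₂c, hK₂⟩ := tzf2.curryCode
  -- assemble the new Π-point over the target
  set P' : S → PiPt f g := fun s =>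
    { x := s.1.2.1
      sec := fun y h => z' ⟨(s, y), h⟩
      code := Nat.pair
        (K₁ (Nat.pair (Nat.pair (X.α s.1.1.x) s.1.1.code) (Nat.pair (X.α s.1.2.1) s.1.2.2)))
        (K₂ (Nat.pair (Nat.pair (X.α s.1.1.x) s.1.1.code) (Nat.pair (X.α s.1.2.1) s.1.2.2)))
      sec_over := fun y h => ez' ⟨(s, y), h⟩
      track0 := fun y h => by simpa using hK₁ ⟨(s, y), h⟩
      track1 := fun y y' h h' υ hυ => by
        refine ⟨zf2 ⟨(s, y, y', υ), h, h', hυ⟩, (hzf2 ⟨(s, y, y', υ), h, h', hυ⟩).choose,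
          ?_, (hzf2 ⟨(s, y, y', υ), h, h', hυ⟩).choose_spec⟩
        simpa using hK₂ ⟨(s, y, y', υ), h, h', hυ⟩ }
    with hP'
  -- the connecting Π-cell from s.1.1 to P' s
  set V3 := PiIn (f := f) (g := g) (fun s : S => s.1.1) P' (fun s => s.1.2.2) with hV3
  have tq0 := CompComputes.id (fun t : V3 =>
    Nat.pair (Nat.pair (Nat.pair (X.α t.val.1.1.1.x) t.val.1.1.1.code)
      (Nat.pair (X.α t.val.1.1.2.1) t.val.1.1.2.2))
      (Nat.pair (Y.α t.val.2.1) (Nat.pair (Y.α t.val.2.2.1) t.val.2.2.2)))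
  have hy3 : ∀ t : V3, f.f0 t.val.2.1 = t.val.1.1.1.x := fun t => t.prop.choose
  have hy3' : ∀ t : V3, f.f0 t.val.2.2.1 = t.val.1.1.2.1 := fun t =>
    t.prop.choose_spec.choose
  have hυ3 : ∀ t : V3, t.val.2.2.2 ∈ Y.hom t.val.2.1 t.val.2.2.1 := fun t =>
    t.prop.choose_spec.choose_spec.choose
  set vc : V3 → V := fun t => ⟨(t.val.1, t.val.2.2.1), hy3' t⟩ with hvc
  have tvc : CompComputes (fun t : V3 =>
      Nat.pair (Nat.pair (Nat.pair (X.α t.val.1.1.1.x) t.val.1.1.1.code)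
        (Nat.pair (X.α t.val.1.1.2.1) t.val.1.1.2.2))
        (Nat.pair (Y.α t.val.2.1) (Nat.pair (Y.α t.val.2.2.1) t.val.2.2.2)))
      (fun t => Nat.pair (Nat.pair (Nat.pair (X.α (vc t).1.1.1.1.x) (vc t).1.1.1.1.code)
        (Nat.pair (X.α (vc t).1.1.1.2.1) (vc t).1.1.1.2.2)) (Y.α (vc t).1.2)) :=
    tq0.fstOfPair.pair tq0.sndOfPair.sndOfPair.fstOfPair
  have ty3 := tq0.sndOfPair.fstOfPair
  have ty3' := tq0.sndOfPair.sndOfPair.fstOfPair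
  have ty₀c : Tk Y _ (fun t : V3 => y₀ (vc t)) := (ty₀.precomp vc).comp tvc
  have υ3cells : Cells Y _ (fun t : V3 => t.val.2.1) (fun t => t.val.2.2.1) :=
    ⟨fun t => t.val.2.2.2, hυ3, tq0.sndOfPair.sndOfPair.sndOfPair⟩
  have muc := (mu.toCells.precomp vc).chase tvc
  have τcells := υ3cells.trans ty3 ty3' ty₀c muc
  obtain ⟨tauv, htau, ttau⟩ := τcells
  obtain ⟨zm3, hzm3, tzm3⟩ := piTrack1_apply (P := fun t : V3 => t.val.1.1.1)
    (y := fun t => t.val.2.1) (y' := fun t => y₀ (vc t)) hy3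
    (fun t => ey₀ (vc t)) (υ := tauv) htau tq0.fstOfPair.fstOfPair ty3 ty₀c ttau
  have tsec3 := piSec_tk (P := fun t : V3 => t.val.1.1.1) hy3
    tq0.fstOfPair.fstOfPair ty3
  have tsec₀c := (tsec₀.precomp vc).comp tvc
  have tz'c : Tk Z _ (fun t : V3 => z' (vc t)) := (tz'.precomp vc).comp tvc
  have kapc := (kap.toCells.precomp vc).chase tvc
  have zchain3 := (Cells.trans tsec3 tsec₀c tz'c
    ⟨zm3, fun t => (hzm3 t).choose, tzm3⟩ kapc :
    Cells Z _ (fun t : V3 => t.val.1.1.1.sec t.val.2.1 (hy3 t)) (fun t => z' (vc t)))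
  obtain ⟨zf3, hzf3, tzf3⟩ := hg.fix zchain3 tsec3 tz'c
    (π := fun t => t.val.2.2.2)
    (fun t => mem_hom_cast (t.val.1.1.1.sec_over _ (hy3 t)).symm
      (ez' (vc t)).symm (hυ3 t))
    tq0.sndOfPair.sndOfPair.sndOfPair
  obtain ⟨mS, hmS, hmS1, tmS⟩ := pi_cells (P := fun s : S => s.1.1) (Q := P')
    (ξ := fun s => s.1.2.2) (fun s => s.prop) tξ zf3 (fun t h h' => hzf3 t) tzf3
  -- ============ condition (ii) ============
  set S2 := {p : PiPt f g × PiPt f g × ℕ × ℕ //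
    p.2.2.1 ∈ {m | PiCellMem f g p.1 p.2.1 m} ∧ p.2.2.2 ∈ X.hom p.1.x p.2.1.x} with hS2
  have r0 := CompComputes.id (fun s : S2 =>
    Nat.pair (Nat.pair (X.α s.1.1.x) s.1.1.code)
      (Nat.pair (Nat.pair (X.α s.1.2.1.x) s.1.2.1.code)
        (Nat.pair s.1.2.2.1 s.1.2.2.2)))
  set V4 := PiIn (f := f) (g := g) (fun s : S2 => s.1.1) (fun s => s.1.2.1)
    (fun s => s.1.2.2.2) with hV4
  have r1 := CompComputes.id (fun t : V4 =>
    Nat.pair (Nat.pair (Nat.pair (X.α t.val.1.1.1.x) t.val.1.1.1.code)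
      (Nat.pair (Nat.pair (X.α t.val.1.1.2.1.x) t.val.1.1.2.1.code)
        (Nat.pair t.val.1.1.2.2.1 t.val.1.1.2.2.2)))
      (Nat.pair (Y.α t.val.2.1) (Nat.pair (Y.α t.val.2.2.1) t.val.2.2.2)))
  have hy4 : ∀ t : V4, f.f0 t.val.2.1 = t.val.1.1.1.x := fun t => t.prop.choose
  have hy4' : ∀ t : V4, f.f0 t.val.2.2.1 = t.val.1.1.2.1.x := fun t =>
    t.prop.choose_spec.choose
  have hυ4 : ∀ t : V4, t.val.2.2.2 ∈ Y.hom t.val.2.1 t.val.2.2.1 := fun t =>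
    t.prop.choose_spec.choose_spec.choose
  have ty4 := r1.sndOfPair.fstOfPair
  have ty4' := r1.sndOfPair.sndOfPair.fstOfPair
  have υ4cells : Cells Y _ (fun t : V4 => t.val.2.1) (fun t => t.val.2.2.1) :=
    ⟨fun t => t.val.2.2.2, hυ4, r1.sndOfPair.sndOfPair.sndOfPair⟩
  obtain ⟨u4, hu4, tu4⟩ := hf.fix υ4cells ty4 ty4'
    (π := fun t => t.val.1.1.2.2.1.unpair.1)
    (fun t => mem_hom_cast (hy4 t).symm (hy4' t).symm t.val.1.prop.1.1)
    ((CompComputes.of_computable _ cu1).comp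
      r1.fstOfPair.sndOfPair.sndOfPair.fstOfPair)
  obtain ⟨z4, hz4, tz4⟩ := piCell_apply (P := fun t : V4 => t.val.1.1.1)
    (Q := fun t => t.val.1.1.2.1) (m := fun t => t.val.1.1.2.2.1)
    (fun t => t.val.1.prop.1) r1.fstOfPair.sndOfPair.sndOfPair.fstOfPair
    (y := fun t => t.val.2.1) (y' := fun t => t.val.2.2.1) hy4 hy4'
    (υ := u4) hu4 ty4 ty4' tu4
  have tsec4 := piSec_tk (P := fun t : V4 => t.val.1.1.1) hy4
    r1.fstOfPair.fstOfPair ty4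
  have tsec4' := piSec_tk (P := fun t : V4 => t.val.1.1.2.1) hy4'
    r1.fstOfPair.sndOfPair.fstOfPair ty4'
  obtain ⟨zf4, hzf4, tzf4⟩ := hg.fix ⟨z4, fun t => (hz4 t).choose, tz4⟩ tsec4 tsec4'
    (π := fun t => t.val.2.2.2)
    (fun t => mem_hom_cast (t.val.1.1.1.sec_over _ (hy4 t)).symm
      (t.val.1.1.2.1.sec_over _ (hy4' t)).symm (hυ4 t))
    r1.sndOfPair.sndOfPair.sndOfPair
  obtain ⟨m4, hm4, hm41, tm4⟩ := pi_cells (P := fun s : S2 => s.1.1)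
    (Q := fun s => s.1.2.1) (ξ := fun s => s.1.2.2.2)
    (fun s => s.prop.2) r0.sndOfPair.sndOfPair.sndOfPair zf4
    (fun t h h' => hzf4 t) tzf4
  -- ============ assemble ============
  refine effFib_intro (piP hf hg) (fun s => P' s) (fun s => rfl) ?_ ?_ ?_
  · exact (t0.sndOfPair.fstOfPair).pair
      ((CompComputes.of_computable K₁ hK₁c).pair (CompComputes.of_computable K₂ hK₂c))
  · refine ⟨mS, fun s => ?_, tmS⟩
    refine ⟨hmS s, ?_⟩
    show (mS s).unpair.1 = s.1.2.2
    exact hmS1 s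
  · refine ⟨fun s => m4 ⟨(s.1.1, s.1.2.1, s.1.2.2.1, s.1.2.2.2), s.prop.1, s.prop.2⟩,
      fun s => ?_, ?_⟩
    · refine ⟨hm4 ⟨(s.1.1, s.1.2.1, s.1.2.2.1, s.1.2.2.2), s.prop.1, s.prop.2⟩, ?_⟩
      show (m4 _).unpair.1 = s.1.2.2.2
      exact hm41 _
    · exact tm4.precomp (fun s : {p : (piObj hf hg).A × (piObj hf hg).A × ℕ × ℕ //
        p.2.2.1 ∈ (piObj hf hg).hom p.1 p.2.1 ∧
        p.2.2.2 ∈ X.hom ((piP hf hg).f0 p.1) ((piP hf hg).f0 p.2.1)} =>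
        ⟨(s.1.1, s.1.2.1, s.1.2.2.1, s.1.2.2.2), s.prop.1, s.prop.2⟩)

end PiFib


section PiCounit

variable {X Y Z : EffObj} {f : Y ⟶ X} {g : Z ⟶ Y} (hf : EffFib f) (hg : EffFib g)

theorem eps_spec (w w' : pbA (piP hf hg) f) (n : ℕ)
    (hn : n ∈ pbHom (piP hf hg) f w w') :
    ∃ (ζ : ℕ) (hζ : ζ ∈ Z.hom (PiPt.sec w.val.1 w.val.2 w.prop.symm)
        (PiPt.sec w'.val.1 w'.val.2 w'.prop.symm)),
      ζ ∈ evalN n.unpair.1.unpair.2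
        (Nat.pair (Y.α w.val.2) (Nat.pair (Y.α w'.val.2) n.unpair.2)) ∧
      (g.f1 _ _ ⟨ζ, hζ⟩).val = n.unpair.2 := by
  have hP : PiCellMem f g w.val.1 w'.val.1 n.unpair.1 := hn.choose
  exact hP.2 w.val.2 w'.val.2 w.prop.symm w'.prop.symm n.unpair.2
    hn.choose_spec.choose hn.choose_spec.choose_spec.symm

set_option maxHeartbeats 1000000 in
noncomputable def piEps : pbObj (piP hf hg) f hf ⟶ Z where
  f0 := fun w => PiPt.sec w.val.1 w.val.2 w.prop.symm
  f1 := fun w w' n => ⟨(eps_spec hf hg w w' n.val n.prop).choose,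
    (eps_spec hf hg w w' n.val n.prop).choose_spec.choose⟩
  tr0 := by
    have cu1 : Computable (fun n : ℕ => n.unpair.1) :=
      Primrec.to_comp (Primrec.fst.comp Primrec.unpair)
    have t0 := CompComputes.id (fun w : pbA (piP hf hg) f =>
      Nat.pair (Nat.pair (X.α (PiPt.x w.val.1)) (PiPt.code w.val.1)) (Y.α w.val.2))
    have base : CompComputes (fun w : pbA (piP hf hg) f =>
        Nat.pair (Nat.pair (X.α (PiPt.x w.val.1)) (PiPt.code w.val.1)) (Y.α w.val.2))
        (fun w => Z.α (PiPt.sec w.val.1 w.val.2 w.prop.symm)) :=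
      CompComputes.of_evalN (E := fun w => (PiPt.code w.val.1).unpair.1)
        (N := fun w => Y.α w.val.2)
        (((CompComputes.of_computable _ cu1).comp t0.fstOfPair.sndOfPair).pair
          t0.sndOfPair)
        (fun w => PiPt.track0 w.val.1 w.val.2 w.prop.symm)
    exact base.congr' (fun _ => rfl) (fun _ => rfl)
  tr1 := by
    have cu1 : Computable (fun n : ℕ => n.unpair.1) :=
      Primrec.to_comp (Primrec.fst.comp Primrec.unpair)
    have cu2 : Computable (fun n : ℕ => n.unpair.2) :=
      Primrec.to_comp (Primrec.snd.comp Primrec.unpair)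
    have t0 := CompComputes.id
      (fun x : (w : pbA (piP hf hg) f) × (w' : pbA (piP hf hg) f) ×
          (pbObj (piP hf hg) f hf).Cell w w' =>
        Nat.pair (Nat.pair (Nat.pair (X.α (PiPt.x x.1.val.1)) (PiPt.code x.1.val.1))
          (Y.α x.1.val.2))
          (Nat.pair (Nat.pair (Nat.pair (X.α (PiPt.x x.2.1.val.1))
            (PiPt.code x.2.1.val.1)) (Y.α x.2.1.val.2)) x.2.2.val))
    have base : CompComputes
        (fun x : (w : pbA (piP hf hg) f) × (w' : pbA (piP hf hg) f) ×
            (pbObj (piP hf hg) f hf).Cell w w' =>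
          Nat.pair (Nat.pair (Nat.pair (X.α (PiPt.x x.1.val.1)) (PiPt.code x.1.val.1))
            (Y.α x.1.val.2))
            (Nat.pair (Nat.pair (Nat.pair (X.α (PiPt.x x.2.1.val.1))
              (PiPt.code x.2.1.val.1)) (Y.α x.2.1.val.2)) x.2.2.val))
        (fun x => (eps_spec hf hg x.1 x.2.1 x.2.2.val x.2.2.prop).choose) :=
      CompComputes.of_evalN
      (E := fun x => x.2.2.val.unpair.1.unpair.2)
      (N := fun x => Nat.pair (Y.α x.1.val.2)
        (Nat.pair (Y.α x.2.1.val.2) x.2.2.val.unpair.2))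
      (((CompComputes.of_computable _ cu2).comp
        ((CompComputes.of_computable _ cu1).comp t0.sndOfPair.sndOfPair)).pair
        ((t0.fstOfPair.sndOfPair).pair ((t0.sndOfPair.fstOfPair.sndOfPair).pair
          ((CompComputes.of_computable _ cu2).comp t0.sndOfPair.sndOfPair))))
      (fun x => (eps_spec hf hg x.1 x.2.1 x.2.2.val x.2.2.prop).choose_spec.choose_spec.1)
    exact base.congr' (fun _ => rfl) (fun _ => rfl)

theorem piEps_over : piEps hf hg ≫ g = pbP2 (piP hf hg) f hf := by
  refine EffHom.ext' (fun w => PiPt.sec_over w.val.1 w.val.2 w.prop.symm)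
    (fun w w' n => ?_)
  exact (eps_spec hf hg w w' n.val n.prop).choose_spec.choose_spec.2

/-- The lift part of the universal property of the Π-object. -/
theorem piLift {Ao Ah : EffObj} (hh : Ao ⟶ X) (v₁ : Ah ⟶ Ao) (v₂ : Ah ⟶ Y)
    (hPB : IsPB v₁ v₂ hh f) (m : Ah ⟶ Z) (hm : m ≫ g = v₂) :
    ∃ (M : Ao ⟶ piObj hf hg) (τ : pbObj hh f hf ⟶ Ah),
      τ ≫ v₁ = pbP1 hh f hf ∧ τ ≫ v₂ = pbP2 hh f hf ∧
      (∃ ψ : Ah ⟶ pbObj hh f hf, ψ ≫ τ = 𝟙 Ah ∧ τ ≫ ψ = 𝟙 _ ∧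
        ψ ≫ pbP1 hh f hf = v₁ ∧ ψ ≫ pbP2 hh f hf = v₂) ∧
      M ≫ piP hf hg = hh ∧
      (∀ a, PiPt.x (M.f0 a) = hh.f0 a) ∧
      ∀ (a : Ao.A) (y : Y.A) (hy : f.f0 y = hh.f0 a)
        (hy' : f.f0 y = PiPt.x (M.f0 a)),
        PiPt.sec (M.f0 a) y hy' = m.f0 (τ.f0 ⟨(a, y), hy.symm⟩) := by
  classical
  have cu1 : Computable (fun n : ℕ => n.unpair.1) :=
    Primrec.to_comp (Primrec.fst.comp Primrec.unpair)
  obtain ⟨τ, ψ, hτ1, hτ2, hψ1, hψ2, hτψ, hψτ⟩ := isPB_comparison (pb_isPB hh f hf) hPB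
  have hsec_over : ∀ pt : pbA hh f, g.f0 (m.f0 (τ.f0 pt)) = pt.val.2 :=
    fun pt => (ehom_f0 hm (τ.f0 pt)).trans (ehom_f0 hτ2 pt)
  -- tracking of the 0-part of the section
  set VA := {v : Ao.A × Y.A // f.f0 v.2 = hh.f0 v.1} with hVA
  have ta0 := CompComputes.id (fun v : VA => Nat.pair (Ao.α v.1.1) (Y.α v.1.2))
  have tptA : CompComputes (fun v : VA => Nat.pair (Ao.α v.1.1) (Y.α v.1.2))
      (fun v => Nat.pair (Ao.α (⟨(v.1.1, v.1.2), v.prop.symm⟩ : pbA hh f).val.1)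
        (Y.α (⟨(v.1.1, v.1.2), v.prop.symm⟩ : pbA hh f).val.2)) := ta0
  have tA : Tk Z (fun v : VA => Nat.pair (Ao.α v.1.1) (Y.α v.1.2))
      (fun v => m.f0 (τ.f0 ⟨(v.1.1, v.1.2), v.prop.symm⟩)) :=
    m.tk (τ.tk tptA)
  obtain ⟨KA, hKAc, hKA⟩ := tA.curryCode
  -- cell data of the new points
  set VB := {u : Ao.A × Y.A × Y.A × ℕ // f.f0 u.2.1 = hh.f0 u.1 ∧
    f.f0 u.2.2.1 = hh.f0 u.1 ∧ u.2.2.2 ∈ Y.hom u.2.1 u.2.2.1} with hVB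
  have tb0 := CompComputes.id (fun u : VB => Nat.pair (Ao.α u.1.1)
    (Nat.pair (Y.α u.1.2.1) (Nat.pair (Y.α u.1.2.2.1) u.1.2.2.2)))
  obtain ⟨ia, hia, tia⟩ := (Cells.id tb0.fstOfPair : Cells Ao _ (fun u : VB => u.1.1)
    (fun u => u.1.1))
  have tι : CompComputes (fun u : VB => Nat.pair (Ao.α u.1.1)
      (Nat.pair (Y.α u.1.2.1) (Nat.pair (Y.α u.1.2.2.1) u.1.2.2.2)))
      (fun u => (hh.f1 u.1.1 u.1.1 ⟨ia u, hia u⟩).val) :=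
    (hh.tr1.precomp (fun u : VB => ⟨u.1.1, u.1.1, ⟨ia u, hia u⟩⟩)).comp
      (tb0.fstOfPair.pair (tb0.fstOfPair.pair tia))
  obtain ⟨uv, huv, tuv⟩ := hf.fix
    (⟨fun u => u.1.2.2.2, fun u => u.prop.2.2,
      tb0.sndOfPair.sndOfPair.sndOfPair⟩ :
      Cells Y _ (fun u : VB => u.1.2.1) (fun u => u.1.2.2.1))
    tb0.sndOfPair.fstOfPair tb0.sndOfPair.sndOfPair.fstOfPair
    (π := fun u : VB => (hh.f1 u.1.1 u.1.1 ⟨ia u, hia u⟩).val)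
    (fun u => mem_hom_cast u.prop.1.symm u.prop.2.1.symm
      (hh.f1 u.1.1 u.1.1 ⟨ia u, hia u⟩).prop) tι
  have ccmem : ∀ u : VB, Nat.pair (ia u) (uv u) ∈
      pbHom hh f ⟨(u.1.1, u.1.2.1), u.prop.1.symm⟩
        ⟨(u.1.1, u.1.2.2.1), u.prop.2.1.symm⟩ :=
    fun u => mem_pbHom_pair (hia u) ((huv u).choose) (((huv u).choose_spec).symm)
  have tccval : CompComputes (fun u : VB => Nat.pair (Ao.α u.1.1)
      (Nat.pair (Y.α u.1.2.1) (Nat.pair (Y.α u.1.2.2.1) u.1.2.2.2)))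
      (fun u => Nat.pair (ia u) (uv u)) := tia.pair tuv
  have tτa : Tk Ah _ (fun u : VB => τ.f0 ⟨(u.1.1, u.1.2.1), u.prop.1.symm⟩) :=
    τ.tk (tb0.fstOfPair.pair tb0.sndOfPair.fstOfPair)
  have tτb : Tk Ah _ (fun u : VB => τ.f0 ⟨(u.1.1, u.1.2.2.1), u.prop.2.1.symm⟩) :=
    τ.tk (tb0.fstOfPair.pair tb0.sndOfPair.sndOfPair.fstOfPair)
  have tτcc : CompComputes (fun u : VB => Nat.pair (Ao.α u.1.1)
      (Nat.pair (Y.α u.1.2.1) (Nat.pair (Y.α u.1.2.2.1) u.1.2.2.2)))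
      (fun u => (τ.f1 _ _ ⟨Nat.pair (ia u) (uv u), ccmem u⟩).val) :=
    (τ.tr1.precomp (fun u : VB => ⟨_, _, ⟨Nat.pair (ia u) (uv u), ccmem u⟩⟩)).comp
      ((tb0.fstOfPair.pair tb0.sndOfPair.fstOfPair).pair
        ((tb0.fstOfPair.pair tb0.sndOfPair.sndOfPair.fstOfPair).pair tccval))
  have mζ : Cells Z _ (fun u : VB => m.f0 (τ.f0 ⟨(u.1.1, u.1.2.1), u.prop.1.symm⟩))
      (fun u => m.f0 (τ.f0 ⟨(u.1.1, u.1.2.2.1), u.prop.2.1.symm⟩)) :=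
    ⟨fun u => (m.f1 _ _ (τ.f1 _ _ ⟨Nat.pair (ia u) (uv u), ccmem u⟩)).val,
      fun u => (m.f1 _ _ (τ.f1 _ _ ⟨Nat.pair (ia u) (uv u), ccmem u⟩)).prop,
      (m.tr1.precomp (fun u : VB =>
        ⟨_, _, τ.f1 _ _ ⟨Nat.pair (ia u) (uv u), ccmem u⟩⟩)).comp
        (tτa.pair (tτb.pair tτcc))⟩
  obtain ⟨zB, hzB, tzB⟩ := hg.fix mζ (m.tk tτa) (m.tk tτb)
    (π := fun u : VB => u.1.2.2.2)
    (fun u => mem_hom_cast (hsec_over ⟨(u.1.1, u.1.2.1), u.prop.1.symm⟩).symm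
      (hsec_over ⟨(u.1.1, u.1.2.2.1), u.prop.2.1.symm⟩).symm u.prop.2.2)
    tb0.sndOfPair.sndOfPair.sndOfPair
  obtain ⟨KB, hKBc, hKB⟩ := tzB.curryCode
  -- the points of the lift
  set M0 : Ao.A → PiPt f g := fun a =>
    { x := hh.f0 a
      sec := fun y hy => m.f0 (τ.f0 ⟨(a, y), hy.symm⟩)
      code := Nat.pair (KA (Ao.α a)) (KB (Ao.α a))
      sec_over := fun y hy => hsec_over ⟨(a, y), hy.symm⟩
      track0 := fun y hy => by simpa using hKA ⟨(a, y), hy⟩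
      track1 := fun y y' h h' υ hυ => by
        refine ⟨zB ⟨(a, y, y', υ), h, h', hυ⟩,
          (hzB ⟨(a, y, y', υ), h, h', hυ⟩).choose, ?_,
          (hzB ⟨(a, y, y', υ), h, h', hυ⟩).choose_spec⟩
        simpa using hKB ⟨(a, y, y', υ), h, h', hυ⟩ }
    with hM0
  -- the cells of the lift
  set W := (a : Ao.A) × (a' : Ao.A) × Ao.Cell a a' with hW
  set VD := PiIn (f := f) (g := g) (fun q : W => M0 q.1) (fun q => M0 q.2.1)
    (fun q => (hh.f1 q.1 q.2.1 q.2.2).val) with hVD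
  have td0 := CompComputes.id (fun t : VD =>
    Nat.pair (Nat.pair (Ao.α t.val.1.1) (Nat.pair (Ao.α t.val.1.2.1) t.val.1.2.2.val))
      (Nat.pair (Y.α t.val.2.1) (Nat.pair (Y.α t.val.2.2.1) t.val.2.2.2)))
  have hyD : ∀ t : VD, f.f0 t.val.2.1 = hh.f0 t.val.1.1 := fun t => t.prop.choose
  have hyD' : ∀ t : VD, f.f0 t.val.2.2.1 = hh.f0 t.val.1.2.1 := fun t =>
    t.prop.choose_spec.choose
  have hυD : ∀ t : VD, t.val.2.2.2 ∈ Y.hom t.val.2.1 t.val.2.2.1 := fun t =>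
    t.prop.choose_spec.choose_spec.choose
  have hoverD : ∀ t : VD, (f.f1 _ _ ⟨t.val.2.2.2, hυD t⟩).val
      = (hh.f1 t.val.1.1 t.val.1.2.1 t.val.1.2.2).val := fun t =>
    t.prop.choose_spec.choose_spec.choose_spec
  have ccmemD : ∀ t : VD, Nat.pair t.val.1.2.2.val t.val.2.2.2 ∈
      pbHom hh f ⟨(t.val.1.1, t.val.2.1), (hyD t).symm⟩
        ⟨(t.val.1.2.1, t.val.2.2.1), (hyD' t).symm⟩ :=
    fun t => mem_pbHom_pair t.val.1.2.2.prop (hυD t) (hoverD t).symm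
  have tptD1 : Tk Ah _ (fun t : VD => τ.f0 ⟨(t.val.1.1, t.val.2.1), (hyD t).symm⟩) :=
    τ.tk (td0.fstOfPair.fstOfPair.pair td0.sndOfPair.fstOfPair)
  have tptD2 : Tk Ah _
      (fun t : VD => τ.f0 ⟨(t.val.1.2.1, t.val.2.2.1), (hyD' t).symm⟩) :=
    τ.tk (td0.fstOfPair.sndOfPair.fstOfPair.pair td0.sndOfPair.sndOfPair.fstOfPair)
  have tccD : CompComputes _ (fun t : VD =>
      (τ.f1 _ _ ⟨Nat.pair t.val.1.2.2.val t.val.2.2.2, ccmemD t⟩).val) :=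
    (τ.tr1.precomp (fun t : VD =>
      ⟨_, _, ⟨Nat.pair t.val.1.2.2.val t.val.2.2.2, ccmemD t⟩⟩)).comp
      (((td0.fstOfPair.fstOfPair).pair td0.sndOfPair.fstOfPair).pair
        (((td0.fstOfPair.sndOfPair.fstOfPair).pair td0.sndOfPair.sndOfPair.fstOfPair).pair
          ((td0.fstOfPair.sndOfPair.sndOfPair).pair
            td0.sndOfPair.sndOfPair.sndOfPair)))
  have ζD : ∀ t : VD,
      ∃ hz : (m.f1 _ _ (τ.f1 _ _ ⟨Nat.pair t.val.1.2.2.val t.val.2.2.2, ccmemD t⟩)).val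
        ∈ Z.hom ((M0 t.val.1.1).sec t.val.2.1 (hyD t))
          ((M0 t.val.1.2.1).sec t.val.2.2.1 (hyD' t)),
      (g.f1 _ _ ⟨(m.f1 _ _ (τ.f1 _ _
        ⟨Nat.pair t.val.1.2.2.val t.val.2.2.2, ccmemD t⟩)).val, hz⟩).val
        = t.val.2.2.2 := by
    intro t
    refine ⟨(m.f1 _ _ (τ.f1 _ _ ⟨Nat.pair t.val.1.2.2.val t.val.2.2.2, ccmemD t⟩)).prop,
      ?_⟩
    have e1 := ehom_f1 hm _ _ (τ.f1 _ _ ⟨Nat.pair t.val.1.2.2.val t.val.2.2.2, ccmemD t⟩)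
    have e2 := ehom_f1 hτ2 _ _ ⟨Nat.pair t.val.1.2.2.val t.val.2.2.2, ccmemD t⟩
    refine e1.trans (e2.trans ?_)
    show (Nat.pair t.val.1.2.2.val t.val.2.2.2).unpair.2 = t.val.2.2.2
    simp
  obtain ⟨mW, hmW, hmW1, tmW⟩ := pi_cells (P := fun q : W => M0 q.1)
    (Q := fun q => M0 q.2.1) (ξ := fun q => (hh.f1 q.1 q.2.1 q.2.2).val)
    (fun q => (hh.f1 q.1 q.2.1 q.2.2).prop)
    ((hh.tr1.precomp (fun q : W => ⟨q.1, q.2.1, q.2.2⟩)).comp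
      (CompComputes.id (fun q : W =>
        Nat.pair (Ao.α q.1) (Nat.pair (Ao.α q.2.1) q.2.2.val))))
    (fun t => (m.f1 _ _ (τ.f1 _ _
      ⟨Nat.pair t.val.1.2.2.val t.val.2.2.2, ccmemD t⟩)).val)
    (fun t h h' => ζD t)
    ((m.tr1.precomp (fun t : VD =>
      ⟨_, _, τ.f1 _ _ ⟨Nat.pair t.val.1.2.2.val t.val.2.2.2, ccmemD t⟩⟩)).comp
      (tptD1.pair (tptD2.pair tccD)))
  set M : Ao ⟶ piObj hf hg :=
    { f0 := M0
      f1 := fun a a' γ => ⟨mW ⟨a, a', γ⟩, hmW ⟨a, a', γ⟩⟩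
      tr0 := (hh.tk (CompComputes.id (fun a : Ao.A => Ao.α a))).pair
        ((CompComputes.of_computable KA hKAc).pair (CompComputes.of_computable KB hKBc))
      tr1 := tmW }
    with hM
  refine ⟨M, τ, hτ1, hτ2, ⟨ψ, hψτ, hτψ, hψ1, hψ2⟩, ?_, fun a => rfl,
    fun a y hy hy' => rfl⟩
  refine EffHom.ext' (fun a => rfl) (fun a a' γ => ?_)
  exact hmW1 ⟨a, a', γ⟩

end PiCounit


/-- Strictification: a map homotopic over the base to a strict one can be replaced
by a strict one. -/
theorem strictify {Q Zb Yb : EffObj} {g : Zb ⟶ Yb} (hg : EffFib g) (m₀ : Q ⟶ Zb)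
    (w : Q ⟶ Yb) (h : EffHomotopic (m₀ ≫ g) w) :
    ∃ mh : Q ⟶ Zb, mh ≫ g = w ∧ EffHomotopic m₀ mh := by
  classical
  obtain ⟨cq, hcq, tcq⟩ := effHomotopic_iff_cells.mp h
  obtain ⟨zh, ezh, tzh, lam⟩ := hg.lift (I := fun q : Q.A => Q.α q)
    (u := fun q => m₀.f0 q) (a := fun q => w.f0 q) (π := cq) hcq
    (m₀.tk (CompComputes.id _)) w.tr0 tcq
  have lamc := lam.toCells
  have tq := CompComputes.id (fun x : (q : Q.A) × (q' : Q.A) × Q.Cell q q' =>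
    Nat.pair (Q.α x.1) (Nat.pair (Q.α x.2.1) x.2.2.val))
  have lam1 := (lamc.precomp
    (fun x : (q : Q.A) × (q' : Q.A) × Q.Cell q q' => x.1)).chase tq.fstOfPair
  have lam2 := (lamc.precomp
    (fun x : (q : Q.A) × (q' : Q.A) × Q.Cell q q' => x.2.1)).chase
    tq.sndOfPair.fstOfPair
  have tm1 : Tk Zb _ (fun x : (q : Q.A) × (q' : Q.A) × Q.Cell q q' => m₀.f0 x.1) :=
    m₀.tk tq.fstOfPair
  have tm2 : Tk Zb _ (fun x : (q : Q.A) × (q' : Q.A) × Q.Cell q q' => m₀.f0 x.2.1) :=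
    m₀.tk tq.sndOfPair.fstOfPair
  have tz1 : Tk Zb _ (fun x : (q : Q.A) × (q' : Q.A) × Q.Cell q q' => zh x.1) :=
    (tzh.precomp (fun x : (q : Q.A) × (q' : Q.A) × Q.Cell q q' => x.1)).comp
      tq.fstOfPair
  have tz2 : Tk Zb _ (fun x : (q : Q.A) × (q' : Q.A) × Q.Cell q q' => zh x.2.1) :=
    (tzh.precomp (fun x : (q : Q.A) × (q' : Q.A) × Q.Cell q q' => x.2.1)).comp
      tq.sndOfPair.fstOfPair
  have ρcells : Cells Zb _ (fun x : (q : Q.A) × (q' : Q.A) × Q.Cell q q' => m₀.f0 x.1)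
      (fun x => m₀.f0 x.2.1) :=
    ⟨fun x => (m₀.f1 x.1 x.2.1 x.2.2).val, fun x => (m₀.f1 x.1 x.2.1 x.2.2).prop,
      m₀.tr1⟩
  have chain := ((lam1.symm tm1 tz1).trans tz1 tm1 tm2 ρcells).trans tz1 tm2 tz2 lam2
  obtain ⟨mf, hmf, tmf⟩ := hg.fix chain tz1 tz2
    (π := fun x : (q : Q.A) × (q' : Q.A) × Q.Cell q q' => (w.f1 x.1 x.2.1 x.2.2).val)
    (fun x => mem_hom_cast (ezh x.1).symm (ezh x.2.1).symm (w.f1 x.1 x.2.1 x.2.2).prop)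
    w.tr1
  refine ⟨{ f0 := zh
            f1 := fun q q' ρ => ⟨mf ⟨q, q', ρ⟩, (hmf ⟨q, q', ρ⟩).choose⟩
            tr0 := tzh
            tr1 := tmf }, ?_, ?_⟩
  · exact EffHom.ext' ezh (fun q q' ρ => (hmf ⟨q, q', ρ⟩).choose_spec)
  · exact effHomotopic_iff_cells.mpr lamc


section PiHPi

variable {X Y Z Z₁ : EffObj} {f : Y ⟶ X} {g : Z ⟶ Y} {v : Z ⟶ Z₁} {t : Z₁ ⟶ Y}

set_option maxHeartbeats 2000000 in
theorem piIsHPi (hf : EffFib f) (hg : EffFib g) (ht : EffFib t)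
    (hveq : EffEqv v) (hvt : v ≫ t = g) :
    ∃ epsHat : pbObj (piP hf ht) f hf ⟶ Z,
      IsHPi EffPS f g (piP hf ht) (pbP1 (piP hf ht) f hf) (pbP2 (piP hf ht) f hf) epsHat := by
  classical
  obtain ⟨v', hvv', hv'v⟩ := hveq
  -- strictified counit
  have homot : EffHomotopic ((piEps hf ht ≫ v') ≫ g) (pbP2 (piP hf ht) f hf) := by
    have h1 := hv'v.whiskerR t
    rw [Category.id_comp] at h1
    have h2 := h1.whiskerL (piEps hf ht)
    have e : (piEps hf ht ≫ v') ≫ g = piEps hf ht ≫ ((v' ≫ v) ≫ t) := by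
      rw [← hvt]; simp
    rw [e]
    have e2 : piEps hf ht ≫ t = pbP2 (piP hf ht) f hf := piEps_over hf ht
    rwa [e2] at h2
  obtain ⟨epsHat, hεg, hεhom⟩ := strictify hg (piEps hf ht ≫ v') (pbP2 (piP hf ht) f hf) homot
  obtain ⟨cvv, hcvv, tcvv⟩ := effHomotopic_iff_cells.mp hv'v
  obtain ⟨ceh, hceh, tceh⟩ := effHomotopic_iff_cells.mp hεhom
  refine ⟨epsHat, ?_, pb_isPB (piP hf ht) f hf, hεg, ?_, ?_⟩
  · exact piP_fib hf ht
  -- ===== lift =====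
  · intro Ao Ah hh v₁ v₂ hPB m hm
    have hm₁ : (m ≫ v) ≫ t = v₂ := by rw [Category.assoc, hvt]; exact hm
    obtain ⟨M, τ, hτ1, hτ2, ⟨ψ, hψτ, hτψ, hψ1, hψ2⟩, hMp, hMx, hMsec⟩ :=
      piLift hf ht hh v₁ v₂ hPB (m ≫ v) hm₁
    refine ⟨M, hMp, ?_⟩
    intro fM hfM1 hfM2
    have hpsi : ∀ ah, ψ.f0 ah = ⟨(v₁.f0 ah, v₂.f0 ah), ehom_f0 hPB.1 ah⟩ :=
      fun ah => Subtype.ext (Prod.ext (ehom_f0 hψ1 ah) (ehom_f0 hψ2 ah))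
    have eqpt : ∀ ah, (piEps hf ht).f0 (fM.f0 ah) = v.f0 (m.f0 ah) := by
      intro ah
      have hy : f.f0 (v₂.f0 ah) = hh.f0 (v₁.f0 ah) := (ehom_f0 hPB.1 ah).symm
      have pf : (piP hf ht).f0 (M.f0 (v₁.f0 ah)) = f.f0 (v₂.f0 ah) :=
        (hMx (v₁.f0 ah)).trans hy.symm
      have step1 : fM.f0 ah = ⟨(M.f0 (v₁.f0 ah), v₂.f0 ah), pf⟩ := by
        refine Subtype.ext (Prod.ext ?_ ?_)
        · exact ehom_f0 hfM1 ah
        · exact ehom_f0 hfM2 ah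
      have step2 : (piEps hf ht).f0 (fM.f0 ah)
          = PiPt.sec (M.f0 (v₁.f0 ah)) (v₂.f0 ah) pf.symm := congrArg _ step1
      have step3 := hMsec (v₁.f0 ah) (v₂.f0 ah) hy pf.symm
      have step4 : τ.f0 ⟨(v₁.f0 ah, v₂.f0 ah), hy.symm⟩ = ah := by
        have : (⟨(v₁.f0 ah, v₂.f0 ah), hy.symm⟩ : pbA hh f) = ψ.f0 ah :=
          (hpsi ah).symm
        rw [this]
        exact ehom_f0 hψτ ah
      rw [step2, step3, step4]
      rfl
    have base : (fM ≫ epsHat) ≫ g = m ≫ g := by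
      rw [Category.assoc, hεg, hfM2, hm]
    refine (fibHomotopic_iff hg _ _).mpr ⟨base, ?_⟩
    have s1 : EffHomotopic (fM ≫ epsHat) (fM ≫ (piEps hf ht ≫ v')) :=
      (hεhom.symm').whiskerL fM
    have s2 : EffHomotopic (fM ≫ (piEps hf ht ≫ v')) ((m ≫ v) ≫ v') :=
      effHomotopic_of_f0_eq (fun ah => congrArg v'.f0 (eqpt ah))
    have s3 : EffHomotopic ((m ≫ v) ≫ v') m := by
      have := hvv'.whiskerL m
      rw [Category.comp_id] at this
      rw [Category.assoc]
      exact this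
    exact (s1.trans' s2).trans' s3
  -- ===== uniqueness =====
  · intro Ao Ah hh v₁ v₂ hPB m hm M M' hGood hGood'
    obtain ⟨τ, ψ, hτ1, hτ2, hψ1, hψ2, hτψ, hψτ⟩ := isPB_comparison (pb_isPB hh f hf) hPB
    -- the canonical comparison maps into the pullback
    obtain ⟨fM, ⟨hfM1, hfM2⟩, -⟩ := (pb_isPB (piP hf ht) f hf).2 Ah (v₁ ≫ M) v₂
      (by rw [Category.assoc, hGood.1]; exact hPB.1)
    obtain ⟨fM', ⟨hfM'1, hfM'2⟩, -⟩ := (pb_isPB (piP hf ht) f hf).2 Ah (v₁ ≫ M') v₂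
      (by rw [Category.assoc, hGood'.1]; exact hPB.1)
    obtain ⟨cM, hcM, tcM⟩ := effHomotopic_iff_cells.mp
      ((fibHomotopic_iff hg _ _).mp (hGood.2 fM hfM1 hfM2)).2
    obtain ⟨cM', hcM', tcM'⟩ := effHomotopic_iff_cells.mp
      ((fibHomotopic_iff hg _ _).mp (hGood'.2 fM' hfM'1 hfM'2)).2
    refine (fibHomotopic_iff (piP_fib hf ht) M M').mpr ⟨hGood.1.trans hGood'.1.symm, ?_⟩
    -- the identity cells downstairs
    obtain ⟨ixm, hixm, tixm⟩ := Cells.id ((piP hf ht).tk M.tr0 :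
      Tk X Ao.α (fun a => (piP hf ht).f0 (M.f0 a)))
    have hξ : ∀ a, ixm a ∈ X.hom (PiPt.x (M.f0 a)) (PiPt.x (M'.f0 a)) :=
      fun a => mem_hom_cast rfl
        ((ehom_f0 hGood.1 a).trans (ehom_f0 hGood'.1 a).symm) (hixm a)
    set VE := PiIn (f := f) (g := t) (fun a : Ao.A => M.f0 a) (fun a => M'.f0 a) ixm
      with hVE
    have tv0 := CompComputes.id (fun w : VE => Nat.pair (Ao.α w.val.1)
      (Nat.pair (Y.α w.val.2.1) (Nat.pair (Y.α w.val.2.2.1) w.val.2.2.2)))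
    have ta := tv0.fstOfPair
    have ty := tv0.sndOfPair.fstOfPair
    have ty' := tv0.sndOfPair.sndOfPair.fstOfPair
    have tυ := tv0.sndOfPair.sndOfPair.sndOfPair
    have hyM : ∀ w : VE, f.f0 w.val.2.1 = PiPt.x (M.f0 w.val.1) :=
      fun w => w.prop.choose
    have hyM' : ∀ w : VE, f.f0 w.val.2.2.1 = PiPt.x (M'.f0 w.val.1) :=
      fun w => w.prop.choose_spec.choose
    have hυm : ∀ w : VE, w.val.2.2.2 ∈ Y.hom w.val.2.1 w.val.2.2.1 :=
      fun w => w.prop.choose_spec.choose_spec.choose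
    have hya : ∀ w : VE, f.f0 w.val.2.1 = hh.f0 w.val.1 :=
      fun w => (hyM w).trans (ehom_f0 hGood.1 w.val.1)
    have hya' : ∀ w : VE, f.f0 w.val.2.2.1 = hh.f0 w.val.1 :=
      fun w => (hyM' w).trans (ehom_f0 hGood'.1 w.val.1)
    set pt1 : VE → pbA hh f := fun w => ⟨(w.val.1, w.val.2.1), (hya w).symm⟩ with hpt1
    set pt2 : VE → pbA hh f := fun w => ⟨(w.val.1, w.val.2.2.1), (hya' w).symm⟩ with hpt2
    have tpt1 : CompComputes _ (fun w : VE =>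
        Nat.pair (Ao.α (pt1 w).val.1) (Y.α (pt1 w).val.2)) := ta.pair ty
    have tpt2 : CompComputes _ (fun w : VE =>
        Nat.pair (Ao.α (pt2 w).val.1) (Y.α (pt2 w).val.2)) := ta.pair ty'
    set ah1 : VE → Ah.A := fun w => τ.f0 (pt1 w) with hah1
    set ah2 : VE → Ah.A := fun w => τ.f0 (pt2 w) with hah2
    have tah1 : Tk Ah _ ah1 := τ.tk tpt1
    have tah2 : Tk Ah _ ah2 := τ.tk tpt2
    have tfm1 : Tk (pbObj (piP hf ht) f hf) _ (fun w : VE => fM.f0 (ah1 w)) :=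
      fM.tk tah1
    have tfm2 : Tk (pbObj (piP hf ht) f hf) _ (fun w : VE => fM'.f0 (ah2 w)) :=
      fM'.tk tah2
    have te1 : Tk Z₁ _ (fun w : VE => (piEps hf ht).f0 (fM.f0 (ah1 w))) :=
      (piEps hf ht).tk tfm1
    have te2 : Tk Z₁ _ (fun w : VE => (piEps hf ht).f0 (fM'.f0 (ah2 w))) :=
      (piEps hf ht).tk tfm2
    have teh1 : Tk Z _ (fun w : VE => epsHat.f0 (fM.f0 (ah1 w))) := epsHat.tk tfm1
    have teh2 : Tk Z _ (fun w : VE => epsHat.f0 (fM'.f0 (ah2 w))) := epsHat.tk tfm2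
    have tm1 : Tk Z _ (fun w : VE => m.f0 (ah1 w)) := m.tk tah1
    have tm2 : Tk Z _ (fun w : VE => m.f0 (ah2 w)) := m.tk tah2
    have tv'1 : Tk Z _ (fun w : VE => v'.f0 ((piEps hf ht).f0 (fM.f0 (ah1 w)))) :=
      v'.tk te1
    have tv'2 : Tk Z _ (fun w : VE => v'.f0 ((piEps hf ht).f0 (fM'.f0 (ah2 w)))) :=
      v'.tk te2
    -- k1 : ε₁(fM ah1) ← v(v'(ε₁(fM ah1)))
    have k1 : Cells Z₁ _ (fun w : VE => v.f0 (v'.f0 ((piEps hf ht).f0 (fM.f0 (ah1 w)))))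
        (fun w => (piEps hf ht).f0 (fM.f0 (ah1 w))) :=
      (⟨fun w => cvv ((piEps hf ht).f0 (fM.f0 (ah1 w))),
        fun w => hcvv _, (tcvv.precomp _).comp te1⟩ : Cells Z₁ _ _ _)
    have k2 : Cells Z _ (fun w : VE => v'.f0 ((piEps hf ht).f0 (fM.f0 (ah1 w))))
        (fun w => epsHat.f0 (fM.f0 (ah1 w))) :=
      ⟨fun w => ceh (fM.f0 (ah1 w)), fun w => hceh _, (tceh.precomp _).comp tfm1⟩
    have k3 : Cells Z _ (fun w : VE => epsHat.f0 (fM.f0 (ah1 w)))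
        (fun w => m.f0 (ah1 w)) :=
      ⟨fun w => cM (ah1 w), fun w => hcM _, (tcM.precomp _).comp tah1⟩
    have k5 : Cells Z _ (fun w : VE => epsHat.f0 (fM'.f0 (ah2 w)))
        (fun w => m.f0 (ah2 w)) :=
      ⟨fun w => cM' (ah2 w), fun w => hcM' _, (tcM'.precomp _).comp tah2⟩
    have k6 : Cells Z _ (fun w : VE => v'.f0 ((piEps hf ht).f0 (fM'.f0 (ah2 w))))
        (fun w => epsHat.f0 (fM'.f0 (ah2 w))) :=
      ⟨fun w => ceh (fM'.f0 (ah2 w)), fun w => hceh _, (tceh.precomp _).comp tfm2⟩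
    have k7 : Cells Z₁ _
        (fun w : VE => v.f0 (v'.f0 ((piEps hf ht).f0 (fM'.f0 (ah2 w)))))
        (fun w => (piEps hf ht).f0 (fM'.f0 (ah2 w))) :=
      ⟨fun w => cvv ((piEps hf ht).f0 (fM'.f0 (ah2 w))),
        fun w => hcvv _, (tcvv.precomp _).comp te2⟩
    -- middle: v(m ah1) → v(m ah2)
    obtain ⟨ida, hida, tida⟩ := (Cells.id ta : Cells Ao _ (fun w : VE => w.val.1) _)
    have tι : CompComputes _ (fun w : VE =>
        (hh.f1 w.val.1 w.val.1 ⟨ida w, hida w⟩).val) :=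
      (hh.tr1.precomp (fun w : VE => ⟨w.val.1, w.val.1, ⟨ida w, hida w⟩⟩)).comp
        (ta.pair (ta.pair tida))
    obtain ⟨uv, huv, tuv⟩ := hf.fix
      (⟨fun w => w.val.2.2.2, hυm, tυ⟩ : Cells Y _ (fun w : VE => w.val.2.1)
        (fun w => w.val.2.2.1)) ty ty'
      (π := fun w : VE => (hh.f1 w.val.1 w.val.1 ⟨ida w, hida w⟩).val)
      (fun w => mem_hom_cast (hya w).symm (hya' w).symm
        (hh.f1 w.val.1 w.val.1 ⟨ida w, hida w⟩).prop) tι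
    have ccmem : ∀ w : VE, Nat.pair (ida w) (uv w) ∈ pbHom hh f (pt1 w) (pt2 w) :=
      fun w => mem_pbHom_pair (hida w) ((huv w).choose) (((huv w).choose_spec).symm)
    have cccells : Cells (pbObj hh f hf) _ pt1 pt2 :=
      ⟨fun w => Nat.pair (ida w) (uv w), ccmem, tida.pair tuv⟩
    have k4 : Cells Z₁ _ (fun w : VE => v.f0 (m.f0 (ah1 w)))
        (fun w => v.f0 (m.f0 (ah2 w))) :=
      ((cccells.map τ tpt1 tpt2).map m tah1 tah2).map v tm1 tm2
    -- assemble the chain in Z₁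
    have kv3 := (k2.trans tv'1 teh1 tm1 k3).map v tv'1 tm1
    have kv5 := (k6.trans tv'2 teh2 tm2 k5).map v tv'2 tm2
    have tvv'1 : Tk Z₁ _ (fun w : VE =>
        v.f0 (v'.f0 ((piEps hf ht).f0 (fM.f0 (ah1 w))))) := v.tk tv'1
    have tvv'2 : Tk Z₁ _ (fun w : VE =>
        v.f0 (v'.f0 ((piEps hf ht).f0 (fM'.f0 (ah2 w))))) := v.tk tv'2
    have tvm1 : Tk Z₁ _ (fun w : VE => v.f0 (m.f0 (ah1 w))) := v.tk tm1
    have tvm2 : Tk Z₁ _ (fun w : VE => v.f0 (m.f0 (ah2 w))) := v.tk tm2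
    have chain : Cells Z₁ _ (fun w : VE => (piEps hf ht).f0 (fM.f0 (ah1 w)))
        (fun w => (piEps hf ht).f0 (fM'.f0 (ah2 w))) :=
      ((((k1.symm tvv'1 te1).trans te1 tvv'1 tvm1 kv3).trans te1 tvm1 tvm2 k4).trans
        te1 tvm2 tvv'2 (kv5.symm tvv'2 tvm2)).trans te1 tvv'2 te2 k7
    -- transport the endpoints to the sections
    have esec1 : ∀ w : VE, (piEps hf ht).f0 (fM.f0 (ah1 w))
        = PiPt.sec (M.f0 w.val.1) w.val.2.1 (hyM w) := by
      intro w
      have pf : (piP hf ht).f0 (M.f0 w.val.1) = f.f0 w.val.2.1 := (hyM w).symm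
      have step1 : fM.f0 (ah1 w) = ⟨(M.f0 w.val.1, w.val.2.1), pf⟩ := by
        refine Subtype.ext (Prod.ext ?_ ?_)
        · exact (ehom_f0 hfM1 (ah1 w)).trans (congrArg M.f0 (ehom_f0 hτ1 (pt1 w)))
        · exact (ehom_f0 hfM2 (ah1 w)).trans (ehom_f0 hτ2 (pt1 w))
      exact congrArg (piEps hf ht).f0 step1
    have esec2 : ∀ w : VE, (piEps hf ht).f0 (fM'.f0 (ah2 w))
        = PiPt.sec (M'.f0 w.val.1) w.val.2.2.1 (hyM' w) := by
      intro w
      have pf : (piP hf ht).f0 (M'.f0 w.val.1) = f.f0 w.val.2.2.1 := (hyM' w).symm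
      have step1 : fM'.f0 (ah2 w) = ⟨(M'.f0 w.val.1, w.val.2.2.1), pf⟩ := by
        refine Subtype.ext (Prod.ext ?_ ?_)
        · exact (ehom_f0 hfM'1 (ah2 w)).trans (congrArg M'.f0 (ehom_f0 hτ1 (pt2 w)))
        · exact (ehom_f0 hfM'2 (ah2 w)).trans (ehom_f0 hτ2 (pt2 w))
      exact congrArg (piEps hf ht).f0 step1
    have chain' := chain.congr' (fun _ => rfl) esec1 esec2
    have tsecM := piSec_tk (P := fun w : VE => M.f0 w.val.1) hyM
      ((M.tr0.precomp (fun w : VE => w.val.1)).comp ta) ty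
    have tsecM' := piSec_tk (P := fun w : VE => M'.f0 w.val.1) hyM'
      ((M'.tr0.precomp (fun w : VE => w.val.1)).comp ta) ty'
    obtain ⟨zfin, hzfin, tzfin⟩ := ht.fix chain' tsecM tsecM'
      (π := fun w : VE => w.val.2.2.2)
      (fun w => mem_hom_cast (PiPt.sec_over _ _ (hyM w)).symm
        (PiPt.sec_over _ _ (hyM' w)).symm (hυm w)) tυ
    obtain ⟨mfam, hmfam, -, tmfam⟩ := pi_cells (P := fun a : Ao.A => M.f0 a)
      (Q := fun a => M'.f0 a) (ξ := ixm) hξ tixm zfin (fun w h h' => hzfin w) tzfin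
    exact tmfam.toFinds hmfam

end PiHPi


section PiDisc

variable {X Y Z₁ : EffObj} {f : Y ⟶ X} {t : Z₁ ⟶ Y}

theorem piP_stddisc (hf : EffFib f) (ht : EffStdDisc t) : EffStdDisc (piP hf ht.1) := by
  refine ⟨piP_fib hf ht.1, fun P Q h0 hα => ?_⟩
  have h0' : PiPt.x P = PiPt.x Q := h0
  have hα' : Nat.pair (X.α (PiPt.x P)) (PiPt.code P)
      = Nat.pair (X.α (PiPt.x Q)) (PiPt.code Q) := hα
  have hcode : PiPt.code P = PiPt.code Q := by
    have := congrArg (fun n => n.unpair.2) hα'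
    simpa using this
  refine PiPt.ext' h0' hcode (fun y hy hy' => ?_)
  have e1 := PiPt.track0 P y hy
  have e2 := PiPt.track0 Q y hy'
  rw [← hcode] at e2
  have : Z₁.α (PiPt.sec P y hy) = Z₁.α (PiPt.sec Q y hy') := Part.mem_unique e1 e2
  exact ht.2 _ _ ((PiPt.sec_over P y hy).trans (PiPt.sec_over Q y hy').symm) this

end PiDisc

/-- Part (4): discrete fibrations are closed under homotopy Π-types. -/
theorem effDisc_hpi : ClosedUnderHPi EffPS (fun {_ _} f => EffDisc f) := by
  intro Y X Z f g hf hgd E F pE u₁ u₂ ε hE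
  obtain ⟨hg, Z₁, v, t, hv, ht, hvt⟩ := id hgd
  obtain ⟨epsHat, hE₁⟩ := piIsHPi hf hg ht.1 hv hvt
  obtain ⟨M, hMgood⟩ := hE₁.lift pE u₁ u₂ hE.pb ε hE.over'
  obtain ⟨M', hM'good⟩ := hE.lift (piP hf ht.1) (pbP1 (piP hf ht.1) f hf)
    (pbP2 (piP hf ht.1) f hf) hE₁.pb epsHat hE₁.over'
  -- the canonical comparison maps between the two pullbacks
  obtain ⟨k, ⟨hk1, hk2⟩, -⟩ := (pb_isPB (piP hf ht.1) f hf).2 F (u₁ ≫ M) u₂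
    (by rw [Category.assoc, hMgood.1]; exact hE.pb.1)
  obtain ⟨l, ⟨hl1, hl2⟩, -⟩ := hE.pb.2 (pbObj (piP hf ht.1) f hf)
    (pbP1 (piP hf ht.1) f hf ≫ M') (pbP2 (piP hf ht.1) f hf)
    (by rw [Category.assoc, hM'good.1]; exact hE₁.pb.1)
  have hkeps : FibHomotopic EffPS g (k ≫ epsHat) ε := hMgood.2 k hk1 hk2
  have hleps : FibHomotopic EffPS g (l ≫ ε) epsHat := hM'good.2 l hl1 hl2
  -- (a) M ≫ M' is fibrewise homotopic to the identity over pE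
  have goodId : HPiLiftGood EffPS f g pE u₁ u₂ ε pE u₁ u₂ ε (𝟙 E) := by
    refine ⟨Category.id_comp pE, fun fM h1 h2 => ?_⟩
    rw [Category.comp_id] at h1
    obtain ⟨i, -, hu⟩ := hE.pb.2 F u₁ u₂ hE.pb.1
    have : fM = 𝟙 F := by
      rw [hu fM ⟨h1, h2⟩, hu (𝟙 F) ⟨Category.id_comp _, Category.id_comp _⟩]
    rw [this, Category.id_comp]
    exact (fibHomotopic_iff hg ε ε).mpr ⟨rfl, EffHomotopic.refl' ε⟩
  have goodMM' : HPiLiftGood EffPS f g pE u₁ u₂ ε pE u₁ u₂ ε (M ≫ M') := by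
    refine ⟨by rw [Category.assoc, hM'good.1]; exact hMgood.1, fun fM h1 h2 => ?_⟩
    have hfMkl : fM = k ≫ l := by
      obtain ⟨i, -, hu⟩ := hE.pb.2 F (u₁ ≫ M ≫ M') u₂
        (by simp only [Category.assoc]; rw [hM'good.1, hMgood.1]; exact hE.pb.1)
      rw [hu fM ⟨h1, h2⟩, hu (k ≫ l) ⟨by
        simp only [Category.assoc]
        rw [hl1, ← Category.assoc, hk1, Category.assoc],
        by rw [Category.assoc, hl2]; exact hk2⟩]
    obtain ⟨eb1, eh1⟩ := (fibHomotopic_iff hg _ _).mp hkeps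
    obtain ⟨eb2, eh2⟩ := (fibHomotopic_iff hg _ _).mp hleps
    refine (fibHomotopic_iff hg _ _).mpr ⟨?_, ?_⟩
    · rw [hfMkl]
      calc ((k ≫ l) ≫ ε) ≫ g = k ≫ ((l ≫ ε) ≫ g) := by simp only [Category.assoc]
      _ = k ≫ (epsHat ≫ g) := by rw [eb2]
      _ = (k ≫ epsHat) ≫ g := by simp only [Category.assoc]
      _ = ε ≫ g := eb1
    · have w1 := eh2.whiskerL k
      have : EffHomotopic (fM ≫ ε) (k ≫ epsHat) := by
        rw [hfMkl, Category.assoc]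
        exact w1
      exact this.trans' eh1
  have ha : FibHomotopic EffPS pE (M ≫ M') (𝟙 E) :=
    hE.unique pE u₁ u₂ hE.pb ε hE.over' (M ≫ M') (𝟙 E) goodMM' goodId
  -- (b) M' ≫ M is fibrewise homotopic to the identity over piP
  have goodId₁ : HPiLiftGood EffPS f g (piP hf ht.1) (pbP1 (piP hf ht.1) f hf)
      (pbP2 (piP hf ht.1) f hf) epsHat (piP hf ht.1) (pbP1 (piP hf ht.1) f hf)
      (pbP2 (piP hf ht.1) f hf) epsHat (𝟙 _) := by
    refine ⟨Category.id_comp _, fun fM h1 h2 => ?_⟩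
    rw [Category.comp_id] at h1
    obtain ⟨i, -, hu⟩ := (pb_isPB (piP hf ht.1) f hf).2 _ (pbP1 (piP hf ht.1) f hf)
      (pbP2 (piP hf ht.1) f hf) (pb_isPB (piP hf ht.1) f hf).1
    have : fM = 𝟙 _ := by
      rw [hu fM ⟨h1, h2⟩, hu (𝟙 _) ⟨Category.id_comp _, Category.id_comp _⟩]
    rw [this, Category.id_comp]
    exact (fibHomotopic_iff hg epsHat epsHat).mpr ⟨rfl, EffHomotopic.refl' epsHat⟩
  have goodM'M : HPiLiftGood EffPS f g (piP hf ht.1) (pbP1 (piP hf ht.1) f hf)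
      (pbP2 (piP hf ht.1) f hf) epsHat (piP hf ht.1) (pbP1 (piP hf ht.1) f hf)
      (pbP2 (piP hf ht.1) f hf) epsHat (M' ≫ M) := by
    refine ⟨by rw [Category.assoc, hMgood.1]; exact hM'good.1, fun fM h1 h2 => ?_⟩
    have hfMlk : fM = l ≫ k := by
      obtain ⟨i, -, hu⟩ := (pb_isPB (piP hf ht.1) f hf).2 _
        (pbP1 (piP hf ht.1) f hf ≫ M' ≫ M) (pbP2 (piP hf ht.1) f hf)
        (by simp only [Category.assoc]; rw [hMgood.1, hM'good.1]; exact hE₁.pb.1)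
      rw [hu fM ⟨h1, h2⟩, hu (l ≫ k) ⟨by
        simp only [Category.assoc]
        rw [hk1, ← Category.assoc, hl1, Category.assoc],
        by rw [Category.assoc, hk2]; exact hl2⟩]
    obtain ⟨eb1, eh1⟩ := (fibHomotopic_iff hg _ _).mp hkeps
    obtain ⟨eb2, eh2⟩ := (fibHomotopic_iff hg _ _).mp hleps
    refine (fibHomotopic_iff hg _ _).mpr ⟨?_, ?_⟩
    · rw [hfMlk]
      calc ((l ≫ k) ≫ epsHat) ≫ g = l ≫ ((k ≫ epsHat) ≫ g) := by
            simp only [Category.assoc]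
      _ = l ≫ (ε ≫ g) := by rw [eb1]
      _ = (l ≫ ε) ≫ g := by simp only [Category.assoc]
      _ = epsHat ≫ g := eb2
    · have w1 := eh1.whiskerL l
      have : EffHomotopic (fM ≫ epsHat) (l ≫ ε) := by
        rw [hfMlk, Category.assoc]
        exact w1
      exact this.trans' eh2
  have hb : FibHomotopic EffPS (piP hf ht.1) (M' ≫ M) (𝟙 _) :=
    hE₁.unique (piP hf ht.1) (pbP1 (piP hf ht.1) f hf) (pbP2 (piP hf ht.1) f hf)
      hE₁.pb epsHat hE₁.over' (M' ≫ M) (𝟙 _) goodM'M goodId₁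
  have hMeqv : EffEqv M :=
    ⟨M', ((fibHomotopic_iff hE.fib _ _).mp ha).2,
      ((fibHomotopic_iff (piP_fib hf ht.1) _ _).mp hb).2⟩
  exact ⟨hE.fib, piObj hf ht.1, M, piP hf ht.1, hMeqv, piP_stddisc hf ht, hMgood.1⟩


/-- In the path category `EFF`, the discrete fibrations form an
impredicative class of small fibrations: (1) every isomorphism is a discrete
fibration; (2) discrete fibrations are stable under homotopy pullback; (3) discrete
fibrations are closed under composition; (4) discrete fibrations are closed under
`Π_f` for every (not necessarily discrete) fibration `f`. -/
theorem EFF_discrete_impredicative_class :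
    (∀ {X Y : EffObj} (f : X ⟶ Y), CategoryTheory.IsIso f → EffDisc f) ∧
    (∀ {D Cc B A : EffObj} (g : D ⟶ Cc) (top : D ⟶ B) (f : B ⟶ A) (bot : Cc ⟶ A),
      EffFib g → EffFib f → EffDisc f → IsHomotopyPB EffPS g top f bot → EffDisc g) ∧
    (∀ {X Y Z : EffObj} (f : X ⟶ Y) (g : Y ⟶ Z), EffDisc f → EffDisc g → EffDisc (f ≫ g)) ∧
    (ClosedUnderHPi EffPS (fun {_ _} f => EffDisc f)) := by
  refine ⟨fun f hf => effDisc_of_iso f hf,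
    fun g top f bot hg hf hfd H => effDisc_hpb g top f bot hg hfd H,
    fun f g hf hg => effDisc_comp f g hf hg,
    effDisc_hpi⟩

end EffPaper
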